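/- arXiv:1805.11454 — 8 statements merged into one kernel-verified Lean document; each statement's English description precedes it below -/
import Mathlib

section
/- Let n ≥ 1 and let W ∈ ℝ^{n×n} be a nonnegative doubly stochastic matrix (W𝟙 = 𝟙 and 𝟙ᵀW = 𝟙ᵀ) with w_{ii} > 0 for at least one index i, such that w_{ij} > 0 iff w_{ji} > 0 and the graph on {1,…,n} with edge set {{i,j} : i ≠ j, w_{ij} > 0} is connected. Let ρ_w denote the operator 2-norm of W − (1/n)𝟙𝟙ᵀ. Then ρ_w < 1, and for every p ≥ 1 and every ω ∈ ℝ^{n×p}, ‖Wω − 𝟙ω̄‖_F ≤ ρ_w ‖ω − 𝟙ω̄‖_F, where ω̄ := (1/n)𝟙ᵀω ∈ ℝ^{1×p} and ‖·‖_F is the Frobenius norm. -/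
open Matrix

/-- Frobenius norm of a real matrix. -/
noncomputable def frobNorm {n p : ℕ} (M : Matrix (Fin n) (Fin p) ℝ) : ℝ :=
  Real.sqrt (∑ i, ∑ j, (M i j) ^ 2)

/-- Operator 2-norm of a real matrix, i.e. the norm of the induced map between
Euclidean spaces. -/
noncomputable def l2OpNorm {m n : ℕ} (M : Matrix (Fin m) (Fin n) ℝ) : ℝ :=
  ‖LinearMap.toContinuousLinearMap (Matrix.toEuclideanLin M)‖

/-- The matrix `𝟙 z̄` whose every row is the average of the rows of `z`. -/
noncomputable def onesAvg {n p : ℕ} (z : Matrix (Fin n) (Fin p) ℝ) : Matrix (Fin n) (Fin p) ℝ :=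
  Matrix.of fun _ j => (n : ℝ)⁻¹ * ∑ i, z i j

lemma key_id {n : ℕ} (W : Matrix (Fin n) (Fin n) ℝ)
    (hrow : ∀ i, ∑ j, W i j = 1) (hcol : ∀ j, ∑ i, W i j = 1) (v : Fin n → ℝ) :
    ∑ i, ∑ j, ∑ k, W i j * W i k * (v j - v k) ^ 2
      = 2 * (∑ j, (v j) ^ 2) - 2 * ∑ i, (∑ j, W i j * v j) ^ 2 := by
  have h1 : ∀ i, ∑ j, ∑ k, W i j * W i k * (v j - v k) ^ 2
      = 2 * (∑ j, W i j * v j ^ 2) - 2 * (∑ j, W i j * v j) ^ 2 := by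
    intro i
    have hA := hrow i
    calc ∑ j, ∑ k, W i j * W i k * (v j - v k) ^ 2
        = ∑ j, (W i j * v j ^ 2 * (∑ k, W i k) + W i j * (∑ k, W i k * v k ^ 2)
            - 2 * ((W i j * v j) * (∑ k, W i k * v k))) := by
          refine Finset.sum_congr rfl fun j _ => ?_
          simp only [Finset.mul_sum]
          rw [← Finset.sum_add_distrib, ← Finset.sum_sub_distrib]
          exact Finset.sum_congr rfl fun k _ => by ring
      _ = (∑ j, W i j * v j ^ 2) * (∑ k, W i k) + (∑ j, W i j) * (∑ k, W i k * v k ^ 2)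
            - 2 * ((∑ j, W i j * v j) * (∑ k, W i k * v k)) := by
          rw [Finset.sum_sub_distrib, Finset.sum_add_distrib, ← Finset.sum_mul, ← Finset.sum_mul,
            ← Finset.mul_sum, ← Finset.sum_mul]
      _ = 2 * (∑ j, W i j * v j ^ 2) - 2 * (∑ j, W i j * v j) ^ 2 := by
          rw [hA]; ring
  rw [Finset.sum_congr rfl fun i _ => h1 i, Finset.sum_sub_distrib, ← Finset.mul_sum,
    ← Finset.mul_sum]
  have h2 : ∑ i, ∑ j, W i j * v j ^ 2 = ∑ j, (v j) ^ 2 := by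
    rw [Finset.sum_comm]
    refine Finset.sum_congr rfl fun j _ => ?_
    rw [← Finset.sum_mul, hcol j, one_mul]
  rw [h2]

lemma strict_con {n : ℕ} (hn : 1 ≤ n) (W : Matrix (Fin n) (Fin n) ℝ)
    (hWnonneg : ∀ i j, 0 ≤ W i j)
    (hrow : ∀ i, ∑ j, W i j = 1) (hcol : ∀ j, ∑ i, W i j = 1)
    (hWdiag : ∃ i, 0 < W i i)
    (hWsymm : ∀ i j, 0 < W i j ↔ 0 < W j i)
    (hconn : (SimpleGraph.fromRel (fun i j : Fin n => 0 < W i j)).Connected)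
    (v : Fin n → ℝ) (hv0 : ∑ j, v j = 0) (hv : v ≠ 0) :
    ∑ i, (∑ j, W i j * v j) ^ 2 < ∑ j, (v j) ^ 2 := by
  have hkey : ∃ i j k, 0 < W i j ∧ 0 < W i k ∧ v j ≠ v k := by
    by_contra hcon
    push_neg at hcon
    obtain ⟨i₀, hi₀⟩ := hWdiag
    set G := SimpleGraph.fromRel (fun i j : Fin n => 0 < W i j) with hG
    have step : ∀ a b : Fin n, G.Adj a b →
        (v a = v i₀ ∧ ∀ k, 0 < W a k → v k = v i₀) →
        (v b = v i₀ ∧ ∀ k, 0 < W b k → v k = v i₀) := by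
      intro a b hadj ⟨hva, hca⟩
      rw [hG, SimpleGraph.fromRel_adj] at hadj
      have hab : 0 < W a b := hadj.2.elim id (fun h => (hWsymm a b).mpr h)
      have hba : 0 < W b a := (hWsymm a b).mp hab
      refine ⟨hca b hab, fun k hk => ?_⟩
      rw [hcon b k a hk hba, hva]
    have walkind : ∀ (x y : Fin n), G.Walk x y →
        (v x = v i₀ ∧ ∀ k, 0 < W x k → v k = v i₀) →
        (v y = v i₀ ∧ ∀ k, 0 < W y k → v k = v i₀) := by
      intro x y wk
      induction wk with
      | nil => exact id
      | cons h _ ih => exact fun hx => ih (step _ _ h hx)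
    have base : v i₀ = v i₀ ∧ ∀ k, 0 < W i₀ k → v k = v i₀ :=
      ⟨rfl, fun k hk => hcon i₀ k i₀ hk hi₀⟩
    have hall : ∀ j, v j = v i₀ := by
      intro j
      obtain ⟨wk⟩ := hconn.preconnected i₀ j
      exact (walkind i₀ j wk base).1
    have hne : (n : ℝ) ≠ 0 := Nat.cast_ne_zero.mpr (by omega)
    have hvi : v i₀ = 0 := by
      have hsum : ∑ j, v j = ∑ _j : Fin n, v i₀ := Finset.sum_congr rfl fun j _ => hall j
      rw [hv0, Finset.sum_const, Finset.card_univ, Fintype.card_fin, nsmul_eq_mul] at hsum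
      rcases mul_eq_zero.mp hsum.symm with h | h
      · exact absurd h hne
      · exact h
    exact hv (funext fun j => by rw [Pi.zero_apply, hall j, hvi])
  obtain ⟨i, j, k, h1, h2, h3⟩ := hkey
  have hnn : ∀ a b c : Fin n, 0 ≤ W a b * W a c * (v b - v c) ^ 2 :=
    fun a b c => mul_nonneg (mul_nonneg (hWnonneg a b) (hWnonneg a c)) (sq_nonneg _)
  have hpos : 0 < W i j * W i k * (v j - v k) ^ 2 := by
    have h4 : v j - v k ≠ 0 := sub_ne_zero.mpr h3
    have h5 : 0 < (v j - v k) ^ 2 := by positivity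
    exact mul_pos (mul_pos h1 h2) h5
  have htriple : 0 < ∑ i, ∑ j, ∑ k, W i j * W i k * (v j - v k) ^ 2 := by
    refine Finset.sum_pos'
      (fun a _ => Finset.sum_nonneg fun b _ => Finset.sum_nonneg fun c _ => hnn a b c)
      ⟨i, Finset.mem_univ i, Finset.sum_pos'
        (fun b _ => Finset.sum_nonneg fun c _ => hnn i b c)
        ⟨j, Finset.mem_univ j, Finset.sum_pos' (fun c _ => hnn i j c)
          ⟨k, Finset.mem_univ k, hpos⟩⟩⟩
  have hid := key_id W hrow hcol v
  linarith [hid, htriple]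

theorem stmt0 (n : ℕ) (hn : 1 ≤ n) (W : Matrix (Fin n) (Fin n) ℝ)
    (hWnonneg : ∀ i j, 0 ≤ W i j)
    (hWrow : W.mulVec (fun _ => (1 : ℝ)) = fun _ => (1 : ℝ))
    (hWcol : Matrix.vecMul (fun _ => (1 : ℝ)) W = fun _ => (1 : ℝ))
    (hWdiag : ∃ i, 0 < W i i)
    (hWsymm : ∀ i j, 0 < W i j ↔ 0 < W j i)
    (hconn : (SimpleGraph.fromRel (fun i j : Fin n => 0 < W i j)).Connected) :
    l2OpNorm (W - (n : ℝ)⁻¹ • Matrix.of (fun _ _ : Fin n => (1 : ℝ))) < 1 ∧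
      ∀ p : ℕ, 1 ≤ p → ∀ ω : Matrix (Fin n) (Fin p) ℝ,
        frobNorm (W * ω - onesAvg ω) ≤
          l2OpNorm (W - (n : ℝ)⁻¹ • Matrix.of (fun _ _ : Fin n => (1 : ℝ))) *
            frobNorm (ω - onesAvg ω) := by
  have hne : (n : ℝ) ≠ 0 := Nat.cast_ne_zero.mpr (by omega)
  have hrow' : ∀ i, ∑ j, W i j = 1 := by
    intro i
    have := congrFun hWrow i
    simpa [Matrix.mulVec, dotProduct] using this
  have hcol' : ∀ j, ∑ i, W i j = 1 := by
    intro j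
    have := congrFun hWcol j
    simpa [Matrix.vecMul, dotProduct] using this
  set M : Matrix (Fin n) (Fin n) ℝ :=
    W - (n : ℝ)⁻¹ • Matrix.of (fun _ _ : Fin n => (1 : ℝ)) with hMdef
  set T := LinearMap.toContinuousLinearMap (Matrix.toEuclideanLin M) with hTdef
  have hTapp : ∀ v : EuclideanSpace ℝ (Fin n), T v = M.mulVec v := fun v => rfl
  -- decomposition: M.mulVec v = W.mulVec (v - avg)
  have hM : ∀ v : Fin n → ℝ,
      M.mulVec v = W.mulVec (fun j => v j - (n : ℝ)⁻¹ * ∑ l, v l) := by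
    intro v
    funext i
    have h1 : M.mulVec v i = (∑ j, W i j * v j) - (n : ℝ)⁻¹ * ∑ j, v j := by
      simp only [hMdef, Matrix.mulVec, dotProduct, Matrix.sub_apply, Matrix.smul_apply,
        Matrix.of_apply, smul_eq_mul]
      rw [Finset.mul_sum, ← Finset.sum_sub_distrib]
      exact Finset.sum_congr rfl fun j _ => by ring
    have h2 : W.mulVec (fun j => v j - (n : ℝ)⁻¹ * ∑ l, v l) i
        = (∑ j, W i j * v j) - (n : ℝ)⁻¹ * ∑ j, v j := by
      simp only [Matrix.mulVec, dotProduct]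
      calc ∑ j, W i j * (v j - (n : ℝ)⁻¹ * ∑ l, v l)
          = ∑ j, (W i j * v j - W i j * ((n : ℝ)⁻¹ * ∑ l, v l)) :=
            Finset.sum_congr rfl fun j _ => by ring
        _ = (∑ j, W i j * v j) - (∑ j, W i j) * ((n : ℝ)⁻¹ * ∑ l, v l) := by
            rw [Finset.sum_sub_distrib, Finset.sum_mul]
        _ = (∑ j, W i j * v j) - (n : ℝ)⁻¹ * ∑ j, v j := by rw [hrow' i, one_mul]
    rw [h1, h2]
  -- strict bound on the sphere
  have hMlt : ∀ x : Fin n → ℝ, ∑ j, (x j) ^ 2 = 1 →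
      ∑ i, (M.mulVec x i) ^ 2 < 1 := by
    intro x hx1
    set c : ℝ := (n : ℝ)⁻¹ * ∑ l, x l with hc
    set y : Fin n → ℝ := fun j => x j - c with hy
    have hysum : ∑ j, y j = 0 := by
      simp only [hy]
      rw [Finset.sum_sub_distrib, Finset.sum_const, Finset.card_univ, Fintype.card_fin,
        nsmul_eq_mul, hc]
      field_simp
      ring
    have hy2 : ∑ j, (y j) ^ 2 ≤ ∑ j, (x j) ^ 2 := by
      have hexp : ∑ j, (y j) ^ 2
          = (∑ j, (x j) ^ 2) - 2 * c * (∑ j, x j) + (n : ℝ) * c ^ 2 := by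
        simp only [hy]
        calc ∑ j, (x j - c) ^ 2 = ∑ j, ((x j) ^ 2 - 2 * c * x j + c ^ 2) :=
              Finset.sum_congr rfl fun j _ => by ring
          _ = (∑ j, (x j) ^ 2) - 2 * c * (∑ j, x j) + (n : ℝ) * c ^ 2 := by
              rw [Finset.sum_add_distrib, Finset.sum_sub_distrib, ← Finset.mul_sum,
                Finset.sum_const, Finset.card_univ, Fintype.card_fin, nsmul_eq_mul]
      have hsx : ∑ l, x l = (n : ℝ) * c := by rw [hc]; field_simp
      rw [hexp, hsx]
      have hcn : 0 ≤ (n : ℝ) * c ^ 2 := by positivity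
      nlinarith [hcn]
    have hMx : M.mulVec x = W.mulVec y := hM x
    by_cases hzero : y = 0
    · rw [hMx, hzero, Matrix.mulVec_zero]
      simp
    · have hstrict := strict_con hn W hWnonneg hrow' hcol' hWdiag hWsymm hconn y hysum hzero
      have hWyv : ∀ i, W.mulVec y i = ∑ j, W i j * y j := fun i => rfl
      calc ∑ i, (M.mulVec x i) ^ 2 = ∑ i, (∑ j, W i j * y j) ^ 2 := by
            rw [hMx]; exact Finset.sum_congr rfl fun i _ => by rw [hWyv i]
        _ < ∑ j, (y j) ^ 2 := hstrict
        _ ≤ ∑ j, (x j) ^ 2 := hy2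
        _ = 1 := hx1
  -- the operator norm is attained on the compact sphere
  have hx₀ : (EuclideanSpace.single (⟨0, by omega⟩ : Fin n) (1 : ℝ)) ∈
      Metric.sphere (0 : EuclideanSpace ℝ (Fin n)) 1 := by
    simp [mem_sphere_zero_iff_norm, EuclideanSpace.norm_single]
  obtain ⟨x, hxmem, hxmax⟩ :=
    (isCompact_sphere (0 : EuclideanSpace ℝ (Fin n)) 1).exists_isMaxOn
      ⟨_, hx₀⟩ ((continuous_norm.comp T.continuous).continuousOn :
        ContinuousOn (fun v => ‖T v‖) _)
  have hx1 : ‖x‖ = 1 := mem_sphere_zero_iff_norm.mp hxmem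
  have hxsq : ∑ j, (x j) ^ 2 = 1 := by
    have := hx1
    rw [EuclideanSpace.norm_eq] at this
    have h2 : ∑ i, ‖x i‖ ^ 2 = 1 := by
      nlinarith [this, Real.sq_sqrt (Finset.sum_nonneg fun i (_ : i ∈ Finset.univ) =>
        sq_nonneg ‖x i‖)]
    calc ∑ j, (x j) ^ 2 = ∑ j, ‖x j‖ ^ 2 :=
          Finset.sum_congr rfl fun j _ => by rw [Real.norm_eq_abs, sq_abs]
      _ = 1 := h2
  have hnormTv : ∀ v : EuclideanSpace ℝ (Fin n),
      ‖T v‖ = Real.sqrt (∑ i, (M.mulVec v i) ^ 2) := by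
    intro v
    rw [EuclideanSpace.norm_eq]
    congr 1
    refine Finset.sum_congr rfl fun i _ => ?_
    rw [Real.norm_eq_abs, sq_abs]
    rfl
  have hTx : ‖T x‖ < 1 := by
    rw [hnormTv x]
    have := hMlt x hxsq
    calc Real.sqrt (∑ i, (M.mulVec x i) ^ 2) < Real.sqrt 1 := by
          apply Real.sqrt_lt_sqrt (Finset.sum_nonneg fun i _ => sq_nonneg _) this
      _ = 1 := Real.sqrt_one
  have hρle : ‖T‖ ≤ ‖T x‖ := by
    refine T.opNorm_le_bound (norm_nonneg _) fun v => ?_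
    rcases eq_or_ne v 0 with rfl | hv
    · simp
    · have hvpos : 0 < ‖v‖ := norm_pos_iff.mpr hv
      have hmem : ‖v‖⁻¹ • v ∈ Metric.sphere (0 : EuclideanSpace ℝ (Fin n)) 1 := by
        rw [mem_sphere_zero_iff_norm, norm_smul, Real.norm_eq_abs,
          abs_of_nonneg (inv_nonneg.mpr hvpos.le), inv_mul_cancel₀ hvpos.ne']
      have hle : ‖T (‖v‖⁻¹ • v)‖ ≤ ‖T x‖ := hxmax hmem
      rw [_root_.map_smul, norm_smul, Real.norm_eq_abs,
        abs_of_nonneg (inv_nonneg.mpr hvpos.le)] at hle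
      calc ‖T v‖ = ‖v‖ * (‖v‖⁻¹ * ‖T v‖) := by field_simp
        _ ≤ ‖v‖ * ‖T x‖ := mul_le_mul_of_nonneg_left hle hvpos.le
        _ = ‖T x‖ * ‖v‖ := mul_comm _ _
  have hρlt : ‖T‖ < 1 := lt_of_le_of_lt hρle hTx
  constructor
  · exact hρlt
  · intro p hp ω
    set z : Matrix (Fin n) (Fin p) ℝ := ω - onesAvg ω with hz
    have hEq : W * ω - onesAvg ω = M * z := by
      ext i j
      set c : ℝ := (n : ℝ)⁻¹ * ∑ l, ω l j with hcdef
      have hLHS : (W * ω - onesAvg ω) i j = (∑ k, W i k * ω k j) - c := by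
        simp only [Matrix.sub_apply, Matrix.mul_apply, onesAvg, Matrix.of_apply, hcdef]
      have hRHS : (M * z) i j = (∑ k, W i k * ω k j) - c := by
        simp only [Matrix.mul_apply, hMdef, hz, Matrix.sub_apply, Matrix.smul_apply,
          Matrix.of_apply, smul_eq_mul, onesAvg]
        calc ∑ k, (W i k - (n : ℝ)⁻¹ * 1) * (ω k j - (n : ℝ)⁻¹ * ∑ l, ω l j)
            = ∑ k, (W i k * ω k j - W i k * c - (n : ℝ)⁻¹ * ω k j + (n : ℝ)⁻¹ * c) :=
              Finset.sum_congr rfl fun k _ => by rw [← hcdef]; ring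
          _ = (∑ k, W i k * ω k j) - (∑ k, W i k) * c - (n : ℝ)⁻¹ * (∑ k, ω k j)
              + (n : ℝ) * ((n : ℝ)⁻¹ * c) := by
              rw [Finset.sum_add_distrib, Finset.sum_sub_distrib, Finset.sum_sub_distrib,
                Finset.sum_mul, ← Finset.mul_sum, Finset.sum_const, Finset.card_univ,
                Fintype.card_fin, nsmul_eq_mul]
          _ = (∑ k, W i k * ω k j) - c := by
              rw [hrow' i, one_mul]
              have h1 : (n : ℝ) * ((n : ℝ)⁻¹ * c) = c := by field_simp
              have h2 : (n : ℝ)⁻¹ * (∑ k, ω k j) = c := hcdef.symm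
              rw [h1, h2]; ring
      rw [hLHS, hRHS]
    have hcolbound : ∀ v : EuclideanSpace ℝ (Fin n),
        ∑ i, (M.mulVec v i) ^ 2 ≤ ‖T‖ ^ 2 * ∑ i, (v i) ^ 2 := by
      intro v
      have hle := T.le_opNorm v
      have h1 : ‖T v‖ ^ 2 = ∑ i, (M.mulVec v i) ^ 2 := by
        rw [hnormTv v, Real.sq_sqrt (Finset.sum_nonneg fun i _ => sq_nonneg _)]
      have h2 : ‖v‖ ^ 2 = ∑ i, (v i) ^ 2 := by
        rw [EuclideanSpace.norm_eq, Real.sq_sqrt (Finset.sum_nonneg fun i _ => sq_nonneg _)]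
        exact Finset.sum_congr rfl fun i _ => by rw [Real.norm_eq_abs, sq_abs]
      calc ∑ i, (M.mulVec v i) ^ 2 = ‖T v‖ ^ 2 := h1.symm
        _ ≤ (‖T‖ * ‖v‖) ^ 2 := pow_le_pow_left₀ (norm_nonneg _) hle 2
        _ = ‖T‖ ^ 2 * ∑ i, (v i) ^ 2 := by rw [mul_pow, h2]
    have hsq : ∑ i, ∑ j, ((M * z) i j) ^ 2 ≤ ‖T‖ ^ 2 * ∑ i, ∑ j, (z i j) ^ 2 := by
      calc ∑ i, ∑ j, ((M * z) i j) ^ 2 = ∑ j, ∑ i, ((M * z) i j) ^ 2 := Finset.sum_comm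
        _ ≤ ∑ j, ‖T‖ ^ 2 * ∑ i, (z i j) ^ 2 := by
            refine Finset.sum_le_sum fun j _ => ?_
            have hb := hcolbound (WithLp.toLp 2 (fun k => z k j))
            have hcongr : ∀ i, (M * z) i j = M.mulVec (fun k => z k j) i := fun i => rfl
            calc ∑ i, ((M * z) i j) ^ 2 = ∑ i, (M.mulVec (fun k => z k j) i) ^ 2 :=
                  Finset.sum_congr rfl fun i _ => by rw [hcongr i]
              _ ≤ ‖T‖ ^ 2 * ∑ i, (z i j) ^ 2 := hb
        _ = ‖T‖ ^ 2 * ∑ j, ∑ i, (z i j) ^ 2 := (Finset.mul_sum _ _ _).symm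
        _ = ‖T‖ ^ 2 * ∑ i, ∑ j, (z i j) ^ 2 := by rw [Finset.sum_comm]
    rw [hEq]
    show frobNorm (M * z) ≤ ‖T‖ * frobNorm z
    rw [frobNorm, frobNorm]
    calc Real.sqrt (∑ i, ∑ j, ((M * z) i j) ^ 2)
        ≤ Real.sqrt (‖T‖ ^ 2 * ∑ i, ∑ j, (z i j) ^ 2) := Real.sqrt_le_sqrt hsq
      _ = ‖T‖ * Real.sqrt (∑ i, ∑ j, (z i j) ^ 2) := by
          rw [Real.sqrt_mul (sq_nonneg _), Real.sqrt_sq (norm_nonneg _)]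
end

section
/- Let p ≥ 1, n ≥ 1, 0 < μ ≤ L, σ > 0 and 0 < α < 2/(μ + L). For i = 1,…,n let f_i : ℝ^p → ℝ be μ-strongly convex with L-Lipschitz continuous gradient, let f := (1/n)∑_i f_i with unique minimizer x*. Fix x_1,…,x_n ∈ ℝ^p, put x̄ := (1/n)∑_i x_i and h := (1/n)∑_i ∇f_i(x_i). Let ȳ be a random vector in ℝ^p with E[ȳ] = h and E[‖ȳ − h‖²] ≤ σ²/n. Then E[‖x̄ − αȳ − x*‖²] ≤ (1 − αμ)‖x̄ − x*‖² + (αL²/(μn))(1 + αμ) ∑_{i=1}^n ‖x_i − x̄‖² + α²σ²/n. -/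
open MeasureTheory
open scoped RealInnerProductSpace

section Aux
variable {E : Type*} [NormedAddCommGroup E] [InnerProductSpace ℝ E] [CompleteSpace E]
variable {F : E → ℝ} {G : E → E}

lemma seg_hasDerivAt (hF : ∀ z, HasGradientAt F (G z) z) (x v : E) (t : ℝ) :
    HasDerivAt (fun s : ℝ => F (x + s • v)) ⟪G (x + t • v), v⟫ t := by
  have hγ : HasDerivAt (fun s : ℝ => x + s • v) v t := by
    simpa using ((hasDerivAt_id t).smul_const v).const_add x
  have hf := (hF (x + t • v)).hasFDerivAt
  have h2 := hf.comp_hasDerivAt t hγ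
  have h3 : HasDerivAt (fun s : ℝ => F (x + s • v)) ((InnerProductSpace.toDual ℝ E (G (x + t • v))) v) t := h2
  simpa [InnerProductSpace.toDual_apply_apply] using h3

lemma aux_tangent (hF : ∀ z, HasGradientAt F (G z) z)
    (hmono : ∀ a b : E, 0 ≤ ⟪G a - G b, a - b⟫) (x y : E) :
    F x + ⟪G x, y - x⟫ ≤ F y := by
  set v := y - x with hv
  have hseg := seg_hasDerivAt hF x v
  have hcont : ContinuousOn (fun s : ℝ => F (x + s • v)) (Set.Icc 0 1) :=
    fun t _ => ((hseg t).continuousAt).continuousWithinAt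
  obtain ⟨c, hc, hceq⟩ := exists_hasDerivAt_eq_slope (fun s => F (x + s • v)) _ one_pos hcont
    (fun t _ => hseg t)
  have h0 : x + (0:ℝ) • v = x := by simp
  have h1 : x + (1:ℝ) • v = y := by simp [hv]
  have hmc : ⟪G x, v⟫ ≤ ⟪G (x + c • v), v⟫ := by
    have hm := hmono (x + c • v) x
    rw [show x + c • v - x = c • v from by abel, real_inner_smul_right] at hm
    have h3 : 0 ≤ ⟪G (x + c • v) - G x, v⟫ := nonneg_of_mul_nonneg_right hm hc.1
    rw [inner_sub_left] at h3; linarith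
  rw [h0, h1] at hceq
  simp only [div_one, sub_zero] at hceq
  linarith [hceq ▸ hmc]


lemma aux_descent (c : ℝ) (hF : ∀ z, HasGradientAt F (G z) z)
    (hub : ∀ a b : E, ⟪G a - G b, a - b⟫ ≤ c * ‖a - b‖ ^ 2) (x y : E) :
    F y ≤ F x + ⟪G x, y - x⟫ + c / 2 * ‖y - x‖ ^ 2 := by
  set v := y - x with hv
  set g : ℝ → ℝ := fun s => F (x + s • v) - s * ⟪G x, v⟫ - c / 2 * s ^ 2 * ‖v‖ ^ 2 with hg
  have hseg := seg_hasDerivAt hF x v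
  have hder : ∀ t : ℝ, HasDerivAt g (⟪G (x + t • v), v⟫ - ⟪G x, v⟫ - c * t * ‖v‖ ^ 2) t := by
    intro t
    have h1 : HasDerivAt (fun s : ℝ => s * ⟪G x, v⟫) ⟪G x, v⟫ t := by
      simpa using (hasDerivAt_id t).mul_const ⟪G x, v⟫
    have h2 : HasDerivAt (fun s : ℝ => c / 2 * s ^ 2 * ‖v‖ ^ 2) (c * t * ‖v‖ ^ 2) t := by
      have h3 := ((hasDerivAt_pow 2 t).const_mul (c / 2)).mul_const (‖v‖ ^ 2)
      refine h3.congr_deriv ?_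
      ring
    exact ((hseg t).sub h1).sub h2
  have hcont : ContinuousOn g (Set.Icc 0 1) := fun t _ => (hder t).continuousAt.continuousWithinAt
  obtain ⟨t, ht, hteq⟩ := exists_hasDerivAt_eq_slope g _ one_pos hcont (fun t _ => hder t)
  have hneg : ⟪G (x + t • v), v⟫ - ⟪G x, v⟫ - c * t * ‖v‖ ^ 2 ≤ 0 := by
    have h := hub (x + t • v) x
    rw [show x + t • v - x = t • v from by abel, real_inner_smul_right, norm_smul, mul_pow,
      Real.norm_eq_abs, sq_abs] at h
    have h5 : t * ⟪G (x + t • v) - G x, v⟫ ≤ t * (c * t * ‖v‖ ^ 2) := by nlinarith [h]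
    have h6 := (mul_le_mul_iff_right₀ ht.1).1 h5
    rw [inner_sub_left] at h6; linarith
  have hg0 : g 0 = F x := by simp [hg]
  have hg1 : g 1 = F y - ⟪G x, v⟫ - c / 2 * ‖v‖ ^ 2 := by
    simp [hg, hv]
  rw [hg0, hg1] at hteq
  simp only [div_one, sub_zero] at hteq
  linarith [hteq ▸ hneg]

lemma aux_key (c : ℝ) (hc0 : 0 < c) (hF : ∀ z, HasGradientAt F (G z) z)
    (hmono : ∀ a b : E, 0 ≤ ⟪G a - G b, a - b⟫)
    (hub : ∀ a b : E, ⟪G a - G b, a - b⟫ ≤ c * ‖a - b‖ ^ 2)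
    (htan : ∀ x y : E, F x + ⟪G x, y - x⟫ ≤ F y) (x y : E) :
    F x + ⟪G x, y - x⟫ + (2 * c)⁻¹ * ‖G y - G x‖ ^ 2 ≤ F y := by
  set z := y - c⁻¹ • (G y - G x) with hz
  have h1 := htan x z
  have h2 := aux_descent c hF hub y z
  have hzy : z - y = -(c⁻¹ • (G y - G x)) := by rw [hz]; abel
  have hzx : z - x = (y - x) - c⁻¹ • (G y - G x) := by rw [hz]; abel
  rw [hzx, inner_sub_right, real_inner_smul_right] at h1
  rw [hzy, inner_neg_right, real_inner_smul_right, norm_neg, norm_smul, mul_pow, Real.norm_eq_abs, sq_abs] at h2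
  have e4 : ⟪G y, G y - G x⟫ - ⟪G x, G y - G x⟫ = ‖G y - G x‖ ^ 2 := by
    rw [← inner_sub_left, real_inner_self_eq_norm_sq]
  have e5 : c⁻¹ * ⟪G y, G y - G x⟫ - c⁻¹ * ⟪G x, G y - G x⟫ = c⁻¹ * ‖G y - G x‖ ^ 2 := by
    rw [← mul_sub, e4]
  have e6 : c / 2 * (c⁻¹ ^ 2 * ‖G y - G x‖ ^ 2) =
      c⁻¹ * ‖G y - G x‖ ^ 2 - (2 * c)⁻¹ * ‖G y - G x‖ ^ 2 := by
    field_simp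
    ring
  linarith

lemma aux_coco (c : ℝ) (hc0 : 0 < c) (hF : ∀ z, HasGradientAt F (G z) z)
    (hmono : ∀ a b : E, 0 ≤ ⟪G a - G b, a - b⟫)
    (hub : ∀ a b : E, ⟪G a - G b, a - b⟫ ≤ c * ‖a - b‖ ^ 2)
    (htan : ∀ x y : E, F x + ⟪G x, y - x⟫ ≤ F y) (x y : E) :
    c⁻¹ * ‖G x - G y‖ ^ 2 ≤ ⟪G x - G y, x - y⟫ := by
  have h1 := aux_key c hc0 hF hmono hub htan x y
  have h2 := aux_key c hc0 hF hmono hub htan y x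
  rw [← norm_sub_rev (G x)] at h1
  have e : ⟪G x, y - x⟫ + ⟪G y, x - y⟫ = -⟪G x - G y, x - y⟫ := by
    rw [inner_sub_left, show (y - x : E) = -(x - y) from by abel, inner_neg_right]; ring
  have e7 : (2 * c)⁻¹ * ‖G x - G y‖ ^ 2 + (2 * c)⁻¹ * ‖G x - G y‖ ^ 2
      = c⁻¹ * ‖G x - G y‖ ^ 2 := by
    field_simp
    ring
  linarith


lemma young_ineq (a b : E) {t : ℝ} (ht : 0 < t) :
    ‖a + b‖ ^ 2 ≤ (1 + t) * ‖a‖ ^ 2 + (1 + t⁻¹) * ‖b‖ ^ 2 := by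
  have h1 : ‖a + b‖ ^ 2 = ‖a‖ ^ 2 + 2 * ⟪a, b⟫ + ‖b‖ ^ 2 := by
    rw [norm_add_sq_real]
  have h2 : ⟪a, b⟫ ≤ ‖a‖ * ‖b‖ := real_inner_le_norm a b
  have h3 : (0:ℝ) ≤ (t * ‖a‖ - ‖b‖) ^ 2 := sq_nonneg _
  have h4 : t * t⁻¹ = 1 := mul_inv_cancel₀ ht.ne'
  nlinarith [h3, h4, mul_le_mul_of_nonneg_left h2 ht.le, ht]

lemma aux_coercive {μ L : ℝ} (hμ0 : 0 < μ) (hμL : μ ≤ L)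
    (hF : ∀ z, HasGradientAt F (G z) z)
    (hsc : ∀ a b : E, μ * ‖a - b‖ ^ 2 ≤ ⟪G a - G b, a - b⟫)
    (hlip : ∀ a b : E, ‖G a - G b‖ ≤ L * ‖a - b‖) (x y : E) :
    ‖G x - G y‖ ^ 2 + μ * L * ‖x - y‖ ^ 2 ≤ (μ + L) * ⟪G x - G y, x - y⟫ := by
  rcases eq_or_lt_of_le hμL with hEq | hlt
  · subst hEq
    have h1 := hsc x y
    have h2 := hlip x y
    have h3 : ‖G x - G y‖ ^ 2 ≤ μ ^ 2 * ‖x - y‖ ^ 2 := by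
      nlinarith [norm_nonneg (G x - G y), norm_nonneg (x - y)]
    nlinarith [h1, h3, mul_le_mul_of_nonneg_left h1 (by positivity : (0:ℝ) ≤ 2 * μ)]
  · set G' : E → E := fun z => G z - μ • z with hG'
    set F' : E → ℝ := fun z => F z - μ / 2 * ‖z‖ ^ 2 with hF'
    have hF'G' : ∀ z, HasGradientAt F' (G' z) z := by
      intro z
      have h1 : HasFDerivAt (fun w : E => ‖w‖ ^ 2) (2 • (innerSL ℝ z)) z :=
        (hasStrictFDerivAt_norm_sq z).hasFDerivAt
      have h2 := (hF z).hasFDerivAt.sub (h1.const_mul (μ / 2))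
      rw [hasGradientAt_iff_hasFDerivAt]
      refine h2.congr_fderiv ?_
      apply ContinuousLinearMap.ext
      intro w
      simp [hG', InnerProductSpace.toDual_apply_apply, inner_sub_left, real_inner_smul_left]
      ring
    have hdiff : ∀ a b : E, G' a - G' b = (G a - G b) - μ • (a - b) := by
      intro a b; simp only [hG', smul_sub]; abel
    have hmono' : ∀ a b : E, 0 ≤ ⟪G' a - G' b, a - b⟫ := by
      intro a b
      rw [hdiff, inner_sub_left, real_inner_smul_left, real_inner_self_eq_norm_sq]
      have := hsc a b; linarith
    have hub' : ∀ a b : E, ⟪G' a - G' b, a - b⟫ ≤ (L - μ) * ‖a - b‖ ^ 2 := by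
      intro a b
      rw [hdiff, inner_sub_left, real_inner_smul_left, real_inner_self_eq_norm_sq]
      have h1 := hlip a b
      have h2 : ⟪G a - G b, a - b⟫ ≤ ‖G a - G b‖ * ‖a - b‖ := real_inner_le_norm _ _
      nlinarith [norm_nonneg (a - b)]
    have hpos : 0 < L - μ := sub_pos.2 hlt
    have hco := aux_coco (L - μ) hpos hF'G' hmono' hub' (aux_tangent hF'G' hmono') x y
    rw [hdiff, inner_sub_left, real_inner_smul_left, real_inner_self_eq_norm_sq] at hco
    have hexp : ‖(G x - G y) - μ • (x - y)‖ ^ 2 =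
        ‖G x - G y‖ ^ 2 - 2 * μ * ⟪G x - G y, x - y⟫ + μ ^ 2 * ‖x - y‖ ^ 2 := by
      rw [norm_sub_sq_real, real_inner_smul_right, norm_smul, mul_pow, Real.norm_eq_abs, sq_abs]
      ring
    rw [hexp] at hco
    have hX := mul_le_mul_of_nonneg_left hco hpos.le
    rw [← mul_assoc, mul_inv_cancel₀ hpos.ne', one_mul] at hX
    nlinarith [hX]

end Aux

set_option maxHeartbeats 1000000 in
theorem stmt4 (p n : ℕ) (hp : 1 ≤ p) (hn : 1 ≤ n) (μ L σ α : ℝ)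
    (hμ : 0 < μ) (hμL : μ ≤ L) (hσ : 0 < σ) (hα0 : 0 < α) (hα : α < 2 / (μ + L))
    (f : Fin n → EuclideanSpace ℝ (Fin p) → ℝ)
    (hdiff : ∀ i, Differentiable ℝ (f i))
    (hsc : ∀ i, ∀ x x' : EuclideanSpace ℝ (Fin p),
      μ * ‖x - x'‖ ^ 2 ≤ ⟪gradient (f i) x - gradient (f i) x', x - x'⟫)
    (hlip : ∀ i, ∀ x x' : EuclideanSpace ℝ (Fin p),
      ‖gradient (f i) x - gradient (f i) x'‖ ≤ L * ‖x - x'‖)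
    (xstar : EuclideanSpace ℝ (Fin p))
    (hmin : ∀ z, (n : ℝ)⁻¹ * ∑ i, f i xstar ≤ (n : ℝ)⁻¹ * ∑ i, f i z)
    (x : Fin n → EuclideanSpace ℝ (Fin p))
    {Ω : Type*} [MeasurableSpace Ω] (P : Measure Ω) [IsProbabilityMeasure P]
    (ybar : Ω → EuclideanSpace ℝ (Fin p)) (hyL2 : MemLp ybar 2 P)
    (hymean : ∫ ω, ybar ω ∂P = (n : ℝ)⁻¹ • ∑ i, gradient (f i) (x i))
    (hyvar : ∫ ω, ‖ybar ω - (n : ℝ)⁻¹ • ∑ i, gradient (f i) (x i)‖ ^ 2 ∂P ≤ σ ^ 2 / n) :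
    (∫ ω, ‖(n : ℝ)⁻¹ • ∑ i, x i - α • ybar ω - xstar‖ ^ 2 ∂P) ≤
      (1 - α * μ) * ‖(n : ℝ)⁻¹ • ∑ i, x i - xstar‖ ^ 2 +
        (α * L ^ 2 / (μ * n)) * (1 + α * μ) *
          (∑ i, ‖x i - (n : ℝ)⁻¹ • ∑ j, x j‖ ^ 2) +
        α ^ 2 * σ ^ 2 / n := by
  have hn0 : (0:ℝ) < n := by exact_mod_cast hn
  have hn0' : (n:ℝ) ≠ 0 := hn0.ne'
  have hμL0 : (0:ℝ) < μ + L := by linarith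
  have hαμL : α * (μ + L) < 2 := by
    rw [lt_div_iff₀ hμL0] at hα
    linarith
  have hαμ1 : α * μ < 1 := by nlinarith
  set Fb : EuclideanSpace ℝ (Fin p) → ℝ := fun z => (n:ℝ)⁻¹ * ∑ i, f i z with hFb
  set Gb : EuclideanSpace ℝ (Fin p) → EuclideanSpace ℝ (Fin p) :=
    fun z => (n:ℝ)⁻¹ • ∑ i, gradient (f i) z with hGb
  -- gradient of the average
  have hFG : ∀ z, HasGradientAt Fb (Gb z) z := by
    intro z
    rw [hasGradientAt_iff_hasFDerivAt]
    have h1 : HasFDerivAt (fun w => ∑ i, f i w)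
        (∑ i, InnerProductSpace.toDual ℝ _ (gradient (f i) z)) z :=
      HasFDerivAt.fun_sum (fun i _ => ((hdiff i z).hasGradientAt).hasFDerivAt)
    have h2 := h1.const_mul ((n:ℝ)⁻¹)
    refine h2.congr_fderiv ?_
    simp only [hGb, _root_.map_smul, map_sum]
  -- strong monotonicity of Gb
  have hGμ : ∀ a b : EuclideanSpace ℝ (Fin p), μ * ‖a - b‖ ^ 2 ≤ ⟪Gb a - Gb b, a - b⟫ := by
    intro a b
    have hd : Gb a - Gb b = (n:ℝ)⁻¹ • ∑ i, (gradient (f i) a - gradient (f i) b) := by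
      simp only [hGb, Finset.sum_sub_distrib, smul_sub]
    rw [hd, real_inner_smul_left, sum_inner]
    have hsum : (n:ℝ) * (μ * ‖a - b‖ ^ 2)
        ≤ ∑ i, ⟪gradient (f i) a - gradient (f i) b, a - b⟫ := by
      calc (n:ℝ) * (μ * ‖a - b‖ ^ 2) = ∑ _i : Fin n, μ * ‖a - b‖ ^ 2 := by
            simp [Finset.sum_const, Finset.card_univ]
        _ ≤ _ := Finset.sum_le_sum (fun i _ => hsc i a b)
    calc μ * ‖a - b‖ ^ 2 = (n:ℝ)⁻¹ * ((n:ℝ) * (μ * ‖a - b‖ ^ 2)) := by field_simp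
      _ ≤ _ := mul_le_mul_of_nonneg_left hsum (by positivity)
  -- Lipschitz property of Gb
  have hGL : ∀ a b : EuclideanSpace ℝ (Fin p), ‖Gb a - Gb b‖ ≤ L * ‖a - b‖ := by
    intro a b
    have hd : Gb a - Gb b = (n:ℝ)⁻¹ • ∑ i, (gradient (f i) a - gradient (f i) b) := by
      simp only [hGb, Finset.sum_sub_distrib, smul_sub]
    rw [hd, norm_smul]
    have h1 : ‖∑ i, (gradient (f i) a - gradient (f i) b)‖ ≤ (n:ℝ) * (L * ‖a - b‖) := by
      calc ‖∑ i, (gradient (f i) a - gradient (f i) b)‖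
          ≤ ∑ i, ‖gradient (f i) a - gradient (f i) b‖ := norm_sum_le _ _
        _ ≤ ∑ _i : Fin n, L * ‖a - b‖ := Finset.sum_le_sum (fun i _ => hlip i a b)
        _ = (n:ℝ) * (L * ‖a - b‖) := by simp [Finset.sum_const, Finset.card_univ]
    calc ‖(n:ℝ)⁻¹‖ * ‖∑ i, (gradient (f i) a - gradient (f i) b)‖
        ≤ ‖(n:ℝ)⁻¹‖ * ((n:ℝ) * (L * ‖a - b‖)) :=
          mul_le_mul_of_nonneg_left h1 (norm_nonneg _)
      _ = L * ‖a - b‖ := by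
          rw [Real.norm_eq_abs, abs_of_pos (by positivity)]
          field_simp
  -- gradient vanishes at the minimizer
  have hGstar : Gb xstar = 0 := by
    have hlm : IsLocalMin Fb xstar := Filter.Eventually.of_forall (fun z => hmin z)
    have h1 : fderiv ℝ Fb xstar = 0 := hlm.fderiv_eq_zero
    have h2 := (hFG xstar).hasFDerivAt.fderiv
    rw [h1] at h2
    have := (InnerProductSpace.toDual ℝ (EuclideanSpace ℝ (Fin p))).map_eq_zero_iff (x := Gb xstar)
    exact this.1 h2.symm
  -- abbreviations
  set xb : EuclideanSpace ℝ (Fin p) := (n:ℝ)⁻¹ • ∑ i, x i with hxb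
  set h : EuclideanSpace ℝ (Fin p) := (n:ℝ)⁻¹ • ∑ i, gradient (f i) (x i) with hh
  set d : EuclideanSpace ℝ (Fin p) := xb - xstar with hd
  set S : ℝ := ∑ i, ‖x i - xb‖ ^ 2 with hS
  set A : EuclideanSpace ℝ (Fin p) := d - α • h with hA
  -- Step 1: contraction for the full-gradient step
  have hcontr : ‖d - α • Gb xb‖ ^ 2 ≤ (1 - α * μ) ^ 2 * ‖d‖ ^ 2 := by
    have hco := aux_coercive hμ hμL hFG hGμ hGL xb xstar
    rw [hGstar, sub_zero, ← hd] at hco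
    have hI : μ * ‖d‖ ^ 2 ≤ ⟪Gb xb, d⟫ := by
      have h2 := hGμ xb xstar
      rwa [hGstar, sub_zero, ← hd] at h2
    have hexp : ‖d - α • Gb xb‖ ^ 2
        = ‖d‖ ^ 2 - 2 * α * ⟪Gb xb, d⟫ + α ^ 2 * ‖Gb xb‖ ^ 2 := by
      rw [norm_sub_sq_real, real_inner_smul_right, norm_smul, mul_pow, Real.norm_eq_abs,
        sq_abs, real_inner_comm]
      ring
    rw [hexp]
    nlinarith [mul_nonneg (mul_pos hα0 (by linarith : (0:ℝ) < 2 - α * (μ + L))).le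
        (sub_nonneg.2 hI),
      mul_nonneg (sq_nonneg α) (sub_nonneg.2 hco)]
  -- Step 2: gradient-error bound
  have he2 : ‖Gb xb - h‖ ^ 2 ≤ L ^ 2 / n * S := by
    set T : ℝ := ∑ i, ‖x i - xb‖ with hT
    have h1 : ‖Gb xb - h‖ ≤ (n:ℝ)⁻¹ * (L * T) := by
      have hdd : Gb xb - h = (n:ℝ)⁻¹ • ∑ i, (gradient (f i) xb - gradient (f i) (x i)) := by
        simp only [hGb, hh, Finset.sum_sub_distrib, smul_sub]
      rw [hdd, norm_smul, Real.norm_eq_abs, abs_of_pos (by positivity : (0:ℝ) < (n:ℝ)⁻¹)]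
      have h2 : ‖∑ i, (gradient (f i) xb - gradient (f i) (x i))‖ ≤ L * T := by
        calc ‖∑ i, (gradient (f i) xb - gradient (f i) (x i))‖
            ≤ ∑ i, ‖gradient (f i) xb - gradient (f i) (x i)‖ := norm_sum_le _ _
          _ ≤ ∑ i, L * ‖x i - xb‖ := by
              refine Finset.sum_le_sum (fun i _ => ?_)
              rw [norm_sub_rev (x i) xb]
              exact hlip i xb (x i)
          _ = L * T := by rw [hT, Finset.mul_sum]
      exact mul_le_mul_of_nonneg_left h2 (by positivity)
    have hcs : T ^ 2 ≤ (n:ℝ) * S := by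
      have h3 := sq_sum_le_card_mul_sum_sq (s := (Finset.univ : Finset (Fin n)))
        (f := fun i => ‖x i - xb‖)
      simpa [hT, hS] using h3
    have h4 : ‖Gb xb - h‖ ^ 2 ≤ ((n:ℝ)⁻¹ * (L * T)) ^ 2 :=
      pow_le_pow_left₀ (norm_nonneg _) h1 2
    have h5 : ((n:ℝ)⁻¹ * (L * T)) ^ 2 = (n:ℝ)⁻¹ ^ 2 * L ^ 2 * T ^ 2 := by ring
    have h6 : (n:ℝ)⁻¹ ^ 2 * L ^ 2 * T ^ 2 ≤ (n:ℝ)⁻¹ ^ 2 * L ^ 2 * ((n:ℝ) * S) :=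
      mul_le_mul_of_nonneg_left hcs (by positivity)
    have h7 : (n:ℝ)⁻¹ ^ 2 * L ^ 2 * ((n:ℝ) * S) = L ^ 2 / n * S := by
      field_simp
    linarith
  -- Step 3: deterministic bound
  have hdet : ‖A‖ ^ 2 ≤ (1 - α * μ) * ‖d‖ ^ 2 + (α * L ^ 2 / (μ * n)) * (1 + α * μ) * S := by
    have hAeq : A = (d - α • Gb xb) + α • (Gb xb - h) := by
      rw [hA, smul_sub]
      abel
    have hy := young_ineq (d - α • Gb xb) (α • (Gb xb - h)) (mul_pos hα0 hμ)
    rw [← hAeq] at hy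
    have hsm : ‖α • (Gb xb - h)‖ ^ 2 = α ^ 2 * ‖Gb xb - h‖ ^ 2 := by
      rw [norm_smul, mul_pow, Real.norm_eq_abs, sq_abs]
    rw [hsm] at hy
    have p1 : (1 + α * μ) * ‖d - α • Gb xb‖ ^ 2
        ≤ (1 + α * μ) * ((1 - α * μ) ^ 2 * ‖d‖ ^ 2) :=
      mul_le_mul_of_nonneg_left hcontr (by positivity)
    have c1 : (1 + α * μ) * ((1 - α * μ) ^ 2 * ‖d‖ ^ 2) ≤ (1 - α * μ) * ‖d‖ ^ 2 := by
      nlinarith [mul_nonneg (mul_nonneg (by nlinarith : (0:ℝ) ≤ 1 - α * μ)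
        (sq_nonneg (α * μ))) (sq_nonneg ‖d‖)]
    have p2 : (1 + (α * μ)⁻¹) * (α ^ 2 * ‖Gb xb - h‖ ^ 2)
        ≤ (1 + (α * μ)⁻¹) * (α ^ 2 * (L ^ 2 / n * S)) := by
      refine mul_le_mul_of_nonneg_left (mul_le_mul_of_nonneg_left he2 (sq_nonneg α)) ?_
      have : (0:ℝ) < (α * μ)⁻¹ := by positivity
      linarith
    have c2 : (1 + (α * μ)⁻¹) * (α ^ 2 * (L ^ 2 / n * S))
        = (α * L ^ 2 / (μ * n)) * (1 + α * μ) * S := by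
      field_simp
      ring
    linarith
  -- Step 4: probabilistic part
  set B : Ω → EuclideanSpace ℝ (Fin p) := fun ω => ybar ω - h with hB
  have hyMem : MemLp B 2 P := hyL2.sub (memLp_const h)
  have hBi : Integrable B P := hyMem.integrable one_le_two
  have hB2 : Integrable (fun ω => ‖B ω‖ ^ 2) P :=
    (memLp_two_iff_integrable_sq_norm hyMem.aestronglyMeasurable).1 hyMem
  have hBint : ∫ ω, B ω ∂P = 0 := by
    have h1 : ∫ ω, B ω ∂P = (∫ ω, ybar ω ∂P) - h := by
      rw [hB]
      rw [integral_sub (hyL2.integrable one_le_two) (integrable_const h)]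
      simp
    rw [h1, hymean, sub_self]
  have hinner : Integrable (fun ω => ⟪A, B ω⟫) P := (innerSL ℝ A).integrable_comp hBi
  have hinner0 : ∫ ω, ⟪A, B ω⟫ ∂P = 0 := by
    have h1 := (innerSL ℝ A).integral_comp_comm hBi
    rw [hBint] at h1
    simpa using h1
  have hpt : ∀ ω, ‖(n:ℝ)⁻¹ • ∑ i, x i - α • ybar ω - xstar‖ ^ 2
      = ‖A‖ ^ 2 + ((-(2 * α)) * ⟪A, B ω⟫ + α ^ 2 * ‖B ω‖ ^ 2) := by
    intro ω
    have heq : (n:ℝ)⁻¹ • ∑ i, x i - α • ybar ω - xstar = A - α • B ω := by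
      rw [hA, hB, hd, hxb, hh]
      simp only [smul_sub]
      abel
    rw [heq, norm_sub_sq_real, real_inner_smul_right, norm_smul, mul_pow, Real.norm_eq_abs,
      sq_abs]
    ring
  have hint : (∫ ω, ‖(n:ℝ)⁻¹ • ∑ i, x i - α • ybar ω - xstar‖ ^ 2 ∂P)
      = ‖A‖ ^ 2 + α ^ 2 * ∫ ω, ‖B ω‖ ^ 2 ∂P := by
    calc (∫ ω, ‖(n:ℝ)⁻¹ • ∑ i, x i - α • ybar ω - xstar‖ ^ 2 ∂P)
        = ∫ ω, (‖A‖ ^ 2 + ((-(2 * α)) * ⟪A, B ω⟫ + α ^ 2 * ‖B ω‖ ^ 2)) ∂P := by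
          exact integral_congr_ae (Filter.Eventually.of_forall hpt)
      _ = ‖A‖ ^ 2 + ∫ ω, ((-(2 * α)) * ⟪A, B ω⟫ + α ^ 2 * ‖B ω‖ ^ 2) ∂P := by
          have e1 : ∫ ω, (‖A‖ ^ 2 + ((-(2 * α)) * ⟪A, B ω⟫ + α ^ 2 * ‖B ω‖ ^ 2)) ∂P
              = (∫ _ω, ‖A‖ ^ 2 ∂P) + ∫ ω, ((-(2 * α)) * ⟪A, B ω⟫ + α ^ 2 * ‖B ω‖ ^ 2) ∂P :=
            integral_add (integrable_const _) ((hinner.const_mul _).add (hB2.const_mul _))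
          rw [e1, integral_const]
          simp
      _ = ‖A‖ ^ 2 + ((-(2 * α)) * (∫ ω, ⟪A, B ω⟫ ∂P) + α ^ 2 * ∫ ω, ‖B ω‖ ^ 2 ∂P) := by
          have e2 : ∫ ω, ((-(2 * α)) * ⟪A, B ω⟫ + α ^ 2 * ‖B ω‖ ^ 2) ∂P
              = (∫ ω, (-(2 * α)) * ⟪A, B ω⟫ ∂P) + ∫ ω, α ^ 2 * ‖B ω‖ ^ 2 ∂P :=
            integral_add (hinner.const_mul _) (hB2.const_mul _)
          rw [e2, integral_const_mul, integral_const_mul]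
      _ = ‖A‖ ^ 2 + α ^ 2 * ∫ ω, ‖B ω‖ ^ 2 ∂P := by rw [hinner0]; ring
  have hvar' : ∫ ω, ‖B ω‖ ^ 2 ∂P ≤ σ ^ 2 / n := by
    have : (fun ω => ‖B ω‖ ^ 2) = fun ω => ‖ybar ω - h‖ ^ 2 := by rw [hB]
    rw [this]
    exact hyvar
  have hfin : α ^ 2 * ∫ ω, ‖B ω‖ ^ 2 ∂P ≤ α ^ 2 * (σ ^ 2 / n) :=
    mul_le_mul_of_nonneg_left hvar' (sq_nonneg α)
  rw [hint]
  have hgoal2 : α ^ 2 * (σ ^ 2 / n) = α ^ 2 * σ ^ 2 / n := by ring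
  linarith [hdet]
end

section
/- Let n ≥ 1, p ≥ 1, α > 0, and let W ∈ ℝ^{n×n} be a nonnegative doubly stochastic matrix such that the operator 2-norm ρ_w of W − (1/n)𝟙𝟙ᵀ satisfies ρ_w < 1. For any x, y ∈ ℝ^{n×p}, set x⁺ := W(x − αy), and for z ∈ ℝ^{n×p} write z̄ := (1/n)𝟙ᵀz. Then ‖x⁺ − 𝟙\overline{x⁺}‖_F² ≤ ((1 + ρ_w²)/2) ‖x − 𝟙x̄‖_F² + α² ((1 + ρ_w²)ρ_w²/(1 − ρ_w²)) ‖y − 𝟙ȳ‖_F². -/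
open Matrix

lemma frobNorm_sq {n p : ℕ} (M : Matrix (Fin n) (Fin p) ℝ) :
    frobNorm M ^ 2 = ∑ i, ∑ j, (M i j) ^ 2 := by
  apply Real.sq_sqrt
  positivity

lemma mulVec_sq_le {n : ℕ} (M : Matrix (Fin n) (Fin n) ℝ) (v : Fin n → ℝ) :
    ∑ i, (M.mulVec v i) ^ 2 ≤ l2OpNorm M ^ 2 * ∑ i, (v i) ^ 2 := by
  set v' : EuclideanSpace ℝ (Fin n) := (WithLp.equiv 2 (Fin n → ℝ)).symm v with hv'
  have h1 : ‖Matrix.toEuclideanLin M v'‖ ≤ l2OpNorm M * ‖v'‖ := by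
    rw [l2OpNorm]
    exact (LinearMap.toContinuousLinearMap (Matrix.toEuclideanLin M)).le_opNorm v'
  have h2 : ‖Matrix.toEuclideanLin M v'‖ ^ 2 = ∑ i, (M.mulVec v i) ^ 2 := by
    rw [hv', WithLp.equiv_symm_apply, Matrix.toEuclideanLin_apply_piLp_toLp,
      EuclideanSpace.norm_eq, Real.sq_sqrt (by positivity)]
    simp [sq_abs]
  have h3 : ‖v'‖ ^ 2 = ∑ i, (v i) ^ 2 := by
    rw [EuclideanSpace.norm_eq, Real.sq_sqrt (by positivity)]
    simp [v', sq_abs]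
  calc ∑ i, (M.mulVec v i) ^ 2 = ‖Matrix.toEuclideanLin M v'‖ ^ 2 := h2.symm
    _ ≤ (l2OpNorm M * ‖v'‖) ^ 2 := by
        nlinarith [norm_nonneg (Matrix.toEuclideanLin M v')]
    _ = l2OpNorm M ^ 2 * ∑ i, (v i) ^ 2 := by rw [mul_pow, h3]

lemma S_mul_le {n p : ℕ} (M : Matrix (Fin n) (Fin n) ℝ) (B : Matrix (Fin n) (Fin p) ℝ) :
    ∑ i, ∑ j, ((M * B) i j) ^ 2 ≤ l2OpNorm M ^ 2 * ∑ i, ∑ j, (B i j) ^ 2 := by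
  rw [Finset.sum_comm, Finset.sum_comm (s := Finset.univ) (t := Finset.univ)
    (f := fun i j => (B i j) ^ 2), Finset.mul_sum]
  apply Finset.sum_le_sum
  intro j _
  have := mulVec_sq_le M (fun k => B k j)
  simpa [Matrix.mul_apply, Matrix.mulVec, dotProduct] using this

lemma young_ineq_s5 (β a b : ℝ) (hβ : 0 < β) :
    (a - b) ^ 2 ≤ (1 + β) * a ^ 2 + (1 + β⁻¹) * b ^ 2 := by
  have h : (1 + β) * a ^ 2 + (1 + β⁻¹) * b ^ 2 - (a - b) ^ 2 = (β * a + b) ^ 2 / β := by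
    field_simp
    ring
  have h2 : 0 ≤ (β * a + b) ^ 2 / β := div_nonneg (sq_nonneg _) hβ.le
  linarith

set_option maxHeartbeats 1000000 in
theorem stmt5 (n p : ℕ) (hn : 1 ≤ n) (hp : 1 ≤ p) (α : ℝ) (hα : 0 < α)
    (W : Matrix (Fin n) (Fin n) ℝ)
    (hWnonneg : ∀ i j, 0 ≤ W i j)
    (hWrow : W.mulVec (fun _ => (1 : ℝ)) = fun _ => (1 : ℝ))
    (hWcol : Matrix.vecMul (fun _ => (1 : ℝ)) W = fun _ => (1 : ℝ))
    (hρ : l2OpNorm (W - (n : ℝ)⁻¹ • Matrix.of (fun _ _ : Fin n => (1 : ℝ))) < 1)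
    (x y : Matrix (Fin n) (Fin p) ℝ) :
    frobNorm (W * (x - α • y) - onesAvg (W * (x - α • y))) ^ 2 ≤
      ((1 + l2OpNorm (W - (n : ℝ)⁻¹ • Matrix.of (fun _ _ : Fin n => (1 : ℝ))) ^ 2) / 2) *
          frobNorm (x - onesAvg x) ^ 2 +
        α ^ 2 *
          ((1 + l2OpNorm (W - (n : ℝ)⁻¹ • Matrix.of (fun _ _ : Fin n => (1 : ℝ))) ^ 2) *
              l2OpNorm (W - (n : ℝ)⁻¹ • Matrix.of (fun _ _ : Fin n => (1 : ℝ))) ^ 2 /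
            (1 - l2OpNorm (W - (n : ℝ)⁻¹ • Matrix.of (fun _ _ : Fin n => (1 : ℝ))) ^ 2)) *
          frobNorm (y - onesAvg y) ^ 2 := by
  set M := W - (n : ℝ)⁻¹ • Matrix.of (fun _ _ : Fin n => (1 : ℝ)) with hM
  set ρ := l2OpNorm M with hρdef
  have hρ0 : 0 ≤ ρ := norm_nonneg _
  have hn0 : (0:ℝ) < n := by exact_mod_cast hn
  have hne : (n:ℝ) ≠ 0 := ne_of_gt hn0
  have hrow : ∀ i, ∑ k, W i k = 1 := fun i => by
    have := congrFun hWrow i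
    simpa [Matrix.mulVec, dotProduct] using this
  have hcol : ∀ k, ∑ i, W i k = 1 := fun k => by
    have := congrFun hWcol k
    simpa [Matrix.vecMul, dotProduct] using this
  set u := x - onesAvg x with hu
  set v := y - onesAvg y with hv
  -- key matrix identity
  have key : W * (x - α • y) - onesAvg (W * (x - α • y)) = M * (u - α • v) := by
    ext i j
    have hx : ∀ i' j', (W * (x - α • y)) i' j' = ∑ k, W i' k * (x k j' - α * y k j') := by
      intro i' j'; simp [Matrix.mul_apply, Matrix.sub_apply, Matrix.smul_apply]
    simp only [Matrix.sub_apply, onesAvg, Matrix.of_apply, hx, Matrix.mul_apply, hu, hv,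
      Matrix.smul_apply, Matrix.sub_apply, smul_eq_mul, hM]
    have hsum2 : ∑ i', ∑ k, W i' k * (x k j - α * y k j)
        = ∑ k, (x k j - α * y k j) := by
      rw [Finset.sum_comm]
      refine Finset.sum_congr rfl fun k _ => ?_
      rw [← Finset.sum_mul, hcol k, one_mul]
    rw [hsum2]
    set c : ℝ := (n:ℝ)⁻¹ * ∑ l, x l j - α * ((n:ℝ)⁻¹ * ∑ l, y l j) with hc
    have term : ∀ k, (W i k - (n:ℝ)⁻¹ * 1) *
        (x k j - (n:ℝ)⁻¹ * ∑ l, x l j - α * (y k j - (n:ℝ)⁻¹ * ∑ l, y l j))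
        = W i k * (x k j - α * y k j) - W i k * c
          - (n:ℝ)⁻¹ * (x k j - α * y k j) + (n:ℝ)⁻¹ * c := by
      intro k; rw [hc]; ring
    have rhs_eq : ∑ k, (W i k - (n:ℝ)⁻¹ * 1) *
        (x k j - (n:ℝ)⁻¹ * ∑ l, x l j - α * (y k j - (n:ℝ)⁻¹ * ∑ l, y l j))
        = ∑ k, W i k * (x k j - α * y k j) - (n:ℝ)⁻¹ * ∑ k, (x k j - α * y k j) := by
      rw [Finset.sum_congr rfl (fun k _ => term k), Finset.sum_add_distrib,
        Finset.sum_sub_distrib, Finset.sum_sub_distrib, ← Finset.sum_mul, hrow i,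
        ← Finset.mul_sum, Finset.sum_const, Finset.card_univ, Fintype.card_fin,
        nsmul_eq_mul]
      field_simp
      ring
    rw [rhs_eq]
  rw [key, frobNorm_sq, frobNorm_sq, frobNorm_sq]
  set Su := ∑ i, ∑ j, (u i j) ^ 2 with hSu
  set Sv := ∑ i, ∑ j, (v i j) ^ 2 with hSv
  have hSu0 : 0 ≤ Su := by rw [hSu]; positivity
  have hSv0 : 0 ≤ Sv := by rw [hSv]; positivity
  have h1ρ : (0:ℝ) < 1 - ρ ^ 2 := by nlinarith
  rcases eq_or_lt_of_le hρ0 with h0 | hρpos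
  · -- ρ = 0
    have hle := S_mul_le M (u - α • v)
    rw [← hρdef, ← h0] at hle
    have hL : ∑ i, ∑ j, ((M * (u - α • v)) i j) ^ 2 ≤ 0 := by
      simpa using hle
    have hc2 : (0:ℝ) ≤ (1 + ρ^2) * ρ^2 / (1 - ρ^2) := by positivity
    have : (0:ℝ) ≤ ((1 + ρ ^ 2) / 2) * Su + α ^ 2 * ((1 + ρ^2) * ρ^2 / (1 - ρ^2)) * Sv := by
      positivity
    linarith
  · -- ρ > 0
    set β : ℝ := (1 - ρ^2) / (2 * ρ^2) with hβ
    have hβ0 : 0 < β := by positivity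
    have young : ∑ i, ∑ j, ((u - α • v) i j) ^ 2
        ≤ (1 + β) * Su + (1 + β⁻¹) * (α^2 * Sv) := by
      have h : ∀ i j, ((u - α • v) i j) ^ 2
          ≤ (1 + β) * (u i j)^2 + (1 + β⁻¹) * (α * v i j)^2 := by
        intro i j
        have e : ((u - α • v) i j) = u i j - α * v i j := by
          simp [Matrix.sub_apply, Matrix.smul_apply]
        rw [e]
        exact young_ineq_s5 β (u i j) (α * v i j) hβ0
      calc ∑ i, ∑ j, ((u - α • v) i j) ^ 2
          ≤ ∑ i, ∑ j, ((1 + β) * (u i j)^2 + (1 + β⁻¹) * (α * v i j)^2) :=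
            Finset.sum_le_sum fun i _ => Finset.sum_le_sum fun j _ => h i j
        _ = (1 + β) * Su + (1 + β⁻¹) * (α^2 * Sv) := by
            rw [hSu, hSv]
            simp_rw [Finset.sum_add_distrib, mul_pow, ← Finset.mul_sum]
    have hle := S_mul_le M (u - α • v)
    rw [← hρdef] at hle
    have main : ∑ i, ∑ j, ((M * (u - α • v)) i j) ^ 2
        ≤ ρ^2 * ((1 + β) * Su + (1 + β⁻¹) * (α^2 * Sv)) :=
      le_trans hle (mul_le_mul_of_nonneg_left young (by positivity))
    have c1 : ρ^2 * (1 + β) = (1 + ρ^2) / 2 := by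
      rw [hβ]; field_simp; ring
    have c2 : ρ^2 * (1 + β⁻¹) = (1 + ρ^2) * ρ^2 / (1 - ρ^2) := by
      rw [hβ, inv_div]
      field_simp
      ring
    calc ∑ i, ∑ j, ((M * (u - α • v)) i j) ^ 2
        ≤ ρ^2 * ((1 + β) * Su + (1 + β⁻¹) * (α^2 * Sv)) := main
      _ = (ρ^2 * (1 + β)) * Su + α^2 * (ρ^2 * (1 + β⁻¹)) * Sv := by ring
      _ = ((1 + ρ^2) / 2) * Su + α^2 * ((1 + ρ^2) * ρ^2 / (1 - ρ^2)) * Sv := by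
          rw [c1, c2]
end

section
/- Let S = [s_{ij}] ∈ ℝ^{3×3} be a nonnegative matrix that is irreducible (for every pair of indices i, j there exists k ≥ 1 with (S^k)_{ij} > 0), and let λ* > 0 satisfy s_{ii} < λ* for i = 1, 2, 3. Then the spectral radius ρ(S) (the maximum modulus of the complex eigenvalues of S) satisfies ρ(S) < λ* if and only if det(λ* I − S) > 0. -/
open Polynomial in
lemma charpoly_eval' {n : Type*} [DecidableEq n] [Fintype n] {R : Type*} [CommRing R]
    (A : Matrix n n R) (z : R) :
    A.charpoly.eval z = (z • (1 : Matrix n n R) - A).det := by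
  rw [Matrix.charpoly, ← coe_evalRingHom, RingHom.map_det]
  congr 1
  ext i j
  by_cases h : i = j <;>
  simp [Matrix.charmatrix_apply, Matrix.one_apply, h, Matrix.diagonal, Matrix.sub_apply]


-- f(M) > 0 for M big
lemma cubic_big (e1 e2 e3 M : ℝ) (h1 : 1 + |e1| + |e2| + |e3| ≤ M) :
    0 < M^3 - e1*M^2 + e2*M - e3 := by
  have h2 : |e1| ≤ M := by nlinarith [abs_nonneg e1, abs_nonneg e2, abs_nonneg e3]
  have hM1 : 1 ≤ M := by nlinarith [abs_nonneg e1, abs_nonneg e2, abs_nonneg e3]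
  have a1 : -(|e1|) ≤ e1 ∧ e1 ≤ |e1| := ⟨neg_abs_le e1, le_abs_self e1⟩
  have a2 : -(|e2|) ≤ e2 ∧ e2 ≤ |e2| := ⟨neg_abs_le e2, le_abs_self e2⟩
  have a3 : -(|e3|) ≤ e3 ∧ e3 ≤ |e3| := ⟨neg_abs_le e3, le_abs_self e3⟩
  nlinarith [sq_nonneg M, mul_le_mul_of_nonneg_right a1.2 (sq_nonneg M),
    abs_nonneg e1, abs_nonneg e2, abs_nonneg e3, sq_nonneg (M-1)]

-- real root of cubic via IVT
lemma cubic_real_root (e1 e2 e3 : ℝ) : ∃ r : ℝ, r^3 - e1*r^2 + e2*r - e3 = 0 := by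
  set f : ℝ → ℝ := fun x => x^3 - e1*x^2 + e2*x - e3 with hf
  have hc : Continuous f := by fun_prop
  set M : ℝ := 1 + |e1| + |e2| + |e3| with hM
  have hpos : 0 < f M := cubic_big e1 e2 e3 M le_rfl
  have hneg : f (-M) < 0 := by
    have := cubic_big (-e1) e2 (-e3) M (by simp only [abs_neg]; exact le_rfl)
    simp only [hf]
    nlinarith
  have hle : -M ≤ M := by nlinarith [abs_nonneg e1, abs_nonneg e2, abs_nonneg e3]
  have := intermediate_value_Icc hle hc.continuousOn (a := -M) (b := M)
  have h0 : (0:ℝ) ∈ Set.Icc (f (-M)) (f M) := ⟨hneg.le, hpos.le⟩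
  obtain ⟨r, _, hr⟩ := this h0
  exact ⟨r, hr⟩

section
open Polynomial Real Complex
lemma cubic_factor (e1 e2 e3 : ℝ) :
    ∃ (r : ℝ) (w v : ℂ),
      (∀ x : ℂ, x^3 - (e1:ℂ)*x^2 + (e2:ℂ)*x - (e3:ℂ) = (x - r)*(x - w)*(x - v)) ∧
      ((w.im = 0 ∧ v.im = 0) ∨ (v = (starRingEnd ℂ) w ∧ 0 < w.im)) := by
  obtain ⟨r, hr⟩ := cubic_real_root e1 e2 e3
  have hrC : (r:ℂ)^3 - (e1:ℂ)*(r:ℂ)^2 + (e2:ℂ)*(r:ℂ) - (e3:ℂ) = 0 := by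
    exact_mod_cast congrArg (Complex.ofReal) hr
  by_cases hDpos : 0 ≤ (r - e1)^2 - 4*(r^2 - e1*r + e2)
  · set s : ℝ := Real.sqrt ((r - e1)^2 - 4*(r^2 - e1*r + e2)) with hsdef
    have hs : s^2 = (r - e1)^2 - 4*(r^2 - e1*r + e2) := Real.sq_sqrt hDpos
    have hsC : (s:ℂ)^2 = ((r:ℂ) - e1)^2 - 4*((r:ℂ)^2 - (e1:ℂ)*r + e2) := by
      have := congrArg (Complex.ofReal) hs; push_cast at this ⊢; exact this
    refine ⟨r, (((e1 - r) + s)/2 : ℝ), (((e1 - r) - s)/2 : ℝ), ?_, Or.inl ⟨rfl, rfl⟩⟩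
    intro x
    push_cast
    linear_combination (x/4 - (r:ℂ)/4) * hsC + hrC
  · set s : ℝ := Real.sqrt (-((r - e1)^2 - 4*(r^2 - e1*r + e2))) with hsdef
    have hD' : (0:ℝ) ≤ -((r - e1)^2 - 4*(r^2 - e1*r + e2)) := by linarith [not_le.mp hDpos]
    have hDlt : (0:ℝ) < -((r - e1)^2 - 4*(r^2 - e1*r + e2)) := by linarith [not_le.mp hDpos]
    have hs : s^2 = -((r - e1)^2 - 4*(r^2 - e1*r + e2)) := Real.sq_sqrt hD'
    have hsC : (s:ℂ)^2 = -(((r:ℂ) - e1)^2 - 4*((r:ℂ)^2 - (e1:ℂ)*r + e2)) := by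
      have := congrArg (Complex.ofReal) hs; push_cast at this ⊢; exact this
    refine ⟨r, ⟨(e1 - r)/2, s/2⟩, ⟨(e1 - r)/2, -(s/2)⟩, ?_, Or.inr ⟨?_, ?_⟩⟩
    · intro x
      have hw : (⟨(e1 - r)/2, s/2⟩ : ℂ) = (↑((e1 - r)/2) + ↑(s/2) * Complex.I) := by
        apply Complex.ext <;> simp
      have hv : (⟨(e1 - r)/2, -(s/2)⟩ : ℂ) = (↑((e1 - r)/2) - ↑(s/2) * Complex.I) := by
        apply Complex.ext <;> simp
      rw [hw, hv]
      have hI : (Complex.I)^2 = -1 := Complex.I_sq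
      push_cast
      linear_combination hrC + (-((x:ℂ) - r)/4) * hsC + (((x:ℂ) - r)*((s:ℂ))^2/4) * hI
    · apply Complex.ext <;> simp
    · show 0 < s/2
      have := Real.sqrt_pos.mpr hDlt
      rw [hsdef]
      linarith

end

section
open Real
lemma cos_hit_neg (θ : ℝ) (h0 : 0 < θ) (hπ : θ ≤ π) :
    ∃ k : ℕ, 1 ≤ k ∧ Real.cos (k*θ) ≤ -(1/2) := by
  have hpi : (0:ℝ) < π := Real.pi_pos
  have hc23 : Real.cos (2*π/3) = -(1/2) := by
    have : 2*π/3 = π - π/3 := by ring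
    rw [this, Real.cos_pi_sub, Real.cos_pi_div_three]
  by_cases hbig : 2*π/3 < θ
  · refine ⟨1, le_rfl, ?_⟩
    push_cast
    rw [one_mul, ← hc23]
    exact Real.cos_le_cos_of_nonneg_of_le_pi (by positivity) hπ hbig.le
  · push_neg at hbig
    set n : ℕ := ⌊(2*π/3)/θ⌋₊ with hn
    refine ⟨n+1, le_add_self, ?_⟩
    have hnθ : (n:ℝ)*θ ≤ 2*π/3 := by
      have := Nat.floor_le (a := (2*π/3)/θ) (by positivity)
      calc (n:ℝ)*θ ≤ ((2*π/3)/θ)*θ := by apply mul_le_mul_of_nonneg_right this h0.le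
        _ = 2*π/3 := by field_simp
    have hlow : 2*π/3 < ((n:ℕ)+1:ℝ)*θ := by
      have := Nat.lt_floor_add_one ((2*π/3)/θ)
      calc 2*π/3 = ((2*π/3)/θ)*θ := by field_simp
        _ < ((n:ℝ)+1)*θ := by apply mul_lt_mul_of_pos_right this h0
    have hhigh : ((n:ℕ)+1:ℝ)*θ ≤ 4*π/3 := by
      push_cast
      nlinarith
    set x : ℝ := ((n:ℕ)+1:ℝ)*θ with hx
    have h1 : |x - π| ≤ π/3 := by
      rw [abs_le]; constructor <;> [nlinarith; nlinarith]
    have h2 : Real.cos (π/3) ≤ Real.cos |x - π| := by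
      apply Real.cos_le_cos_of_nonneg_of_le_pi (abs_nonneg _) (by linarith) h1
    rw [Real.cos_abs, Real.cos_pi_div_three] at h2
    have h3 : Real.cos (x - π) = -Real.cos x := by
      rw [show x - π = -(π - x) by ring, Real.cos_neg, Real.cos_pi_sub]
    push_cast
    rw [show ((n:ℝ)+1)*θ = x from rfl]
    nlinarith

lemma cos_hit_half (θ : ℝ) (h0 : 0 < θ) (hπ : θ ≤ π) :
    ∃ k : ℕ, Odd k ∧ Real.cos (k*θ) < 1/2 := by
  have hpi : (0:ℝ) < π := Real.pi_pos
  by_cases hbig : π/3 < θ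
  · refine ⟨1, odd_one, ?_⟩
    push_cast
    rw [one_mul, ← Real.cos_pi_div_three]
    exact Real.cos_lt_cos_of_nonneg_of_le_pi (by positivity) hπ hbig
  · push_neg at hbig
    have hex : ∃ n : ℕ, π/3 < (2*(n:ℝ)+1)*θ := by
      obtain ⟨n, hn⟩ := Archimedean.arch (π/3) (show (0:ℝ) < θ from h0)
      refine ⟨n+1, ?_⟩
      have : (π/3 : ℝ) ≤ n • θ := hn
      rw [nsmul_eq_mul] at this
      push_cast
      nlinarith
    classical
    set n := Nat.find hex with hndef
    have hspec : π/3 < (2*(n:ℝ)+1)*θ := Nat.find_spec hex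
    have hn1 : 1 ≤ n := by
      rcases Nat.eq_zero_or_pos n with h | h
      · exfalso
        have := Nat.find_spec hex
        rw [← hndef, h] at this
        push_cast at this
        nlinarith
      · exact h
    have hmin : ¬ (π/3 < (2*(((n-1:ℕ)):ℝ)+1)*θ) := Nat.find_min hex (by omega)
    push_neg at hmin
    have hcast : ((n-1:ℕ):ℝ) = (n:ℝ) - 1 := by
      push_cast [Nat.cast_sub hn1]; ring
    rw [hcast] at hmin
    refine ⟨2*n+1, ⟨n, by ring⟩, ?_⟩
    have hle : ((2*n+1:ℕ):ℝ)*θ ≤ π := by push_cast; nlinarith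
    have hgt : π/3 < ((2*n+1:ℕ):ℝ)*θ := by push_cast; push_cast at hspec; linarith
    have := Real.cos_lt_cos_of_nonneg_of_le_pi (by positivity) hle hgt
    rw [Real.cos_pi_div_three] at this
    exact this

lemma odd_pow_small (c lam : ℝ) (h0 : 0 ≤ c) (h : c < lam) :
    ∃ k : ℕ, Odd k ∧ 2*c^k < lam^k := by
  have hlam : 0 < lam := lt_of_le_of_lt h0 h
  have hdiv : c/lam < 1 := (div_lt_one hlam).mpr h
  have hdiv0 : 0 ≤ c/lam := by positivity
  obtain ⟨m, hm⟩ := exists_pow_lt_of_lt_one (show (0:ℝ) < 1/2 by norm_num) hdiv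
  refine ⟨2*m+1, ⟨m, by ring⟩, ?_⟩
  have h1 : (c/lam)^(2*m+1) ≤ (c/lam)^m :=
    pow_le_pow_of_le_one hdiv0 hdiv.le (by omega)
  have h2 : (c/lam)^(2*m+1) < 1/2 := lt_of_le_of_lt h1 hm
  rw [div_pow] at h2
  rw [div_lt_iff₀ (by positivity)] at h2
  linarith

end

section
open Matrix
variable {R : Type*} [CommRing R]

def E1' (A : Matrix (Fin 3) (Fin 3) R) : R := A 0 0 + A 1 1 + A 2 2
def E2' (A : Matrix (Fin 3) (Fin 3) R) : R :=
  (A 0 0 * A 1 1 - A 0 1 * A 1 0) + (A 0 0 * A 2 2 - A 0 2 * A 2 0) + (A 1 1 * A 2 2 - A 1 2 * A 2 1)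
def E3' (A : Matrix (Fin 3) (Fin 3) R) : R :=
  A 0 0 * A 1 1 * A 2 2 - A 0 0 * A 1 2 * A 2 1 - A 0 1 * A 1 0 * A 2 2
    + A 0 1 * A 1 2 * A 2 0 + A 0 2 * A 1 0 * A 2 1 - A 0 2 * A 1 1 * A 2 0

lemma det3 (A : Matrix (Fin 3) (Fin 3) R) (t : R) :
    (t • (1 : Matrix (Fin 3) (Fin 3) R) - A).det = t^3 - E1' A * t^2 + E2' A * t - E3' A := by
  rw [Matrix.det_fin_three]
  simp [Matrix.sub_apply, Matrix.smul_apply, Matrix.one_apply, E1', E2', E3']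
  ring

lemma ch3 (A : Matrix (Fin 3) (Fin 3) R) :
    A^3 = E1' A • A^2 - E2' A • A + E3' A • (1 : Matrix (Fin 3) (Fin 3) R) := by
  ext i j
  simp only [pow_succ, pow_zero, Matrix.one_mul, Matrix.sub_apply, Matrix.add_apply,
    Matrix.smul_apply, Matrix.mul_apply, Fin.sum_univ_three, Matrix.one_apply, smul_eq_mul,
    E1', E2', E3']
  fin_cases i <;> fin_cases j <;> simp <;> ring

end

section
open Matrix Polynomial
lemma pow_entry_nonneg (S : Matrix (Fin 3) (Fin 3) ℝ) (h : ∀ i j, 0 ≤ S i j) (k : ℕ) :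
    ∀ i j, 0 ≤ (S^k) i j := by
  induction k with
  | zero => intro i j; by_cases hij : i = j <;> simp [pow_zero, Matrix.one_apply, hij]
  | succ n ih =>
      intro i j
      rw [pow_succ, Matrix.mul_apply]
      exact Finset.sum_nonneg fun c _ => mul_nonneg (ih i c) (h c j)

-- monotonicity: P stays positive to the right of lam
lemma mono3 (d0 d1 d2 a b c e lam t : ℝ) (ha : 0 ≤ a) (hb : 0 ≤ b) (hc : 0 ≤ c) (he : 0 ≤ e)
    (h0 : d0 < lam) (h1 : d1 < lam) (h2 : d2 < lam) (ht : lam ≤ t)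
    (hP : 0 < (lam-d0)*(lam-d1)*(lam-d2) - (a*(lam-d2) + b*(lam-d1) + c*(lam-d0) + e)) :
    0 < (t-d0)*(t-d1)*(t-d2) - (a*(t-d2) + b*(t-d1) + c*(t-d0) + e) := by
  set fl : ℝ := (lam-d0)*(lam-d1)*(lam-d2) with hfl
  set ft : ℝ := (t-d0)*(t-d1)*(t-d2) with hft
  have hfl0 : 0 < fl := by
    have := mul_pos (mul_pos (sub_pos.mpr h0) (sub_pos.mpr h1)) (sub_pos.mpr h2)
    rw [hfl]; linarith
  have hft0 : 0 < ft := by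
    have := mul_pos (mul_pos (sub_pos.mpr (lt_of_lt_of_le h0 ht))
      (sub_pos.mpr (lt_of_lt_of_le h1 ht))) (sub_pos.mpr (lt_of_lt_of_le h2 ht))
    rw [hft]; linarith
  -- termwise comparisons : stuff(lam) * ft ≥ stuff(t) * fl
  have key : (a*(t-d2) + b*(t-d1) + c*(t-d0) + e) * fl
      ≤ (a*(lam-d2) + b*(lam-d1) + c*(lam-d0) + e) * ft := by
    have ka : a*(t-d2) * fl ≤ a*(lam-d2) * ft := by
      rw [hfl, hft]
      nlinarith [mul_nonneg (sub_pos.mpr h0).le (sub_pos.mpr h1).le, sub_nonneg.mpr ht,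
        mul_nonneg (sub_nonneg.mpr ht) (sub_pos.mpr h0).le,
        mul_nonneg (sub_nonneg.mpr ht) (sub_nonneg.mpr (le_trans h1.le ht)),
        mul_nonneg ha (mul_nonneg (sub_pos.mpr h2).le (sub_nonneg.mpr (le_trans h2.le ht))),
        mul_nonneg (mul_nonneg ha (sub_pos.mpr h2).le) (sub_nonneg.mpr (le_trans h2.le ht))]
    have kb : b*(t-d1) * fl ≤ b*(lam-d1) * ft := by
      rw [hfl, hft]
      nlinarith [mul_nonneg (sub_pos.mpr h0).le (sub_pos.mpr h2).le, sub_nonneg.mpr ht,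
        mul_nonneg (sub_nonneg.mpr ht) (sub_pos.mpr h0).le,
        mul_nonneg (sub_nonneg.mpr ht) (sub_nonneg.mpr (le_trans h2.le ht)),
        mul_nonneg (mul_nonneg hb (sub_pos.mpr h1).le) (sub_nonneg.mpr (le_trans h1.le ht))]
    have kc : c*(t-d0) * fl ≤ c*(lam-d0) * ft := by
      rw [hfl, hft]
      nlinarith [mul_nonneg (sub_pos.mpr h1).le (sub_pos.mpr h2).le, sub_nonneg.mpr ht,
        mul_nonneg (sub_nonneg.mpr ht) (sub_pos.mpr h1).le,
        mul_nonneg (sub_nonneg.mpr ht) (sub_nonneg.mpr (le_trans h2.le ht)),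
        mul_nonneg (mul_nonneg hc (sub_pos.mpr h0).le) (sub_nonneg.mpr (le_trans h0.le ht))]
    have ke : e * fl ≤ e * ft := by
      apply mul_le_mul_of_nonneg_left _ he
      rw [hfl, hft]
      nlinarith [mul_nonneg (sub_pos.mpr h0).le (sub_pos.mpr h1).le, sub_nonneg.mpr ht,
        mul_nonneg (sub_nonneg.mpr ht) (sub_pos.mpr h0).le,
        mul_nonneg (sub_nonneg.mpr ht) (sub_nonneg.mpr (le_trans h1.le ht)),
        mul_nonneg (sub_pos.mpr h2).le (sub_nonneg.mpr (le_trans h2.le ht))]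
    nlinarith [ka, kb, kc, ke]
  have final : (fl - (a*(lam-d2) + b*(lam-d1) + c*(lam-d0) + e)) * ft
      ≤ (ft - (a*(t-d2) + b*(t-d1) + c*(t-d0) + e)) * fl := by
    have : fl * ft = ft * fl := by ring
    nlinarith [key]
  have hPf : 0 < (fl - (a*(lam-d2) + b*(lam-d1) + c*(lam-d0) + e)) * ft :=
    mul_pos (by rw [hfl]; linarith [hP]) hft0
  have hgt := lt_of_lt_of_le hPf final
  by_contra hcon
  push_neg at hcon
  have hneg := mul_nonpos_of_nonpos_of_nonneg hcon hfl0.le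
  linarith

end

-- sequences with the same 3-term recurrence and initial values agree
lemma seq_eq (e1 e2 e3 : ℂ) (T Q : ℕ → ℂ)
    (hT : ∀ k, T (k+3) = e1 * T (k+2) - e2 * T (k+1) + e3 * T k)
    (hQ : ∀ k, Q (k+3) = e1 * Q (k+2) - e2 * Q (k+1) + e3 * Q k)
    (h0 : T 0 = Q 0) (h1 : T 1 = Q 1) (h2 : T 2 = Q 2) : ∀ k, T k = Q k := by
  have key : ∀ k, T k = Q k ∧ T (k+1) = Q (k+1) ∧ T (k+2) = Q (k+2) := by
    intro k
    induction k with
    | zero => exact ⟨h0, h1, h2⟩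
    | succ n ih =>
        refine ⟨ih.2.1, ih.2.2, ?_⟩
        have := hT n
        rw [ih.1, ih.2.1, ih.2.2] at this
        rw [show n+1+2 = n+3 from rfl, this, ← hQ n]
  exact fun k => (key k).1

-- real-roots case bound
lemma allreal_bound (ρ1 ρ2 ρ3 lam : ℝ) (hlam : 0 < lam)
    (hT : ∀ k : ℕ, Odd k → 0 ≤ ρ1^k + ρ2^k + ρ3^k)
    (h1 : ρ1 < lam) (h2 : ρ2 < lam) (h3 : ρ3 < lam) : -lam < ρ1 := by
  by_contra hcon
  push_neg at hcon
  set c : ℝ := max 0 (max ρ2 ρ3) with hc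
  have hc0 : 0 ≤ c := le_max_left _ _
  have hclam : c < lam := by
    rw [hc]; rcases max_cases 0 (max ρ2 ρ3) with ⟨h,_⟩|⟨h,_⟩ <;> rw [h]
    · exact hlam
    · rcases max_cases ρ2 ρ3 with ⟨h',_⟩|⟨h',_⟩ <;> rw [h'] <;> assumption
  obtain ⟨k, hk, hsmall⟩ := odd_pow_small c lam hc0 hclam
  have hk0 : k ≠ 0 := by rintro rfl; simp [Nat.odd_iff] at hk
  have e2 : ρ2^k ≤ c^k := by
    rcases le_or_gt 0 ρ2 with h|h
    · exact pow_le_pow_left₀ h (le_trans (le_max_left _ _) (le_max_right _ _)) k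
    · exact le_trans (hk.pow_neg h).le (pow_nonneg hc0 k)
  have e3 : ρ3^k ≤ c^k := by
    rcases le_or_gt 0 ρ3 with h|h
    · exact pow_le_pow_left₀ h (le_trans (le_max_right _ _) (le_max_right _ _)) k
    · exact le_trans (hk.pow_neg h).le (pow_nonneg hc0 k)
  have e1 : ρ1^k ≤ -(lam^k) := by
    have h1' : lam ≤ -ρ1 := by linarith
    have := pow_le_pow_left₀ hlam.le h1' k
    have hodd : ρ1^k = -((-ρ1)^k) := by
      rw [hk.neg_pow]; ring
    rw [hodd]; linarith
  have := hT k hk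
  nlinarith [hsmall]

section
open Complex
lemma re_pow (w : ℂ) (k : ℕ) :
    (w^k).re = (‖w‖)^k * Real.cos (k * Complex.arg w) := by
  conv_lhs => rw [← Complex.norm_mul_exp_arg_mul_I w]
  rw [mul_pow, ← Complex.exp_nat_mul, ← Complex.ofReal_pow]
  have : (k : ℂ) * (↑(Complex.arg w) * I) = (↑((k : ℝ) * Complex.arg w) : ℂ) * I := by
    push_cast; ring
  rw [this, Complex.re_ofReal_mul, Complex.exp_ofReal_mul_I_re]

end

open Matrix Polynomial Complex

/-- The spectral radius of a real square matrix: the maximum modulus of its complex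
eigenvalues (i.e. of the complex roots of its characteristic polynomial). -/
noncomputable def specRad {d : ℕ} (A : Matrix (Fin d) (Fin d) ℝ) : ℝ :=
  sSup {r : ℝ | ∃ z : ℂ, (A.map Complex.ofReal).charpoly.IsRoot z ∧ r = ‖z‖}

theorem stmt7 (S : Matrix (Fin 3) (Fin 3) ℝ)
    (hSnonneg : ∀ i j, 0 ≤ S i j)
    (hirr : ∀ i j, ∃ k : ℕ, 1 ≤ k ∧ 0 < (S ^ k) i j)
    (lam : ℝ) (hlam : 0 < lam)
    (hdiag : ∀ i, S i i < lam) :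
    specRad S < lam ↔ 0 < (lam • (1 : Matrix (Fin 3) (Fin 3) ℝ) - S).det := by
  -- abbreviations
  set e1 : ℝ := E1' S with he1
  set e2 : ℝ := E2' S with he2
  set e3 : ℝ := E3' S with he3
  set P : ℝ → ℝ := fun t => t^3 - e1*t^2 + e2*t - e3 with hP
  have hdetP : ∀ t : ℝ, (t • (1 : Matrix (Fin 3) (Fin 3) ℝ) - S).det = P t := fun t => det3 S t
  obtain ⟨r, w, v, hfac, hcase⟩ := cubic_factor e1 e2 e3
  -- root characterization of the complex charpoly
  have hmapE1 : E1' (S.map Complex.ofReal) = (e1 : ℂ) := by simp [E1', he1]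
  have hmapE2 : E2' (S.map Complex.ofReal) = (e2 : ℂ) := by
    simp only [E2', Matrix.map_apply, he2]; push_cast; ring
  have hmapE3 : E3' (S.map Complex.ofReal) = (e3 : ℂ) := by
    simp only [E3', Matrix.map_apply, he3]; push_cast; ring
  have hroot : ∀ z : ℂ, (S.map Complex.ofReal).charpoly.IsRoot z ↔ (z = r ∨ z = w ∨ z = v) := by
    intro z
    rw [Polynomial.IsRoot, charpoly_eval', det3, hmapE1, hmapE2, hmapE3, hfac z]
    constructor
    · intro h
      rcases mul_eq_zero.mp h with h' | h'
      · rcases mul_eq_zero.mp h' with h'' | h''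
        · exact Or.inl (sub_eq_zero.mp h'')
        · exact Or.inr (Or.inl (sub_eq_zero.mp h''))
      · exact Or.inr (Or.inr (sub_eq_zero.mp h'))
    · rintro (rfl | rfl | rfl) <;> simp
  -- the root-modulus set
  have hsetEq : {x : ℝ | ∃ z : ℂ, (S.map Complex.ofReal).charpoly.IsRoot z ∧ x = ‖z‖}
      = {‖(r:ℂ)‖, ‖w‖, ‖v‖} := by
    ext x
    constructor
    · rintro ⟨z, hz, rfl⟩
      rcases (hroot z).mp hz with rfl | rfl | rfl
      · exact Or.inl rfl
      · exact Or.inr (Or.inl rfl)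
      · exact Or.inr (Or.inr rfl)
    · rintro (rfl | rfl | rfl)
      · exact ⟨r, (hroot r).mpr (Or.inl rfl), rfl⟩
      · exact ⟨w, (hroot w).mpr (Or.inr (Or.inl rfl)), rfl⟩
      · exact ⟨v, (hroot v).mpr (Or.inr (Or.inr rfl)), rfl⟩
  -- real roots are < lam when 0 < P lam ; always : 0 < P lam → 0 < P t for t ≥ lam
  have hmono : 0 < P lam → ∀ t : ℝ, lam ≤ t → 0 < P t := by
    intro hPl t ht
    have key := mono3 (S 0 0) (S 1 1) (S 2 2) (S 0 1 * S 1 0) (S 0 2 * S 2 0) (S 1 2 * S 2 1)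
      (S 0 1 * S 1 2 * S 2 0 + S 0 2 * S 1 0 * S 2 1) lam t
      (mul_nonneg (hSnonneg 0 1) (hSnonneg 1 0)) (mul_nonneg (hSnonneg 0 2) (hSnonneg 2 0))
      (mul_nonneg (hSnonneg 1 2) (hSnonneg 2 1))
      (add_nonneg (mul_nonneg (mul_nonneg (hSnonneg 0 1) (hSnonneg 1 2)) (hSnonneg 2 0))
        (mul_nonneg (mul_nonneg (hSnonneg 0 2) (hSnonneg 1 0)) (hSnonneg 2 1)))
      (hdiag 0) (hdiag 1) (hdiag 2) ht
    have hexp : ∀ s : ℝ, P s = (s - S 0 0)*(s - S 1 1)*(s - S 2 2)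
        - ((S 0 1 * S 1 0)*(s - S 2 2) + (S 0 2 * S 2 0)*(s - S 1 1) + (S 1 2 * S 2 1)*(s - S 0 0)
          + (S 0 1 * S 1 2 * S 2 0 + S 0 2 * S 1 0 * S 2 1)) := by
      intro s
      rw [hP]; simp only [he1, he2, he3, E1', E2', E3']; ring
    rw [hexp] at hPl ⊢
    exact key hPl
  -- a real number ≥ lam that is a root of the complex cubic contradicts 0 < P lam
  have hrealroot : ∀ x : ℝ, ((x:ℂ) = r ∨ (x:ℂ) = w ∨ (x:ℂ) = v) → P x = 0 := by
    intro x hx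
    have hzero : (x:ℂ)^3 - (e1:ℂ)*(x:ℂ)^2 + (e2:ℂ)*(x:ℂ) - (e3:ℂ) = 0 := by
      rw [hfac x]
      rcases hx with h|h|h <;> rw [h] <;> ring
    have : ((P x : ℝ) : ℂ) = 0 := by rw [hP]; push_cast; push_cast at hzero; linear_combination hzero
    exact_mod_cast this
  constructor
  · -- forward : specRad < lam → 0 < det
    intro hsr
    rw [hdetP]
    -- each root modulus < lam
    have hbdd : BddAbove {x : ℝ | ∃ z : ℂ, (S.map Complex.ofReal).charpoly.IsRoot z ∧ x = ‖z‖} := by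
      rw [hsetEq]; exact (Set.toFinite _).bddAbove
    have habs : ∀ z : ℂ, (z = r ∨ z = w ∨ z = v) → ‖z‖ < lam := by
      intro z hz
      have hmem : ‖z‖ ∈ {x : ℝ | ∃ z' : ℂ, (S.map Complex.ofReal).charpoly.IsRoot z' ∧ x = ‖z'‖} :=
        ⟨z, (hroot z).mpr hz, rfl⟩
      exact lt_of_le_of_lt (le_csSup hbdd hmem) hsr
    -- no real root ≥ lam
    have hnoroot : ∀ t : ℝ, lam ≤ t → P t ≠ 0 := by
      intro t ht hPt
      have hzero : (t:ℂ)^3 - (e1:ℂ)*(t:ℂ)^2 + (e2:ℂ)*(t:ℂ) - (e3:ℂ) = 0 := by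
        have : ((P t : ℝ) : ℂ) = 0 := by exact_mod_cast hPt
        rw [hP] at this; push_cast at this; linear_combination this
      rw [hfac t] at hzero
      have ht' : ∃ z : ℂ, (z = r ∨ z = w ∨ z = v) ∧ (t:ℂ) = z := by
        rcases mul_eq_zero.mp hzero with h' | h'
        · rcases mul_eq_zero.mp h' with h'' | h''
          · exact ⟨r, Or.inl rfl, sub_eq_zero.mp h''⟩
          · exact ⟨w, Or.inr (Or.inl rfl), sub_eq_zero.mp h''⟩
        · exact ⟨v, Or.inr (Or.inr rfl), sub_eq_zero.mp h'⟩
      obtain ⟨z, hz, htz⟩ := ht'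
      have h1 : ‖(t:ℂ)‖ < lam := htz ▸ habs z hz
      rw [Complex.norm_real, Real.norm_eq_abs] at h1
      have : t ≤ |t| := le_abs_self t
      linarith
    -- IVT from a large positive value
    set Mb : ℝ := max lam (1 + |e1| + |e2| + |e3|) with hMb
    have hPM : 0 < P Mb := by
      rw [hP]; exact cubic_big e1 e2 e3 Mb (le_max_right _ _)
    rcases lt_trichotomy (P lam) 0 with hneg | hzero | hpos
    · exfalso
      have hcont : Continuous P := by rw [hP]; fun_prop
      have := intermediate_value_Icc (le_max_left lam _ : lam ≤ Mb) hcont.continuousOn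
        (show (0:ℝ) ∈ Set.Icc (P lam) (P Mb) from ⟨hneg.le, hPM.le⟩)
      obtain ⟨x, hx, hx0⟩ := this
      exact hnoroot x hx.1 hx0
    · exact absurd hzero (hnoroot lam le_rfl)
    · exact hpos
  · -- backward : 0 < det → specRad < lam
    intro hdet
    rw [hdetP] at hdet
    have hPl : 0 < P lam := hdet
    -- no real root ≥ lam (in particular any real root is < lam)
    have hnoge : ∀ x : ℝ, ((x:ℂ) = r ∨ (x:ℂ) = w ∨ (x:ℂ) = v) → x < lam := by
      intro x hx
      by_contra hcon
      push_neg at hcon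
      exact absurd (hrealroot x hx) (ne_of_gt (hmono hPl x hcon))
    -- traces
    set T : ℕ → ℝ := fun k => (S^k) 0 0 + (S^k) 1 1 + (S^k) 2 2 with hT
    have hTnonneg : ∀ k, 0 ≤ T k := by
      intro k
      have := pow_entry_nonneg S hSnonneg k
      have h0 := this 0 0; have h1 := this 1 1; have h2 := this 2 2
      rw [hT]; dsimp only; linarith
    -- Vieta
    have hv1 : (r:ℂ) + w + v = (e1:ℂ) := by linear_combination (hfac 1)/2 + (hfac (-1))/2 - hfac 0
    have hv2 : (r:ℂ)*w + (r:ℂ)*v + w*v = (e2:ℂ) := by linear_combination -(hfac 1)/2 + (hfac (-1))/2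
    have hv3 : (r:ℂ)*w*v = (e3:ℂ) := by linear_combination hfac 0
    -- trace identity
    have hTQ : ∀ k : ℕ, ((T k : ℝ) : ℂ) = (r:ℂ)^k + w^k + v^k := by
      have hmk : ∀ k, S^(k+3) = e1 • S^(k+2) - e2 • S^(k+1) + e3 • S^k := by
        intro k
        have h3 := ch3 S
        rw [← he1, ← he2, ← he3] at h3
        calc S^(k+3) = S^k * S^3 := by rw [← pow_add]
          _ = S^k * (e1 • S^2 - e2 • S + e3 • (1 : Matrix (Fin 3) (Fin 3) ℝ)) := by rw [h3]
          _ = e1 • S^(k+2) - e2 • S^(k+1) + e3 • S^k := by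
              rw [mul_add, mul_sub, mul_smul_comm, mul_smul_comm, mul_smul_comm,
                Matrix.mul_one, ← pow_add, ← pow_succ]
      have hTrec : ∀ k, T (k+3) = e1 * T (k+2) - e2 * T (k+1) + e3 * T k := by
        intro k
        have := hmk k
        rw [hT]
        dsimp only
        rw [this]
        simp only [Matrix.sub_apply, Matrix.add_apply, Matrix.smul_apply, smul_eq_mul]
        ring
      have hT0 : T 0 = 3 := by rw [hT]; simp [Matrix.one_apply]; norm_num
      have hT1 : T 1 = e1 := by rw [hT, he1]; simp [E1']
      have hT2 : T 2 = e1^2 - 2*e2 := by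
        rw [hT, he1, he2]
        simp only [pow_two, Matrix.mul_apply, Fin.sum_univ_three, E1', E2']
        ring
      apply seq_eq (e1:ℂ) (e2:ℂ) (e3:ℂ) (fun k => ((T k : ℝ) : ℂ)) (fun k => (r:ℂ)^k + w^k + v^k)
      · intro k
        rw [hTrec k]; push_cast; ring
      · intro k
        have hr3 : (r:ℂ)^3 = (e1:ℂ)*(r:ℂ)^2 - (e2:ℂ)*(r:ℂ) + (e3:ℂ) := by
          have := hfac r; linear_combination this
        have hw3 : w^3 = (e1:ℂ)*w^2 - (e2:ℂ)*w + (e3:ℂ) := by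
          have := hfac w; linear_combination this
        have hv3' : v^3 = (e1:ℂ)*v^2 - (e2:ℂ)*v + (e3:ℂ) := by
          have := hfac v; linear_combination this
        have er : (r:ℂ)^(k+3) = (e1:ℂ)*(r:ℂ)^(k+2) - (e2:ℂ)*(r:ℂ)^(k+1) + (e3:ℂ)*(r:ℂ)^k := by
          calc (r:ℂ)^(k+3) = (r:ℂ)^k * (r:ℂ)^3 := by rw [← pow_add]
            _ = (r:ℂ)^k * ((e1:ℂ)*(r:ℂ)^2 - (e2:ℂ)*(r:ℂ) + (e3:ℂ)) := by rw [hr3]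
            _ = (e1:ℂ)*(r:ℂ)^(k+2) - (e2:ℂ)*(r:ℂ)^(k+1) + (e3:ℂ)*(r:ℂ)^k := by ring
        have ew : w^(k+3) = (e1:ℂ)*w^(k+2) - (e2:ℂ)*w^(k+1) + (e3:ℂ)*w^k := by
          calc w^(k+3) = w^k * w^3 := by rw [← pow_add]
            _ = w^k * ((e1:ℂ)*w^2 - (e2:ℂ)*w + (e3:ℂ)) := by rw [hw3]
            _ = (e1:ℂ)*w^(k+2) - (e2:ℂ)*w^(k+1) + (e3:ℂ)*w^k := by ring
        have ev : v^(k+3) = (e1:ℂ)*v^(k+2) - (e2:ℂ)*v^(k+1) + (e3:ℂ)*v^k := by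
          calc v^(k+3) = v^k * v^3 := by rw [← pow_add]
            _ = v^k * ((e1:ℂ)*v^2 - (e2:ℂ)*v + (e3:ℂ)) := by rw [hv3']
            _ = (e1:ℂ)*v^(k+2) - (e2:ℂ)*v^(k+1) + (e3:ℂ)*v^k := by ring
        rw [er, ew, ev]; ring
      · rw [hT0]; push_cast; ring
      · simp only [pow_one]; rw [hT1]; push_cast; linear_combination -hv1
      · rw [hT2]; push_cast
        linear_combination -(((r:ℂ) + w + v + (e1:ℂ))*hv1) + 2*hv2
    -- now show all root moduli < lam
    have hrlam : r < lam := hnoge r (Or.inl rfl)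
    have habslt : ‖(r:ℂ)‖ < lam ∧ ‖w‖ < lam ∧ ‖v‖ < lam := by
      rcases hcase with ⟨hwim, hvim⟩ | ⟨hvconj, hwim⟩
      · -- all roots real
        have hw : ((w.re : ℝ) : ℂ) = w := by apply Complex.ext <;> simp [hwim]
        have hv : ((v.re : ℝ) : ℂ) = v := by apply Complex.ext <;> simp [hvim]
        have hTk : ∀ k : ℕ, T k = r^k + w.re^k + v.re^k := by
          intro k
          have h := hTQ k
          rw [← hw, ← hv] at h
          have h2 : ((T k : ℝ) : ℂ) = (((r^k + w.re^k + v.re^k : ℝ)) : ℂ) := by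
            rw [h]; push_cast; ring
          exact_mod_cast h2
        have hodd : ∀ k : ℕ, Odd k → 0 ≤ r^k + w.re^k + v.re^k := by
          intro k hk; rw [← hTk k]; exact hTnonneg k
        have hw2 : w.re < lam := hnoge w.re (Or.inr (Or.inl hw))
        have hv2 : v.re < lam := hnoge v.re (Or.inr (Or.inr hv))
        have hlow1 : -lam < r := allreal_bound r w.re v.re lam hlam hodd hrlam hw2 hv2
        have hlow2 : -lam < w.re := allreal_bound w.re r v.re lam hlam
          (fun k hk => by have := hodd k hk; linarith) hw2 hrlam hv2
        have hlow3 : -lam < v.re := allreal_bound v.re r w.re lam hlam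
          (fun k hk => by have := hodd k hk; linarith) hv2 hrlam hw2
        refine ⟨?_, ?_, ?_⟩
        · rw [Complex.norm_real, Real.norm_eq_abs]; exact abs_lt.mpr ⟨hlow1, hrlam⟩
        · rw [← hw, Complex.norm_real, Real.norm_eq_abs]; exact abs_lt.mpr ⟨hlow2, hw2⟩
        · rw [← hv, Complex.norm_real, Real.norm_eq_abs]; exact abs_lt.mpr ⟨hlow3, hv2⟩
      · -- conjugate pair
        set ρ : ℝ := ‖w‖ with hρ
        have hρv : ‖v‖ = ρ := by rw [hvconj, Complex.norm_conj]
        have hw0 : w ≠ 0 := by intro h; rw [h] at hwim; simp at hwim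
        have hρpos : 0 < ρ := by rw [hρ]; exact norm_pos_iff.mpr hw0
        set θ : ℝ := Complex.arg w with hθ
        have hθpos : 0 < θ := by
          rcases lt_or_eq_of_le (Complex.arg_nonneg_iff.mpr hwim.le) with h | h
          · exact h
          · exfalso
            have := Complex.arg_eq_zero_iff.mp h.symm
            exact absurd this.2 (ne_of_gt hwim)
        have hθpi : θ ≤ Real.pi := Complex.arg_le_pi w
        have hTk : ∀ k : ℕ, T k = r^k + 2*(ρ^k * Real.cos (k*θ)) := by
          intro k
          have h := hTQ k
          rw [hvconj, ← map_pow] at h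
          have h2 := congrArg Complex.re h
          simp only [Complex.add_re, Complex.conj_re, ← Complex.ofReal_pow,
            Complex.ofReal_re] at h2
          rw [re_pow w k] at h2
          rw [h2, ← hρ, ← hθ]
          ring
        have hρlam : ρ < lam := by
          by_contra hcon
          push_neg at hcon
          rcases lt_trichotomy |r| ρ with hlt | heq | hgt
          · obtain ⟨k, hk1, hkcos⟩ := cos_hit_neg θ hθpos hθpi
            have hrk : r^k ≤ |r|^k := by
              calc r^k ≤ |r^k| := le_abs_self _
                _ = |r|^k := abs_pow r k
            have hpow : |r|^k < ρ^k := by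
              apply pow_lt_pow_left₀ hlt (abs_nonneg r)
              omega
            have hple : (0:ℝ) ≤ ρ^k := (pow_pos hρpos k).le
            have := hTnonneg k
            rw [hTk k] at this
            nlinarith [mul_le_mul_of_nonneg_left hkcos hple]
          · have hrneg : r = -ρ := by
              rcases abs_cases r with ⟨h1, _⟩ | ⟨h1, _⟩
              · exfalso; linarith
              · linarith
            obtain ⟨k, hkodd, hkcos⟩ := cos_hit_half θ hθpos hθpi
            have hple : (0:ℝ) < ρ^k := pow_pos hρpos k
            have hrk : r^k = -(ρ^k) := by rw [hrneg, hkodd.neg_pow]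
            have := hTnonneg k
            rw [hTk k, hrk] at this
            nlinarith [mul_lt_mul_of_pos_left hkcos hple]
          · have hr' : r = -|r| := by
              rcases abs_cases r with ⟨h1, _⟩ | ⟨h1, _⟩
              · exfalso; linarith
              · linarith
            obtain ⟨k, hkodd, hksmall⟩ := odd_pow_small ρ |r| hρpos.le hgt
            have hcos1 : Real.cos (k*θ) ≤ 1 := Real.cos_le_one _
            have hple : (0:ℝ) ≤ ρ^k := (pow_pos hρpos k).le
            have hrk : r^k = -(|r|^k) := by
              conv_lhs => rw [hr']
              rw [hkodd.neg_pow]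
            have := hTnonneg k
            rw [hTk k, hrk] at this
            nlinarith [mul_le_mul_of_nonneg_left hcos1 hple]
        have hrlow : -lam < r := by
          by_contra hcon
          push_neg at hcon
          have habsr : |r| = -r := abs_of_nonpos (by linarith)
          have hgt : ρ < |r| := by rw [habsr]; linarith
          obtain ⟨k, hkodd, hksmall⟩ := odd_pow_small ρ |r| hρpos.le hgt
          have hcos1 : Real.cos (k*θ) ≤ 1 := Real.cos_le_one _
          have hple : (0:ℝ) ≤ ρ^k := (pow_pos hρpos k).le
          have hr'' : r = -|r| := by rw [habsr]; ring
          have hrk : r^k = -(|r|^k) := by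
            conv_lhs => rw [hr'']
            rw [hkodd.neg_pow]
          have := hTnonneg k
          rw [hTk k, hrk] at this
          nlinarith [mul_le_mul_of_nonneg_left hcos1 hple]
        exact ⟨by rw [Complex.norm_real, Real.norm_eq_abs]; exact abs_lt.mpr ⟨hrlow, hrlam⟩,
          hρlam, by rw [hρv]; exact hρlam⟩
    -- conclude
    have : specRad S ≤ max (‖(r:ℂ)‖) (max (‖w‖) (‖v‖)) := by
      apply Real.sSup_le
      · rintro x ⟨z, hz, rfl⟩
        rcases (hroot z).mp hz with rfl | rfl | rfl
        · exact le_max_left _ _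
        · exact le_trans (le_max_left _ _) (le_max_right _ _)
        · exact le_trans (le_max_right _ _) (le_max_right _ _)
      · positivity
    have hmax : max (‖(r:ℂ)‖) (max (‖w‖) (‖v‖)) < lam := by
      rw [max_lt_iff, max_lt_iff]
      exact ⟨habslt.1, habslt.2.1, habslt.2.2⟩
    exact lt_of_le_of_lt this hmax
end

section
/- Let n ≥ 1, 0 < μ ≤ L, Γ > 1, let W ∈ ℝ^{n×n} be nonnegative doubly stochastic and let ρ_w ∈ (0,1) be the operator 2-norm of W − (1/n)𝟙𝟙ᵀ. Suppose 0 < α ≤ min{ (1−ρ_w²)/(12ρ_w L), (1−ρ_w²)²/(2√Γ L · max{6ρ_w‖W−I‖_F, 1−ρ_w²}), ((1−ρ_w²)/(3ρ_w^{2/3}L)) · (μ²(Γ−1)/(L²Γ(Γ+1)))^{1/3} }. Then β := (1−ρ_w²)/(2ρ_w²) − 4αL − 2α²L² > 0 and the spectral radius of the matrix A satisfies ρ(A) < 1, where A is the 3×3 matrix A = [[1−αμ, (αL²/(μn))(1+αμ), 0], [0, (1+ρ_w²)/2, α²(1+ρ_w²)ρ_w²/(1−ρ_w²)], [2αnL³,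 (1/β + 2)‖W−I‖_F²L² + 3αL³, (1+ρ_w²)/2]]. -/
open Matrix

lemma my_eval_charpoly {d : ℕ} (M : Matrix (Fin d) (Fin d) ℂ) (z : ℂ) :
    M.charpoly.eval z = (z • (1 : Matrix (Fin d) (Fin d) ℂ) - M).det := by
  rw [Matrix.charpoly, ← Polynomial.coe_evalRingHom, RingHom.map_det]
  congr 1
  ext i j
  by_cases h : i = j <;>
    simp [Matrix.charmatrix_apply, Matrix.one_apply, h, Matrix.smul_apply, Matrix.sub_apply,
      Matrix.diagonal_apply]

lemma perron {d : ℕ} (hd : 0 < d) (A : Matrix (Fin d) (Fin d) ℝ)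
    (hA : ∀ i j, 0 ≤ A i j) (v : Fin d → ℝ) (hv : ∀ i, 0 < v i)
    (hlt : ∀ i, A.mulVec v i < v i) : specRad A < 1 := by
  have hne : (Finset.univ : Finset (Fin d)).Nonempty := by
    simpa [Finset.univ_nonempty_iff] using Fin.pos_iff_nonempty.mp hd
  set c : ℝ := Finset.sup' Finset.univ hne (fun i => A.mulVec v i / v i) with hc
  have hclt : c < 1 := by
    rw [hc, Finset.sup'_lt_iff]
    intro i _
    rw [div_lt_one (hv i)]
    exact hlt i
  have hcb : ∀ i, A.mulVec v i ≤ c * v i := by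
    intro i
    have h := Finset.le_sup' (fun i => A.mulVec v i / v i) (Finset.mem_univ i)
    rw [div_le_iff₀ (hv i)] at h
    calc A.mulVec v i ≤ (Finset.univ.sup' hne fun i => (A.mulVec v) i / v i) * v i := h
    _ = c * v i := by rw [hc]
  have hc0 : 0 ≤ c := by
    obtain ⟨i, _⟩ := hne
    refine le_trans ?_ (Finset.le_sup' (fun i => A.mulVec v i / v i) (Finset.mem_univ i))
    apply div_nonneg _ (hv i).le
    simp only [Matrix.mulVec, dotProduct]
    exact Finset.sum_nonneg fun j _ => mul_nonneg (hA i j) (hv j).le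
  have key : ∀ z : ℂ, (A.map Complex.ofReal).charpoly.IsRoot z → ‖z‖ ≤ c := by
    intro z hz
    have hdet : (z • (1 : Matrix (Fin d) (Fin d) ℂ) - A.map Complex.ofReal).det = 0 := by
      rw [← my_eval_charpoly]; exact hz
    obtain ⟨x, hx0, hx⟩ := (Matrix.exists_mulVec_eq_zero_iff).2 hdet
    have heig : ∀ i, z * x i = ∑ j, (A i j : ℂ) * x j := by
      intro i
      have h := congrFun hx i
      simp [Matrix.mulVec, Matrix.sub_apply, Matrix.smul_apply, Matrix.one_apply, dotProduct,
        sub_mul, Finset.sum_sub_distrib, Finset.mul_sum, ite_mul] at h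
      exact sub_eq_zero.mp h
    -- pick index maximizing |x i| / v i
    obtain ⟨i, -, hmax⟩ := Finset.exists_max_image (Finset.univ : Finset (Fin d))
      (fun j => ‖x j‖ / v j) hne
    have hxi : 0 < ‖x i‖ := by
      by_contra hcon
      push_neg at hcon
      have hxi0 : ‖x i‖ = 0 := le_antisymm hcon (norm_nonneg _)
      apply hx0
      funext j
      have := hmax j (Finset.mem_univ j)
      rw [hxi0] at this
      simp only [zero_div] at this
      have h0 : ‖x j‖ ≤ 0 := by
        have := (div_le_iff₀ (hv j)).mp this
        simpa using this
      simpa using le_antisymm h0 (norm_nonneg _)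
    have hbound : ∀ j, ‖x j‖ ≤ ‖x i‖ / v i * v j := by
      intro j
      have := hmax j (Finset.mem_univ j)
      calc ‖x j‖ = ‖x j‖ / v j * v j := (div_mul_cancel₀ _ (hv j).ne').symm
      _ ≤ ‖x i‖ / v i * v j := mul_le_mul_of_nonneg_right this (hv j).le
    have h1 : ‖z‖ * ‖x i‖ ≤ c * ‖x i‖ := by
      calc ‖z‖ * ‖x i‖ = ‖z * x i‖ := (norm_mul _ _).symm
      _ = ‖∑ j, (A i j : ℂ) * x j‖ := by rw [heig i]
      _ ≤ ∑ j, ‖(A i j : ℂ) * x j‖ := norm_sum_le _ _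
      _ = ∑ j, A i j * ‖x j‖ := by
          refine Finset.sum_congr rfl fun j _ => ?_
          rw [norm_mul, Complex.norm_real, Real.norm_eq_abs, abs_of_nonneg (hA i j)]
      _ ≤ ∑ j, A i j * (‖x i‖ / v i * v j) :=
          Finset.sum_le_sum fun j _ => mul_le_mul_of_nonneg_left (hbound j) (hA i j)
      _ = ‖x i‖ / v i * A.mulVec v i := by
          simp only [Matrix.mulVec, dotProduct, Finset.mul_sum]
          exact Finset.sum_congr rfl fun j _ => by ring
      _ ≤ ‖x i‖ / v i * (c * v i) :=
          mul_le_mul_of_nonneg_left (hcb i) (div_nonneg (norm_nonneg _) (hv i).le)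
      _ = c * ‖x i‖ := by
          rw [show ‖x i‖ / v i * (c * v i)
              = c * (‖x i‖ / v i * v i) by ring, div_mul_cancel₀ _ (hv i).ne']
    exact le_of_mul_le_mul_right h1 hxi
  have : specRad A ≤ c := by
    apply Real.sSup_le _ hc0
    rintro r ⟨z, hz, rfl⟩
    exact key z hz
  linarith

set_option maxHeartbeats 4000000 in
theorem stmt8 (n : ℕ) (hn : 1 ≤ n) (μ L Γ : ℝ)
    (hμ : 0 < μ) (hμL : μ ≤ L) (hΓ : 1 < Γ)
    (W : Matrix (Fin n) (Fin n) ℝ)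
    (hWnonneg : ∀ i j, 0 ≤ W i j)
    (hWrow : W.mulVec (fun _ => (1 : ℝ)) = fun _ => (1 : ℝ))
    (hWcol : Matrix.vecMul (fun _ => (1 : ℝ)) W = fun _ => (1 : ℝ))
    (ρw : ℝ) (hρw : ρw = l2OpNorm (W - (n : ℝ)⁻¹ • Matrix.of (fun _ _ : Fin n => (1 : ℝ))))
    (hρw0 : 0 < ρw) (hρw1 : ρw < 1)
    (α : ℝ) (hα0 : 0 < α)
    (hα : α ≤ min (min ((1 - ρw ^ 2) / (12 * ρw * L))
        ((1 - ρw ^ 2) ^ 2 /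
          (2 * Real.sqrt Γ * L * max (6 * ρw * frobNorm (W - 1)) (1 - ρw ^ 2))))
        (((1 - ρw ^ 2) / (3 * ρw ^ ((2 : ℝ) / 3) * L)) *
          (μ ^ 2 / L ^ 2 * ((Γ - 1) / (Γ * (Γ + 1)))) ^ ((1 : ℝ) / 3))) :
    0 < (1 - ρw ^ 2) / (2 * ρw ^ 2) - 4 * α * L - 2 * α ^ 2 * L ^ 2 ∧
      specRad
        !![1 - α * μ, α * L ^ 2 / (μ * n) * (1 + α * μ), 0;
           0, (1 + ρw ^ 2) / 2, α ^ 2 * ((1 + ρw ^ 2) * ρw ^ 2 / (1 - ρw ^ 2));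
           2 * α * n * L ^ 3,
             (1 / ((1 - ρw ^ 2) / (2 * ρw ^ 2) - 4 * α * L - 2 * α ^ 2 * L ^ 2) + 2) *
                 frobNorm (W - 1) ^ 2 * L ^ 2 + 3 * α * L ^ 3,
             (1 + ρw ^ 2) / 2] < 1 := by
  have hL : 0 < L := lt_of_lt_of_le hμ hμL
  set K : ℝ := frobNorm (W - 1) with hK_def
  have hK : 0 ≤ K := Real.sqrt_nonneg _
  set u : ℝ := 1 - ρw ^ 2 with hu_def
  have hu : 0 < u := by nlinarith only [hρw0, hρw1, hu_def]
  have hu1 : u < 1 := by nlinarith only [hρw0, hρw1, hu_def]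
  have hΓ0 : (0:ℝ) < Γ := by linarith
  have hn0 : (0:ℝ) < (n:ℝ) := by exact_mod_cast Nat.pos_of_ne_zero (by omega)
  -- extract the three bounds
  have hA : α ≤ u / (12 * ρw * L) := le_trans hα (le_trans (min_le_left _ _) (min_le_left _ _))
  have hB : α ≤ u ^ 2 / (2 * Real.sqrt Γ * L * max (6 * ρw * K) u) :=
    le_trans hα (le_trans (min_le_left _ _) (min_le_right _ _))
  have hC : α ≤ (u / (3 * ρw ^ ((2 : ℝ) / 3) * L)) *
      (μ ^ 2 / L ^ 2 * ((Γ - 1) / (Γ * (Γ + 1)))) ^ ((1 : ℝ) / 3) :=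
    le_trans hα (min_le_right _ _)
  -- from hA
  have hA1 : α * (12 * ρw * L) ≤ u := (le_div_iff₀ (by positivity)).mp hA
  -- from hB
  have hsΓ : (1:ℝ) ≤ Real.sqrt Γ := by
    rw [show (1:ℝ) = Real.sqrt 1 by simp]
    exact Real.sqrt_le_sqrt (by linarith)
  have hsΓ0 : 0 < Real.sqrt Γ := by linarith
  have hmaxpos : 0 < max (6 * ρw * K) u := lt_of_lt_of_le hu (le_max_right _ _)
  have hB1 : α * (2 * Real.sqrt Γ * L * max (6 * ρw * K) u) ≤ u ^ 2 :=
    (le_div_iff₀ (by positivity)).mp hB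
  have h2αL : 2 * α * L ≤ u := by
    have h1 : α * (2 * Real.sqrt Γ * L * u) ≤ α * (2 * Real.sqrt Γ * L * max (6 * ρw * K) u) := by
      apply mul_le_mul_of_nonneg_left _ hα0.le
      apply mul_le_mul_of_nonneg_left (le_max_right _ _) (by positivity)
    have h2 : (2 * α * L) * u ≤ (2 * α * L) * (Real.sqrt Γ * u) := by
      apply mul_le_mul_of_nonneg_left _ (by positivity)
      nlinarith only [hsΓ, hu, mul_nonneg (by linarith only [hsΓ] : (0:ℝ) ≤ Real.sqrt Γ - 1) hu.le]
    have h3 : (2 * α * L) * (Real.sqrt Γ * u) = α * (2 * Real.sqrt Γ * L * u) := by ring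
    have h4' := le_trans (le_trans (h3 ▸ h2) h1) hB1
    have h5' := le_of_mul_le_mul_right (by linarith only [h4'] : (2*α*L) * u ≤ u * u) hu
    linarith only [h5']
  have hαL : α * L ≤ 1/2 := by linarith only [h2αL, hu1]
  have hαμ : α * μ ≤ 1/2 := by linarith only [hαL, mul_le_mul_of_nonneg_left hμL hα0.le]
  have hB2 : α * (2 * Real.sqrt Γ * L * (6 * ρw * K)) ≤ u ^ 2 := by
    refine le_trans ?_ hB1
    apply mul_le_mul_of_nonneg_left _ hα0.le
    apply mul_le_mul_of_nonneg_left (le_max_left _ _) (by positivity)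
  have hsq : Real.sqrt Γ * Real.sqrt Γ = Γ := Real.mul_self_sqrt (by linarith)
  have G2 : 144 * Γ * α ^ 2 * L ^ 2 * ρw ^ 2 * K ^ 2 ≤ u ^ 4 := by
    have h0 : 0 ≤ α * (2 * Real.sqrt Γ * L * (6 * ρw * K)) := by positivity
    have h5 := mul_self_le_mul_self h0 hB2
    have e : (α * (2 * Real.sqrt Γ * L * (6 * ρw * K))) * (α * (2 * Real.sqrt Γ * L * (6 * ρw * K)))
        = 144 * Γ * α ^ 2 * L ^ 2 * ρw ^ 2 * K ^ 2 := by
      linear_combination (144 * α ^ 2 * L ^ 2 * ρw ^ 2 * K ^ 2) * hsq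
    calc 144 * Γ * α ^ 2 * L ^ 2 * ρw ^ 2 * K ^ 2 = _ := e.symm
    _ ≤ u ^ 2 * u ^ 2 := h5
    _ = u ^ 4 := by ring
  -- from hC
  have hρ23 : (0:ℝ) < ρw ^ ((2:ℝ)/3) := Real.rpow_pos_of_pos hρw0 _
  have hg0 : 0 ≤ (Γ - 1) / (Γ * (Γ + 1)) := div_nonneg (by linarith) (by positivity)
  have hX0 : (0:ℝ) ≤ μ ^ 2 / L ^ 2 * ((Γ - 1) / (Γ * (Γ + 1))) :=
    mul_nonneg (by positivity) hg0
  have hcube : α ^ 3 ≤ ((u / (3 * ρw ^ ((2 : ℝ) / 3) * L)) *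
      (μ ^ 2 / L ^ 2 * ((Γ - 1) / (Γ * (Γ + 1)))) ^ ((1 : ℝ) / 3)) ^ 3 :=
    pow_le_pow_left₀ hα0.le hC 3
  have hX3 : ((μ ^ 2 / L ^ 2 * ((Γ - 1) / (Γ * (Γ + 1)))) ^ ((1 : ℝ) / 3)) ^ (3:ℕ)
      = μ ^ 2 / L ^ 2 * ((Γ - 1) / (Γ * (Γ + 1))) := by
    rw [← Real.rpow_natCast (_ ^ ((1:ℝ)/3)) 3, ← Real.rpow_mul hX0]
    norm_num
  have hρ3 : (ρw ^ ((2:ℝ)/3)) ^ (3:ℕ) = ρw ^ 2 := by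
    rw [← Real.rpow_natCast (ρw ^ ((2:ℝ)/3)) 3, ← Real.rpow_mul hρw0.le]
    norm_num
  have hC3 : α ^ 3 * (27 * ρw ^ 2 * L ^ 3) ≤ u ^ 3 * (μ ^ 2 / L ^ 2 * ((Γ - 1) / (Γ * (Γ + 1)))) := by
    have hc3 : (u / (3 * ρw ^ ((2 : ℝ) / 3) * L)) ^ 3 = u ^ 3 / (27 * ρw ^ 2 * L ^ 3) := by
      rw [div_pow, mul_pow, mul_pow, hρ3]
      norm_num
    have e : ((u / (3 * ρw ^ ((2 : ℝ) / 3) * L)) *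
        (μ ^ 2 / L ^ 2 * ((Γ - 1) / (Γ * (Γ + 1)))) ^ ((1 : ℝ) / 3)) ^ 3 * (27 * ρw ^ 2 * L ^ 3)
        = u ^ 3 * (μ ^ 2 / L ^ 2 * ((Γ - 1) / (Γ * (Γ + 1)))) := by
      rw [mul_pow, hX3, hc3]
      have h27 : (27 * ρw ^ 2 * L ^ 3) ≠ 0 := by positivity
      field_simp
    calc α ^ 3 * (27 * ρw ^ 2 * L ^ 3) ≤ _ * (27 * ρw ^ 2 * L ^ 3) :=
          mul_le_mul_of_nonneg_right hcube (by positivity)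
    _ = _ := e
  have G1 : 27 * α ^ 3 * ρw ^ 2 * L ^ 5 * (Γ * (Γ + 1)) ≤ u ^ 3 * μ ^ 2 * (Γ - 1) := by
    have h6 := mul_le_mul_of_nonneg_right hC3 (by positivity : (0:ℝ) ≤ L ^ 2 * (Γ * (Γ + 1)))
    have e : u ^ 3 * (μ ^ 2 / L ^ 2 * ((Γ - 1) / (Γ * (Γ + 1)))) * (L ^ 2 * (Γ * (Γ + 1)))
        = u ^ 3 * μ ^ 2 * (Γ - 1) := by field_simp
    calc 27 * α ^ 3 * ρw ^ 2 * L ^ 5 * (Γ * (Γ + 1))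
        = α ^ 3 * (27 * ρw ^ 2 * L ^ 3) * (L ^ 2 * (Γ * (Γ + 1))) := by ring
    _ ≤ _ := h6
    _ = u ^ 3 * μ ^ 2 * (Γ - 1) := e
  -- β lower bound
  have hρ2 : (0:ℝ) < ρw ^ 2 := by positivity
  set β : ℝ := u / (2 * ρw ^ 2) - 4 * α * L - 2 * α ^ 2 * L ^ 2 with hβ_def
  have hρρ : ρw ^ 2 ≤ ρw := by nlinarith only [hρw0, hρw1]
  have hX : 12 * α * L * ρw ^ 2 ≤ u := by
    have h := mul_le_mul_of_nonneg_left hρρ (by positivity : (0:ℝ) ≤ 12 * α * L)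
    linarith only [h, hA1]
  have h2αL1 : 2 * α * L ≤ 1 := by linarith
  have hY : 24 * α ^ 2 * L ^ 2 * ρw ^ 2 ≤ u := by
    calc 24 * α ^ 2 * L ^ 2 * ρw ^ 2 = (12 * α * L * ρw ^ 2) * (2 * α * L) := by ring
    _ ≤ (12 * α * L * ρw ^ 2) * 1 := by
        apply mul_le_mul_of_nonneg_left h2αL1 (by positivity)
    _ = 12 * α * L * ρw ^ 2 := mul_one _
    _ ≤ u := hX
  have hβlow : u / (12 * ρw ^ 2) ≤ β := by
    have e : β - u / (12 * ρw ^ 2)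
        = (5 * u - 4 * (12 * α * L * ρw ^ 2) - 24 * α ^ 2 * L ^ 2 * ρw ^ 2) / (12 * ρw ^ 2) := by
      rw [hβ_def]
      field_simp
      ring
    have h7 : 0 ≤ (5 * u - 4 * (12 * α * L * ρw ^ 2) - 24 * α ^ 2 * L ^ 2 * ρw ^ 2) / (12 * ρw ^ 2) :=
      div_nonneg (by linarith) (by positivity)
    linarith
  have hβ0 : 0 < β := lt_of_lt_of_le (by positivity) hβlow
  refine ⟨hβ0, ?_⟩
  -- bound on 1/β + 2
  have hβinv : 1 / β ≤ 12 * ρw ^ 2 / u := by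
    rw [div_le_div_iff₀ hβ0 hu]
    have h10 := mul_le_mul_of_nonneg_left hβlow (by positivity : (0:ℝ) ≤ 12 * ρw ^ 2)
    have e : 12 * ρw ^ 2 * (u / (12 * ρw ^ 2)) = u := by field_simp
    rw [e] at h10
    linarith only [h10]
  have h12 : 1 / β + 2 ≤ 12 / u := by
    have e : 12 / u - 12 * ρw ^ 2 / u = 12 := by
      rw [div_sub_div_same, show 12 - 12 * ρw ^ 2 = 12 * u by rw [hu_def]; ring]
      field_simp
    linarith
  -- abbreviations
  set a31 : ℝ := 2 * α * (n:ℝ) * L ^ 3 with ha31_def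
  set a32 : ℝ := (1 / β + 2) * K ^ 2 * L ^ 2 + 3 * α * L ^ 3 with ha32_def
  set a32b : ℝ := 12 / u * K ^ 2 * L ^ 2 + 3 * α * L ^ 3 with ha32b_def
  set ε1 : ℝ := μ ^ 2 * (n:ℝ) / (4 * L ^ 2) with hε1_def
  set a23 : ℝ := α ^ 2 * ((1 + ρw ^ 2) * ρw ^ 2 / u) with ha23_def
  have hε1 : 0 < ε1 := by rw [hε1_def]; positivity
  have hβinv0 : 0 < 1 / β := by positivity
  have ha31nn : 0 ≤ a31 := by rw [ha31_def]; positivity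
  have ha32nn : 0 ≤ a32 := by
    rw [ha32_def]
    have : 0 ≤ (1 / β + 2) := by linarith
    positivity
  have ha32 : a32 ≤ a32b := by
    rw [ha32_def, ha32b_def]
    have := mul_le_mul_of_nonneg_right (mul_le_mul_of_nonneg_right h12
      (by positivity : (0:ℝ) ≤ K ^ 2)) (by positivity : (0:ℝ) ≤ L ^ 2)
    linarith
  -- the core strict inequality
  have hμ2L2 : μ ^ 2 ≤ L ^ 2 := by nlinarith only [hμ, hμL]
  have h1u : 27 * α ^ 3 * ρw ^ 2 * L ^ 5 * (Γ * (Γ + 1)) * u ≤ u ^ 4 * μ ^ 2 * (Γ - 1) := by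
    have := mul_le_mul_of_nonneg_right G1 hu.le
    calc 27 * α ^ 3 * ρw ^ 2 * L ^ 5 * (Γ * (Γ + 1)) * u
        = 27 * α ^ 3 * ρw ^ 2 * L ^ 5 * (Γ * (Γ + 1)) * u := rfl
    _ ≤ u ^ 3 * μ ^ 2 * (Γ - 1) * u := this
    _ = u ^ 4 * μ ^ 2 * (Γ - 1) := by ring
  have h2u : 27 * α ^ 3 * ρw ^ 2 * L ^ 3 * μ ^ 2 * (Γ * (Γ + 1)) * u ≤ u ^ 4 * μ ^ 2 * (Γ - 1) := by
    refine le_trans ?_ h1u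
    have h8 : α ^ 3 * ρw ^ 2 * L ^ 3 * μ ^ 2 ≤ α ^ 3 * ρw ^ 2 * L ^ 3 * L ^ 2 :=
      mul_le_mul_of_nonneg_left hμ2L2 (by positivity)
    calc 27 * α ^ 3 * ρw ^ 2 * L ^ 3 * μ ^ 2 * (Γ * (Γ + 1)) * u
        = (α ^ 3 * ρw ^ 2 * L ^ 3 * μ ^ 2) * (27 * (Γ * (Γ + 1)) * u) := by ring
    _ ≤ (α ^ 3 * ρw ^ 2 * L ^ 3 * L ^ 2) * (27 * (Γ * (Γ + 1)) * u) :=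
        mul_le_mul_of_nonneg_right h8 (by positivity)
    _ = 27 * α ^ 3 * ρw ^ 2 * L ^ 5 * (Γ * (Γ + 1)) * u := by ring
  have h4 : 144 * Γ * α ^ 2 * L ^ 2 * ρw ^ 2 * K ^ 2 * (μ ^ 2 * (Γ + 1)) ≤ u ^ 4 * (μ ^ 2 * (Γ + 1)) :=
    mul_le_mul_of_nonneg_right G2 (by positivity)
  have hquad : 88 * (Γ - 1) + 18 * (Γ + 1) < 27 * (Γ * (Γ + 1)) := by
    nlinarith only [sq_nonneg (Γ - 79/54), hΓ]
  have hquadm := mul_lt_mul_of_pos_right hquad (show (0:ℝ) < u ^ 4 * μ ^ 2 by positivity)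
  have Qc : 64 * α ^ 3 * ρw ^ 2 * L ^ 5 * (Γ * (Γ + 1)) * u
      + 96 * α ^ 2 * ρw ^ 2 * K ^ 2 * L ^ 2 * μ ^ 2 * (Γ * (Γ + 1))
      + 24 * α ^ 3 * ρw ^ 2 * L ^ 3 * μ ^ 2 * (Γ * (Γ + 1)) * u
      < u ^ 4 * μ ^ 2 * (Γ * (Γ + 1)) := by
    linarith only [h1u, h2u, h4, hquadm]
  have P : 4 * α ^ 2 * (1 + ρw ^ 2) * ρw ^ 2 * (a31 + a32 * ε1) < u ^ 3 * ε1 := by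
    have step1 : 4 * α ^ 2 * (1 + ρw ^ 2) * ρw ^ 2 * (a31 + a32 * ε1)
        ≤ 8 * α ^ 2 * ρw ^ 2 * (a31 + a32b * ε1) := by
      have h1 : 4 * α ^ 2 * (1 + ρw ^ 2) * ρw ^ 2 ≤ 8 * α ^ 2 * ρw ^ 2 := by
        have h0 : 0 ≤ α ^ 2 * ρw ^ 2 * (1 - ρw ^ 2) := by positivity
        linarith only [h0]
      have h2 : a31 + a32 * ε1 ≤ a31 + a32b * ε1 := by
        have h := mul_le_mul_of_nonneg_right ha32 hε1.le
        linarith only [h]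
      have h3 : 0 ≤ a31 + a32 * ε1 := by positivity
      exact mul_le_mul h1 h2 h3 (by positivity)
    have step2 : 8 * α ^ 2 * ρw ^ 2 * (a31 + a32b * ε1) < u ^ 3 * ε1 := by
      have ident : u ^ 3 * ε1 - 8 * α ^ 2 * ρw ^ 2 * (a31 + a32b * ε1)
          = (u ^ 4 * μ ^ 2 * (Γ * (Γ + 1))
            - (64 * α ^ 3 * ρw ^ 2 * L ^ 5 * (Γ * (Γ + 1)) * u
              + 96 * α ^ 2 * ρw ^ 2 * K ^ 2 * L ^ 2 * μ ^ 2 * (Γ * (Γ + 1))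
              + 24 * α ^ 3 * ρw ^ 2 * L ^ 3 * μ ^ 2 * (Γ * (Γ + 1)) * u))
            * (n:ℝ) / (4 * L ^ 2 * u * (Γ * (Γ + 1))) := by
        rw [ha31_def, ha32b_def, hε1_def]
        field_simp
        ring
      have hpos : 0 < (u ^ 4 * μ ^ 2 * (Γ * (Γ + 1))
            - (64 * α ^ 3 * ρw ^ 2 * L ^ 5 * (Γ * (Γ + 1)) * u
              + 96 * α ^ 2 * ρw ^ 2 * K ^ 2 * L ^ 2 * μ ^ 2 * (Γ * (Γ + 1))
              + 24 * α ^ 3 * ρw ^ 2 * L ^ 3 * μ ^ 2 * (Γ * (Γ + 1)) * u))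
            * (n:ℝ) / (4 * L ^ 2 * u * (Γ * (Γ + 1))) :=
        div_pos (mul_pos (by linarith only [Qc]) hn0) (by positivity)
      rw [← sub_pos, ident]
      exact hpos
    exact lt_of_le_of_lt step1 step2
  -- the two auxiliary quantities
  set lo : ℝ := 2 * (a31 + a32 * ε1) / (u * ε1) with hlo_def
  set hi : ℝ := u ^ 2 / (2 * α ^ 2 * (1 + ρw ^ 2) * ρw ^ 2) with hhi_def
  set ε2 : ℝ := (lo + hi) / 2 with hε2_def
  have hden1 : 0 < u * ε1 := by positivity
  have hden2 : (0:ℝ) < 2 * α ^ 2 * (1 + ρw ^ 2) * ρw ^ 2 := by positivity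
  have hlohi : lo < hi := by
    rw [hlo_def, hhi_def, div_lt_div_iff₀ hden1 hden2]
    calc 2 * (a31 + a32 * ε1) * (2 * α ^ 2 * (1 + ρw ^ 2) * ρw ^ 2)
        = 4 * α ^ 2 * (1 + ρw ^ 2) * ρw ^ 2 * (a31 + a32 * ε1) := by ring
    _ < u ^ 3 * ε1 := P
    _ = u ^ 2 * (u * ε1) := by ring
  have hhi0 : 0 < hi := by rw [hhi_def]; positivity
  have hlo0 : 0 ≤ lo := div_nonneg (by positivity) hden1.le
  have hε2lo : lo < ε2 := by rw [hε2_def]; linarith only [hlohi]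
  have hε2hi : ε2 < hi := by rw [hε2_def]; linarith only [hlohi]
  have hε20 : 0 < ε2 := by linarith only [hε2lo, hlo0]
  -- the three strict row inequalities
  have I1 : (1 - α * μ) * 1 + (α * L ^ 2 / (μ * (n:ℝ)) * (1 + α * μ)) * ε1 + 0 * (ε1 * ε2) < 1 := by
    have e : (α * L ^ 2 / (μ * (n:ℝ)) * (1 + α * μ)) * ε1 = α * μ * (1 + α * μ) / 4 := by
      rw [hε1_def]
      field_simp
    rw [e]
    nlinarith only [mul_pos hα0 hμ, hαμ]
  have I2 : 0 * 1 + ((1 + ρw ^ 2) / 2) * ε1 + a23 * (ε1 * ε2) < ε1 := by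
    have ha23 : 0 < a23 := by rw [ha23_def]; positivity
    have h1 : a23 * ε2 < a23 * hi := mul_lt_mul_of_pos_left hε2hi ha23
    have e : a23 * hi = u / 2 := by
      rw [ha23_def, hhi_def]
      field_simp
    have h2 : a23 * ε2 < u / 2 := e ▸ h1
    calc 0 * 1 + ((1 + ρw ^ 2) / 2) * ε1 + a23 * (ε1 * ε2)
        = ((1 + ρw ^ 2) / 2 + a23 * ε2) * ε1 := by ring
    _ < ((1 + ρw ^ 2) / 2 + u / 2) * ε1 := by
        apply mul_lt_mul_of_pos_right _ hε1
        linarith only [h2]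
    _ = ε1 := by rw [hu_def]; ring
  have I3 : a31 * 1 + a32 * ε1 + ((1 + ρw ^ 2) / 2) * (ε1 * ε2) < ε1 * ε2 := by
    have h1 : lo * (u * ε1 / 2) < ε2 * (u * ε1 / 2) :=
      mul_lt_mul_of_pos_right hε2lo (by positivity)
    have e : lo * (u * ε1 / 2) = a31 + a32 * ε1 := by
      rw [hlo_def]
      field_simp
      try ring
    have h2 : a31 + a32 * ε1 < ε2 * (u * ε1 / 2) := e ▸ h1
    rw [hu_def] at h2
    nlinarith only [h2]
  -- apply the Perron-type bound
  have hβeq : (1 - ρw ^ 2) / (2 * ρw ^ 2) - 4 * α * L - 2 * α ^ 2 * L ^ 2 = β := rfl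
  apply perron (by norm_num)
  · intro i j
    fin_cases i <;> fin_cases j <;>
      simp only [Fin.isValue, Fin.mk_zero, Fin.mk_one, Matrix.cons_val', Matrix.cons_val_zero, Matrix.cons_val_one, Matrix.head_cons,
        Matrix.empty_val', Matrix.cons_val_fin_one, Matrix.head_fin_const, Matrix.of_apply,
        Matrix.cons_val_two, Matrix.tail_cons,
        show (⟨2, by norm_num⟩ : Fin 3) = 2 from rfl] <;>
      first
      | exact le_rfl
      | positivity
      | linarith only [hαμ]
      | (rw [ha23_def]
         exact le_of_lt (mul_pos (by positivity) (div_pos (by positivity) hu)))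
      | (rw [ha31_def]; positivity)
      | (rw [ha32_def]
         exact add_nonneg (mul_nonneg (mul_nonneg (by linarith only [hβinv0])
           (sq_nonneg K)) (sq_nonneg L)) (by positivity))
  · exact (fun i => by fin_cases i <;> simp [Matrix.cons_val_zero, Matrix.cons_val_one] <;> positivity :
      ∀ i, 0 < (![1, ε1, ε1 * ε2] : Fin 3 → ℝ) i)
  · intro i
    fin_cases i <;>
      simp only [Matrix.mulVec, dotProduct, Fin.sum_univ_three, Fin.isValue, Fin.mk_zero, Fin.mk_one,
        Matrix.cons_val', Matrix.cons_val_zero, Matrix.cons_val_one, Matrix.head_cons,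
        Matrix.empty_val', Matrix.cons_val_fin_one, Matrix.head_fin_const, Matrix.of_apply,
        Matrix.cons_val_two, Matrix.tail_cons,
        show (⟨2, by norm_num⟩ : Fin 3) = 2 from rfl]
    · exact I1
    · exact I2
    · exact I3
end

section
/- Let n ≥ 1, 0 < μ ≤ L, Γ > 1, let W ∈ ℝ^{n×n} be nonnegative doubly stochastic and let ρ_w ∈ (0,1) be the operator 2-norm of W − (1/n)𝟙𝟙ᵀ. Suppose 0 < α ≤ min{ (1−ρ_w²)/(12ρ_w L), (1−ρ_w²)²/(2√Γ L · max{6ρ_w‖W−I‖_F, 1−ρ_w²}), ((1−ρ_w²)/(3ρ_w^{2/3}L)) · (μ²(Γ−1)/(L²Γ(Γ+1)))^{1/3} } and additionally α ≤ ((Γ+1)/Γ)·(1−ρ_w²)/(8μ). Let β := (1−ρ_w²)/(2ρ_w²) − 4αL − 2α²L² and let A be the 3×3 matrix A = [[1−αμ, (αL²/(μn))(1+αμ), 0], [0, (1+ρ_w²)/2, α²(1+ρ_w²)ρ_w²/(1−ρ_w²)], [2αnL³, (1/β + 2)‖W−I‖_F²L² + 3αL³, (1+ρ_w²)/2]]. Then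 the spectral radius of A satisfies ρ(A) ≤ 1 − ((Γ−1)/(Γ+1))·αμ. -/
set_option maxHeartbeats 1000000

open Matrix

lemma numlem (u : ℝ) (h0 : 0 ≤ u) (h1 : u ≤ 1) :
    (1 - u^2)/9 + (47*u^2/396 + u/48) ≤ (3/8 + u^2/8)^2 := by
  nlinarith [sq_nonneg (u - 11/91), sq_nonneg (u^2), sq_nonneg u]

lemma lemA1 (Γ ρ F α q β L : ℝ)
    (hΓ0 : 0 < Γ) (hρ0 : 0 < ρ) (hρ21 : ρ^2 ≤ 1) (hα0 : 0 < α)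
    (hq0 : 0 < q) (hβ0 : 0 < β) (hL0 : 0 < L) (hF : 0 ≤ F)
    (hβr : 11*q/72 ≤ β * ρ^2)
    (hXsq : 144*Γ*(α*L*(ρ*F))^2 ≤ q^4) :
    α^2*((1+ρ^2)*ρ^2/q) * ((1/β)*F^2*L^2) ≤ q^2/(11*Γ) := by
  have hFL0 : (0:ℝ) ≤ α^2*ρ^2*F^2*L^2 := by positivity
  rw [show α^2*((1+ρ^2)*ρ^2/q) * ((1/β)*F^2*L^2)
      = (α^2*(1+ρ^2)*ρ^2*F^2*L^2*ρ^2)/(q*(β*ρ^2)) by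
    field_simp]
  rw [div_le_div_iff₀ (by positivity) (by linarith : (0:ℝ) < 11*Γ)]
  have s1 := mul_le_mul_of_nonneg_left hβr (show (0:ℝ) ≤ q^3 by positivity)
  have s2 := mul_le_mul_of_nonneg_right
    (show (1+ρ^2)*ρ^2 ≤ 2 by nlinarith)
    (mul_nonneg (by linarith : (0:ℝ) ≤ 11*Γ) hFL0)
  nlinarith [s1, s2, hXsq]

lemma lemA2 (Γ ρ F α q L : ℝ)
    (hΓ0 : 0 < Γ) (hρ0 : 0 < ρ) (hρ21 : ρ^2 ≤ 1) (hα0 : 0 < α)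
    (hq0 : 0 < q) (hq1 : q < 1) (hL0 : 0 < L) (hF : 0 ≤ F)
    (hXsq : 144*Γ*(α*L*(ρ*F))^2 ≤ q^4) :
    α^2*((1+ρ^2)*ρ^2/q) * (2*F^2*L^2) ≤ q^2/(36*Γ) := by
  have hFL0 : (0:ℝ) ≤ α^2*ρ^2*F^2*L^2 := by positivity
  rw [show α^2*((1+ρ^2)*ρ^2/q) * (2*F^2*L^2)
      = (2*α^2*(1+ρ^2)*ρ^2*F^2*L^2)/q by field_simp]
  rw [div_le_div_iff₀ hq0 (by linarith : (0:ℝ) < 36*Γ)]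
  have s2 := mul_le_mul_of_nonneg_right
    (show (1+ρ^2) ≤ 2 by nlinarith)
    (mul_nonneg (by linarith : (0:ℝ) ≤ 72*Γ) hFL0)
  have s30 : (0:ℝ) ≤ q^3 * (1 - q) := mul_nonneg (by positivity) (by linarith)
  nlinarith [s2, hXsq, s30]

lemma lemA3 (G ρ α q L : ℝ)
    (hG0 : 0 < G) (hρ0 : 0 < ρ) (hρ21 : ρ^2 ≤ 1) (hα0 : 0 < α)
    (hq0 : 0 < q) (hL0 : 0 < L)
    (hYsq : (α*L*ρ)^2 ≤ q^2/144)
    (hZ : α*L*(2*G) ≤ q) :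
    α^2*((1+ρ^2)*ρ^2/q) * (3*α*L^3) ≤ q^2/(48*G) := by
  have hAL0 : (0:ℝ) ≤ α*L := by positivity
  rw [show α^2*((1+ρ^2)*ρ^2/q) * (3*α*L^3)
      = (3*α^3*L^3*(1+ρ^2)*ρ^2)/q by field_simp]
  rw [div_le_div_iff₀ hq0 (by linarith : (0:ℝ) < 48*G)]
  have s1 := mul_le_mul_of_nonneg_right hYsq
    (show (0:ℝ) ≤ 144*G*(α*L)*(1+ρ^2) by positivity)
  have s2 := mul_le_mul_of_nonneg_right
    (show (1+ρ^2) ≤ 2 by nlinarith)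
    (show (0:ℝ) ≤ G*q^2*(α*L) by positivity)
  have s3 := mul_le_mul_of_nonneg_right hZ (sq_nonneg q)
  nlinarith [s1, s2, s3]

lemma lemNum2 (Γ G : ℝ) (hΓ : 1 < Γ) (hG1 : 1 < G) (hG2 : G^2 = Γ) :
    (Γ-1)/(9*Γ) + (47/(396*Γ) + 1/(48*G)) ≤ (3/8 + 1/(8*Γ))^2 := by
  have hΓ0 : (0:ℝ) < Γ := by linarith
  have hG0 : (0:ℝ) < G := by linarith
  have hu1 : (1:ℝ)/G ≤ 1 := by rw [div_le_one hG0]; linarith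
  have hnum := numlem (1/G) (by positivity) hu1
  have hGsq : ((1:ℝ)/G)^2 = 1/Γ := by rw [div_pow, one_pow, hG2]
  rw [hGsq] at hnum
  have e3 : (1 - 1/Γ)/9 = (Γ-1)/(9*Γ) := by
    rw [div_eq_div_iff (by norm_num : (9:ℝ) ≠ 0) (by positivity : (9*Γ:ℝ) ≠ 0)]
    field_simp
  have e4 : 47*(1/Γ)/396 = 47/(396*Γ) := by field_simp
  have e5 : (1:ℝ)/G/48 = 1/(48*G) := by field_simp
  have e6 : (3:ℝ)/8 + (1/Γ)/8 = 3/8 + 1/(8*Γ) := by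
    congr 1
    field_simp
  rw [e3, e4, e5, e6] at hnum
  exact hnum

lemma lemC2a (μ L Γ ρ q α : ℝ)
    (hμ : 0 < μ) (hΓ : 1 < Γ) (hρ0 : 0 < ρ) (hρ21 : ρ^2 ≤ 1)
    (hα0 : 0 < α) (hq0 : 0 < q) (hL0 : 0 < L)
    (hm2 : α*μ ≤ 1/2)
    (h3 : α^3 * L^5 * ρ^2 ≤ q^3 * (μ^2*(Γ-1)) / (27*(Γ*(Γ+1)))) :
    2*α^2*L^5*(1+α*μ)/μ * (α^2*((1+ρ^2)*ρ^2/q))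
      ≤ (α*μ - (Γ-1)/(Γ+1)*(α*μ)) * (q^2*((Γ-1)/(9*Γ))) := by
  have hΓ0 : (0:ℝ) < Γ := by linarith
  have hΓ1 : (0:ℝ) < Γ + 1 := by linarith
  have hμq : (0:ℝ) < μ*q := mul_pos hμ hq0
  rw [← mul_le_mul_iff_of_pos_right hμq]
  have u1 : 0 < α*μ := mul_pos hα0 hμ
  have u2 : α*μ*ρ^2 ≤ 1/2 * 1 := mul_le_mul hm2 hρ21 (by positivity) (by norm_num)
  have c1 : (1+α*μ)*(1+ρ^2) ≤ 3 := by
    have e : (1+α*μ)*(1+ρ^2) = 1 + ρ^2 + α*μ + α*μ*ρ^2 := by ring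
    rw [e]; linarith
  have c2 : 2*α^2*L^5*(1+α*μ)/μ * (α^2*((1+ρ^2)*ρ^2/q)) * (μ*q)
      = 2*α*(α^3*L^5*ρ^2)*((1+α*μ)*(1+ρ^2)) := by field_simp
  have c3 : (α*μ - (Γ-1)/(Γ+1)*(α*μ)) * (q^2*((Γ-1)/(9*Γ))) * (μ*q)
      = 6*α*(q^3*(μ^2*(Γ-1))/(27*(Γ*(Γ+1)))) := by
    field_simp
    ring
  rw [c2, c3]
  have c4 : 2*α*(α^3*L^5*ρ^2)*((1+α*μ)*(1+ρ^2)) ≤ 6*α*(α^3*L^5*ρ^2) := by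
    have u := mul_le_mul_of_nonneg_left c1
      (show (0:ℝ) ≤ 2*α*(α^3*L^5*ρ^2) by positivity)
    linarith [u]
  have c5 : 6*α*(α^3*L^5*ρ^2) ≤ 6*α*(q^3*(μ^2*(Γ-1))/(27*(Γ*(Γ+1)))) :=
    mul_le_mul_of_nonneg_left h3 (by linarith)
  linarith

lemma key_ineq (μ L Γ G ρ F α : ℝ)
    (hμ : 0 < μ) (hμL : μ ≤ L) (hΓ : 1 < Γ) (hG1 : 1 < G) (hG2 : G^2 = Γ)
    (hρ0 : 0 < ρ) (hρ1 : ρ < 1) (hF : 0 ≤ F) (hα0 : 0 < α)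
    (h1 : α * L * ρ ≤ (1 - ρ^2)/12)
    (h2 : α * L * (ρ * F) ≤ (1 - ρ^2)^2 / (12*G))
    (h2' : α * L ≤ (1 - ρ^2) / (2*G))
    (h3 : α^3 * L^5 * ρ^2 ≤ (1-ρ^2)^3 * (μ^2*(Γ-1)) / (27*(Γ*(Γ+1))))
    (h4 : α * μ ≤ (Γ+1)/Γ * ((1-ρ^2)/8)) :
    0 < (1-ρ^2)/(2*ρ^2) - 4*α*L - 2*α^2*L^2 ∧
    α^2*((1+ρ^2)*ρ^2/(1-ρ^2)) *
      ((1/((1-ρ^2)/(2*ρ^2) - 4*α*L - 2*α^2*L^2) + 2)*F^2*L^2 + 3*α*L^3)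
      ≤ ((1-ρ^2)/2 - (Γ-1)/(Γ+1)*(α*μ))^2 ∧
    2*α^2*L^5*(1+α*μ)/μ * (α^2*((1+ρ^2)*ρ^2/(1-ρ^2)))
      ≤ (α*μ - (Γ-1)/(Γ+1)*(α*μ)) *
        (((1-ρ^2)/2 - (Γ-1)/(Γ+1)*(α*μ))^2 -
          α^2*((1+ρ^2)*ρ^2/(1-ρ^2)) *
            ((1/((1-ρ^2)/(2*ρ^2) - 4*α*L - 2*α^2*L^2) + 2)*F^2*L^2 + 3*α*L^3)) := by
  have hq0 : (0:ℝ) < 1 - ρ^2 := by nlinarith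
  have hL0 : (0:ℝ) < L := lt_of_lt_of_le hμ hμL
  have hΓ0 : (0:ℝ) < Γ := by linarith
  have hΓ1 : (0:ℝ) < Γ + 1 := by linarith
  have hG0 : (0:ℝ) < G := by linarith
  have hρ2 : (0:ℝ) < ρ^2 := by positivity
  have hρ21 : ρ^2 ≤ 1 := by nlinarith
  obtain ⟨q, hqdef⟩ : ∃ x:ℝ, x = 1 - ρ^2 := ⟨_, rfl⟩
  rw [← hqdef] at h1 h2 h2' h3 h4 ⊢
  rw [← hqdef] at hq0
  have hq1 : q < 1 := by rw [hqdef]; nlinarith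
  obtain ⟨β, hβdef⟩ : ∃ x:ℝ, x = q/(2*ρ^2) - 4*α*L - 2*α^2*L^2 := ⟨_, rfl⟩
  rw [← hβdef]
  have hALρ0 : 0 < α*L*ρ := by positivity
  have hAL0 : 0 ≤ α*L := by positivity
  have hFL0 : (0:ℝ) ≤ α^2*ρ^2*F^2*L^2 := by positivity
  -- β bounds
  have hβe : β * ρ^2 = q/2 - 4*α*L*ρ^2 - 2*α^2*L^2*ρ^2 := by
    rw [hβdef]; field_simp
  have hf1 : 4*α*L*ρ^2 ≤ q/3 := by
    nlinarith [mul_le_mul_of_nonneg_right h1 (show (0:ℝ) ≤ 4*ρ by linarith),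
      mul_nonneg hq0.le (show (0:ℝ) ≤ 1 - ρ by linarith)]
  have hf2 : 2*α^2*L^2*ρ^2 ≤ q/72 := by
    nlinarith [mul_self_le_mul_self hALρ0.le h1,
      mul_nonneg hq0.le (show (0:ℝ) ≤ 1 - q by linarith)]
  have hβr : 11*q/72 ≤ β * ρ^2 := by rw [hβe]; linarith
  have hβ0 : 0 < β := by
    rcases le_or_gt β 0 with h | h
    · exfalso; nlinarith [mul_le_mul_of_nonneg_right h hρ2.le]
    · exact h
  have hβρ0 : 0 < β * ρ^2 := mul_pos hβ0 hρ2
  -- squared smallness facts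
  have hx1 : (α*L*(ρ*F)) * (12*G) ≤ q^2 := (le_div_iff₀ (by linarith)).mp h2
  have hXsq : 144*Γ*(α*L*(ρ*F))^2 ≤ q^4 := by
    have hx2 := mul_self_le_mul_self
      (mul_nonneg (by positivity) (by linarith : (0:ℝ) ≤ 12*G)) hx1
    nlinarith [hx2, hG2, sq_nonneg (α*L*(ρ*F))]
  have hYsq : (α*L*ρ)^2 ≤ q^2/144 := by nlinarith [mul_self_le_mul_self hALρ0.le h1]
  have hZ : α*L*(2*G) ≤ q := (le_div_iff₀ (by linarith)).mp h2'
  have hm2 : α*μ ≤ 1/2 := by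
    have u1 := mul_le_mul_of_nonneg_left hμL hα0.le
    have u2 : 0 ≤ (G - 1) * (α*L) := mul_nonneg (by linarith) hAL0
    linarith
  -- three EG term bounds
  have hA1 : α^2*((1+ρ^2)*ρ^2/q) * ((1/β)*F^2*L^2) ≤ q^2/(11*Γ) :=
    lemA1 Γ ρ F α q β L hΓ0 hρ0 hρ21 hα0 hq0 hβ0 hL0 hF hβr hXsq
  have hA2 : α^2*((1+ρ^2)*ρ^2/q) * (2*F^2*L^2) ≤ q^2/(36*Γ) :=
    lemA2 Γ ρ F α q L hΓ0 hρ0 hρ21 hα0 hq0 hq1 hL0 hF hXsq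
  have hA3 : α^2*((1+ρ^2)*ρ^2/q) * (3*α*L^3) ≤ q^2/(48*G) :=
    lemA3 G ρ α q L hG0 hρ0 hρ21 hα0 hq0 hL0 hYsq hZ
  have hEGtot : α^2*((1+ρ^2)*ρ^2/q) * ((1/β + 2)*F^2*L^2 + 3*α*L^3)
      ≤ q^2*(47/(396*Γ) + 1/(48*G)) := by
    have e1 : α^2*((1+ρ^2)*ρ^2/q) * ((1/β + 2)*F^2*L^2 + 3*α*L^3)
        = α^2*((1+ρ^2)*ρ^2/q) * ((1/β)*F^2*L^2)
          + α^2*((1+ρ^2)*ρ^2/q) * (2*F^2*L^2)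
          + α^2*((1+ρ^2)*ρ^2/q) * (3*α*L^3) := by ring
    have e2 : q^2*(47/(396*Γ) + 1/(48*G)) = q^2/(11*Γ) + q^2/(36*Γ) + q^2/(48*G) := by
      field_simp
      ring
    rw [e1, e2]; linarith
  have hnum' := lemNum2 Γ G hΓ hG1 hG2
  -- lambda - c bound
  have hθnn : (0:ℝ) ≤ (Γ-1)/(Γ+1) := div_nonneg (by linarith) (by linarith)
  have hθm : (Γ-1)/(Γ+1)*(α*μ) ≤ q*(Γ-1)/(8*Γ) := by
    have t := mul_le_mul_of_nonneg_left h4 hθnn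
    have e : (Γ-1)/(Γ+1) * ((Γ+1)/Γ * (q/8)) = q*(Γ-1)/(8*Γ) := by
      field_simp
    rw [e] at t
    exact t
  have hθm0 : 0 ≤ (Γ-1)/(Γ+1)*(α*μ) :=
    mul_nonneg hθnn (by positivity)
  have h8Γ : (0:ℝ) < 1/(8*Γ) := by
    apply div_pos one_pos; linarith
  have hlamc : q*(3/8 + 1/(8*Γ)) ≤ q/2 - (Γ-1)/(Γ+1)*(α*μ) := by
    have e : q/2 - q*(Γ-1)/(8*Γ) = q*(3/8 + 1/(8*Γ)) := by field_simp; ring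
    linarith
  have hlamc0 : 0 ≤ q*(3/8 + 1/(8*Γ)) := mul_nonneg hq0.le (by linarith)
  have hsq2 : (q*(3/8 + 1/(8*Γ)))^2 ≤ (q/2 - (Γ-1)/(Γ+1)*(α*μ))^2 :=
    pow_le_pow_left₀ hlamc0 hlamc 2
  have hmid : q^2*(47/(396*Γ) + 1/(48*G)) + q^2*((Γ-1)/(9*Γ)) ≤ (q*(3/8 + 1/(8*Γ)))^2 := by
    have s := mul_le_mul_of_nonneg_left hnum' (sq_nonneg q)
    linarith [s]
  have hEGnn : 0 ≤ q^2*((Γ-1)/(9*Γ)) := by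
    apply mul_nonneg (sq_nonneg q) (div_nonneg (by linarith) (by linarith))
  refine ⟨hβ0, ?_, ?_⟩
  · linarith [hEGtot, hmid, hsq2]
  · -- C2
    have hmθ : 0 ≤ α*μ - (Γ-1)/(Γ+1)*(α*μ) := by
      have h' : (Γ-1)/(Γ+1) ≤ 1 := by rw [div_le_one hΓ1]; linarith
      have u := mul_le_mul_of_nonneg_right h' (mul_pos hα0 hμ).le
      linarith
    have hbr : q^2*((Γ-1)/(9*Γ))
        ≤ (q/2 - (Γ-1)/(Γ+1)*(α*μ))^2
          - α^2*((1+ρ^2)*ρ^2/q) * ((1/β + 2)*F^2*L^2 + 3*α*L^3) := by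
      linarith [hEGtot, hmid, hsq2]
    have hC2a := lemC2a μ L Γ ρ q α hμ hΓ hρ0 hρ21 hα0 hq0 hL0 hm2 h3
    calc 2*α^2*L^5*(1+α*μ)/μ * (α^2*((1+ρ^2)*ρ^2/q))
        ≤ (α*μ - (Γ-1)/(Γ+1)*(α*μ)) * (q^2*((Γ-1)/(9*Γ))) := hC2a
      _ ≤ _ := mul_le_mul_of_nonneg_left hbr hmθ

lemma abs_root_le (a b c e f g lam : ℝ)
    (ha : 0 ≤ a) (hc : 0 ≤ c) (hbef : 0 ≤ b * e * f) (heg0 : 0 ≤ e * g)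
    (hla : a < lam) (hlc : c < lam)
    (hegl : e * g ≤ (lam - c) ^ 2)
    (hkey : b * e * f ≤ (lam - a) * ((lam - c) ^ 2 - e * g))
    (z : ℂ)
    (hz : ((!![a, b, 0; 0, c, e; f, g, c] : Matrix (Fin 3) (Fin 3) ℝ).map
      Complex.ofReal).charpoly.IsRoot z) :
    ‖z‖ ≤ lam := by
  by_contra hcon
  push_neg at hcon
  have hev : ((!![a, b, 0; 0, c, e; f, g, c] : Matrix (Fin 3) (Fin 3) ℝ).map
      Complex.ofReal).charpoly.eval z
      = (z - a) * ((z - c) * (z - c) - (e : ℂ) * g) - b * ((e : ℂ) * f) := by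
    rw [Matrix.charpoly, ← Polynomial.coe_evalRingHom, RingHom.map_det]
    rw [Matrix.det_fin_three]
    simp [charmatrix_apply_eq, charmatrix_apply_ne, Matrix.map_apply]
    ring
  have hE : (z - a) * ((z - c) * (z - c) - ((e * g : ℝ) : ℂ)) = ((b * e * f : ℝ) : ℂ) := by
    have h0 := hz
    rw [Polynomial.IsRoot, hev] at h0
    push_cast
    linear_combination h0
  set t := ‖z‖ with ht
  have h1 : t - a ≤ ‖z - a‖ := by
    have := norm_sub_norm_le z (a : ℂ)
    simp only [Complex.norm_real, Real.norm_eq_abs, abs_of_nonneg ha] at this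
    linarith
  have h2 : t - c ≤ ‖z - c‖ := by
    have := norm_sub_norm_le z (c : ℂ)
    simp only [Complex.norm_real, Real.norm_eq_abs, abs_of_nonneg hc] at this
    linarith
  have h3 : ‖z - c‖ ^ 2 - e * g
      ≤ ‖(z - c) * (z - c) - ((e * g : ℝ) : ℂ)‖ := by
    have h := norm_sub_norm_le ((z - c) * (z - c)) (((e * g : ℝ)) : ℂ)
    simp only [Complex.norm_real, Real.norm_eq_abs, abs_of_nonneg heg0,
      norm_mul] at h
    nlinarith [h, abs_mul e g, abs_of_nonneg heg0]
  have habs : ‖z - a‖ * ‖(z - c) * (z - c) - ((e * g : ℝ) : ℂ)‖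
      = b * e * f := by
    rw [← norm_mul, hE, Complex.norm_real, Real.norm_eq_abs, abs_of_nonneg hbef]
  have htc : 0 < t - c := by linarith
  have hsq : (lam - c) ^ 2 < (t - c) ^ 2 := by nlinarith
  have hy : 0 < (t - c) ^ 2 - e * g := by nlinarith
  have hzc2 : (t - c) ^ 2 - e * g ≤ ‖z - c‖ ^ 2 - e * g := by
    nlinarith [h2, htc]
  have hprod : (t - a) * ((t - c) ^ 2 - e * g)
      ≤ ‖z - a‖ * ‖(z - c) * (z - c) - ((e * g : ℝ) : ℂ)‖ :=
    mul_le_mul h1 (le_trans hzc2 h3) (le_of_lt hy) (by positivity)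
  have hstrict : (lam - a) * ((lam - c) ^ 2 - e * g) < (t - a) * ((t - c) ^ 2 - e * g) := by
    nlinarith [mul_pos (show (0:ℝ) < t - lam by linarith) hy,
      mul_nonneg (show (0:ℝ) ≤ lam - a by linarith)
        (show (0:ℝ) ≤ (t - c) ^ 2 - (lam - c) ^ 2 by linarith)]
  rw [habs] at hprod
  linarith


theorem stmt10 (n : ℕ) (hn : 1 ≤ n) (μ L Γ : ℝ)
    (hμ : 0 < μ) (hμL : μ ≤ L) (hΓ : 1 < Γ)
    (W : Matrix (Fin n) (Fin n) ℝ)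
    (hWnonneg : ∀ i j, 0 ≤ W i j)
    (hWrow : W.mulVec (fun _ => (1 : ℝ)) = fun _ => (1 : ℝ))
    (hWcol : Matrix.vecMul (fun _ => (1 : ℝ)) W = fun _ => (1 : ℝ))
    (ρw : ℝ) (hρw : ρw = l2OpNorm (W - (n : ℝ)⁻¹ • Matrix.of (fun _ _ : Fin n => (1 : ℝ))))
    (hρw0 : 0 < ρw) (hρw1 : ρw < 1)
    (α : ℝ) (hα0 : 0 < α)
    (hα : α ≤ min (min ((1 - ρw ^ 2) / (12 * ρw * L))
        ((1 - ρw ^ 2) ^ 2 /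
          (2 * Real.sqrt Γ * L * max (6 * ρw * frobNorm (W - 1)) (1 - ρw ^ 2))))
        (((1 - ρw ^ 2) / (3 * ρw ^ ((2 : ℝ) / 3) * L)) *
          (μ ^ 2 / L ^ 2 * ((Γ - 1) / (Γ * (Γ + 1)))) ^ ((1 : ℝ) / 3)))
    (hα' : α ≤ (Γ + 1) / Γ * ((1 - ρw ^ 2) / (8 * μ))) :
    specRad
        !![1 - α * μ, α * L ^ 2 / (μ * n) * (1 + α * μ), 0;
           0, (1 + ρw ^ 2) / 2, α ^ 2 * ((1 + ρw ^ 2) * ρw ^ 2 / (1 - ρw ^ 2));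
           2 * α * n * L ^ 3,
             (1 / ((1 - ρw ^ 2) / (2 * ρw ^ 2) - 4 * α * L - 2 * α ^ 2 * L ^ 2) + 2) *
                 frobNorm (W - 1) ^ 2 * L ^ 2 + 3 * α * L ^ 3,
             (1 + ρw ^ 2) / 2] ≤ 1 - (Γ - 1) / (Γ + 1) * (α * μ) := by
  have hL0 : (0:ℝ) < L := lt_of_lt_of_le hμ hμL
  have hΓ0 : (0:ℝ) < Γ := by linarith
  have hΓ1 : (0:ℝ) < Γ + 1 := by linarith
  have hq0 : (0:ℝ) < 1 - ρw ^ 2 := by nlinarith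
  have hG2 : (Real.sqrt Γ) ^ 2 = Γ := Real.sq_sqrt (by linarith)
  have hG1 : 1 < Real.sqrt Γ := by
    rw [show (1:ℝ) = Real.sqrt 1 by simp]
    exact Real.sqrt_lt_sqrt (by norm_num) hΓ
  have hG0 : (0:ℝ) < Real.sqrt Γ := by linarith
  have hF : 0 ≤ frobNorm (W - 1) := Real.sqrt_nonneg _
  set F := frobNorm (W - 1) with hFdef
  -- derive h1
  have hαA : α ≤ (1 - ρw ^ 2) / (12 * ρw * L) :=
    le_trans hα (le_trans (min_le_left _ _) (min_le_left _ _))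
  have h1 : α * L * ρw ≤ (1 - ρw ^ 2) / 12 := by
    have t := (le_div_iff₀ (by positivity : (0:ℝ) < 12 * ρw * L)).mp hαA
    rw [le_div_iff₀ (by norm_num : (0:ℝ) < 12)]
    nlinarith [t]
  -- derive h2, h2'
  have hαB : α ≤ (1 - ρw ^ 2) ^ 2 /
      (2 * Real.sqrt Γ * L * max (6 * ρw * F) (1 - ρw ^ 2)) :=
    le_trans hα (le_trans (min_le_left _ _) (min_le_right _ _))
  have hM0 : (0:ℝ) < max (6 * ρw * F) (1 - ρw ^ 2) :=
    lt_of_lt_of_le hq0 (le_max_right _ _)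
  have hden : (0:ℝ) < 2 * Real.sqrt Γ * L * max (6 * ρw * F) (1 - ρw ^ 2) := by
    apply mul_pos (by positivity) hM0
  have hαB' : α * (2 * Real.sqrt Γ * L * max (6 * ρw * F) (1 - ρw ^ 2))
      ≤ (1 - ρw ^ 2) ^ 2 := (le_div_iff₀ hden).mp hαB
  have h2 : α * L * (ρw * F) ≤ (1 - ρw ^ 2) ^ 2 / (12 * Real.sqrt Γ) := by
    have t := mul_le_mul_of_nonneg_left (le_max_left (6 * ρw * F) (1 - ρw ^ 2))
      (show (0:ℝ) ≤ α * (2 * Real.sqrt Γ * L) by positivity)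
    rw [le_div_iff₀ (by positivity : (0:ℝ) < 12 * Real.sqrt Γ)]
    nlinarith [t, hαB']
  have h2' : α * L ≤ (1 - ρw ^ 2) / (2 * Real.sqrt Γ) := by
    have t := mul_le_mul_of_nonneg_left (le_max_right (6 * ρw * F) (1 - ρw ^ 2))
      (show (0:ℝ) ≤ α * (2 * Real.sqrt Γ * L) by positivity)
    have h2'' : α * L * (2 * Real.sqrt Γ) * (1 - ρw ^ 2)
        ≤ (1 - ρw ^ 2) * (1 - ρw ^ 2) := by nlinarith [t, hαB']
    rw [le_div_iff₀ (by positivity : (0:ℝ) < 2 * Real.sqrt Γ)]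
    exact (mul_le_mul_iff_of_pos_right hq0).mp h2''
  -- derive h3
  have hαC : α ≤ ((1 - ρw ^ 2) / (3 * ρw ^ ((2 : ℝ) / 3) * L)) *
      (μ ^ 2 / L ^ 2 * ((Γ - 1) / (Γ * (Γ + 1)))) ^ ((1 : ℝ) / 3) :=
    le_trans hα (min_le_right _ _)
  have hP0 : (0:ℝ) ≤ μ ^ 2 / L ^ 2 * ((Γ - 1) / (Γ * (Γ + 1))) :=
    mul_nonneg (by positivity) (div_nonneg (by linarith) (by positivity))
  have hcube := pow_le_pow_left₀ hα0.le hαC 3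
  have e1 : (ρw ^ ((2:ℝ)/3)) ^ (3:ℕ) = ρw ^ 2 := by
    rw [← Real.rpow_natCast (ρw ^ ((2:ℝ)/3)) 3, ← Real.rpow_mul hρw0.le]
    norm_num
  have e2 : ((μ ^ 2 / L ^ 2 * ((Γ - 1) / (Γ * (Γ + 1)))) ^ ((1:ℝ)/3)) ^ (3:ℕ)
      = μ ^ 2 / L ^ 2 * ((Γ - 1) / (Γ * (Γ + 1))) := by
    rw [← Real.rpow_natCast ((μ ^ 2 / L ^ 2 * ((Γ - 1) / (Γ * (Γ + 1)))) ^ ((1:ℝ)/3)) 3,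
      ← Real.rpow_mul hP0]
    norm_num
  have hρpow0 : (0:ℝ) < ρw ^ ((2:ℝ)/3) := Real.rpow_pos_of_pos hρw0 _
  have eR : (((1 - ρw ^ 2) / (3 * ρw ^ ((2 : ℝ) / 3) * L)) *
      (μ ^ 2 / L ^ 2 * ((Γ - 1) / (Γ * (Γ + 1)))) ^ ((1 : ℝ) / 3)) ^ (3:ℕ)
      = (1 - ρw ^ 2) ^ 3 / (27 * ρw ^ 2 * L ^ 3) *
        (μ ^ 2 / L ^ 2 * ((Γ - 1) / (Γ * (Γ + 1)))) := by
    have e3 : (3 * ρw ^ ((2:ℝ)/3) * L) ^ (3:ℕ) = 27 * (ρw ^ ((2:ℝ)/3)) ^ (3:ℕ) * L ^ 3 := by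
      ring
    rw [mul_pow, div_pow, e3, e1, e2]
  rw [eR] at hcube
  have h3 : α ^ 3 * L ^ 5 * ρw ^ 2
      ≤ (1 - ρw ^ 2) ^ 3 * (μ ^ 2 * (Γ - 1)) / (27 * (Γ * (Γ + 1))) := by
    have hmul := mul_le_mul_of_nonneg_right hcube
      (show (0:ℝ) ≤ L ^ 5 * ρw ^ 2 by positivity)
    calc α ^ 3 * L ^ 5 * ρw ^ 2 = α ^ 3 * (L ^ 5 * ρw ^ 2) := by ring
      _ ≤ (1 - ρw ^ 2) ^ 3 / (27 * ρw ^ 2 * L ^ 3) *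
            (μ ^ 2 / L ^ 2 * ((Γ - 1) / (Γ * (Γ + 1)))) * (L ^ 5 * ρw ^ 2) := hmul
      _ = (1 - ρw ^ 2) ^ 3 * (μ ^ 2 * (Γ - 1)) / (27 * (Γ * (Γ + 1))) := by
          field_simp
  -- derive h4
  have h4 : α * μ ≤ (Γ + 1) / Γ * ((1 - ρw ^ 2) / 8) := by
    have t := mul_le_mul_of_nonneg_left hα' hμ.le
    calc α * μ = μ * α := by ring
      _ ≤ μ * ((Γ + 1) / Γ * ((1 - ρw ^ 2) / (8 * μ))) := t
      _ = (Γ + 1) / Γ * ((1 - ρw ^ 2) / 8) := by field_simp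
  obtain ⟨K1, K2, K3⟩ := key_ineq μ L Γ (Real.sqrt Γ) ρw F α hμ hμL hΓ hG1 hG2
    hρw0 hρw1 hF hα0 h1 h2 h2' h3 h4
  -- basic facts about lam
  have hθ1 : (Γ - 1) / (Γ + 1) < 1 := by rw [div_lt_one hΓ1]; linarith
  have hθ0 : 0 ≤ (Γ - 1) / (Γ + 1) := div_nonneg (by linarith) (by linarith)
  have hm : 0 < α * μ := mul_pos hα0 hμ
  have hm12 : α * μ ≤ 1 / 2 := by
    have u1 : α * μ ≤ α * L := mul_le_mul_of_nonneg_left hμL hα0.le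
    have u2 : (1 - ρw ^ 2) / (2 * Real.sqrt Γ) ≤ 1 / 2 := by
      rw [div_le_iff₀ (by positivity : (0:ℝ) < 2 * Real.sqrt Γ)]
      nlinarith [hG1]
    linarith [u1, h2', u2]
  have hθm : (Γ - 1) / (Γ + 1) * (α * μ) ≤ α * μ := by
    have := mul_le_mul_of_nonneg_right hθ1.le hm.le
    linarith
  have hθm0 : 0 ≤ (Γ - 1) / (Γ + 1) * (α * μ) := mul_nonneg hθ0 hm.le
  have hαμ4 : α * μ ≤ (1 - ρw ^ 2) / 4 := by
    have hΓ2 : (Γ + 1) / Γ ≤ 2 := by rw [div_le_iff₀ hΓ0]; linarith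
    have := mul_le_mul_of_nonneg_right hΓ2 (show (0:ℝ) ≤ (1 - ρw ^ 2) / 8 by positivity)
    linarith [h4]
  have hn0 : (0:ℝ) < (n:ℝ) := by exact_mod_cast Nat.pos_of_ne_zero (by omega)
  -- unfold and conclude
  unfold specRad
  apply Real.sSup_le
  · rintro x ⟨z, hz, rfl⟩
    have he0 : 0 ≤ α ^ 2 * ((1 + ρw ^ 2) * ρw ^ 2 / (1 - ρw ^ 2)) :=
      mul_nonneg (sq_nonneg α) (div_nonneg (by positivity) hq0.le)
    have hg0 : 0 ≤ (1 / ((1 - ρw ^ 2) / (2 * ρw ^ 2) - 4 * α * L - 2 * α ^ 2 * L ^ 2) + 2) *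
        F ^ 2 * L ^ 2 + 3 * α * L ^ 3 := by
      have hi := one_div_pos.mpr K1
      have : (0:ℝ) ≤ (1 / ((1 - ρw ^ 2) / (2 * ρw ^ 2) - 4 * α * L - 2 * α ^ 2 * L ^ 2) + 2) :=
        by linarith
      have t1 : (0:ℝ) ≤ (1 / ((1 - ρw ^ 2) / (2 * ρw ^ 2) - 4 * α * L - 2 * α ^ 2 * L ^ 2) + 2) *
          F ^ 2 * L ^ 2 := mul_nonneg (mul_nonneg this (sq_nonneg F)) (sq_nonneg L)
      have t2 : (0:ℝ) ≤ 3 * α * L ^ 3 := by positivity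
      linarith
    have hb0 : 0 ≤ α * L ^ 2 / (μ * (n:ℝ)) * (1 + α * μ) := by positivity
    have hf0 : (0:ℝ) ≤ 2 * α * (n:ℝ) * L ^ 3 := by positivity
    apply abs_root_le (1 - α * μ) (α * L ^ 2 / (μ * (n:ℝ)) * (1 + α * μ)) ((1 + ρw ^ 2) / 2)
      (α ^ 2 * ((1 + ρw ^ 2) * ρw ^ 2 / (1 - ρw ^ 2)))
      (2 * α * (n:ℝ) * L ^ 3)
      ((1 / ((1 - ρw ^ 2) / (2 * ρw ^ 2) - 4 * α * L - 2 * α ^ 2 * L ^ 2) + 2) *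
          F ^ 2 * L ^ 2 + 3 * α * L ^ 3)
      (1 - (Γ - 1) / (Γ + 1) * (α * μ))
      (by linarith) (by positivity)
      (mul_nonneg (mul_nonneg hb0 he0) hf0)
      (mul_nonneg he0 hg0)
      (by linarith [mul_pos hm (sub_pos.mpr hθ1)])
      (by linarith)
      ?_ ?_ z hz
    · -- hegl
      have eq2 : ((1 - (Γ - 1) / (Γ + 1) * (α * μ)) - (1 + ρw ^ 2) / 2) ^ 2
          = ((1 - ρw ^ 2) / 2 - (Γ - 1) / (Γ + 1) * (α * μ)) ^ 2 := by ring
      linarith [K2, eq2.ge, eq2.le]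
    · -- hkey
      have hbf : α * L ^ 2 / (μ * (n:ℝ)) * (1 + α * μ) * (2 * α * (n:ℝ) * L ^ 3)
          = 2 * α ^ 2 * L ^ 5 * (1 + α * μ) / μ := by
        field_simp
      have heq : α * L ^ 2 / (μ * (n:ℝ)) * (1 + α * μ)
            * (α ^ 2 * ((1 + ρw ^ 2) * ρw ^ 2 / (1 - ρw ^ 2)))
            * (2 * α * (n:ℝ) * L ^ 3)
          = 2 * α ^ 2 * L ^ 5 * (1 + α * μ) / μ
            * (α ^ 2 * ((1 + ρw ^ 2) * ρw ^ 2 / (1 - ρw ^ 2))) := by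
        calc α * L ^ 2 / (μ * (n:ℝ)) * (1 + α * μ)
              * (α ^ 2 * ((1 + ρw ^ 2) * ρw ^ 2 / (1 - ρw ^ 2)))
              * (2 * α * (n:ℝ) * L ^ 3)
            = (α * L ^ 2 / (μ * (n:ℝ)) * (1 + α * μ) * (2 * α * (n:ℝ) * L ^ 3))
              * (α ^ 2 * ((1 + ρw ^ 2) * ρw ^ 2 / (1 - ρw ^ 2))) := by ring
          _ = _ := by rw [hbf]
      have heq2 : (1 - (Γ - 1) / (Γ + 1) * (α * μ) - (1 - α * μ)) = α * μ - (Γ - 1) / (Γ + 1) * (α * μ) := by ring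
      have heq3 : ((1 - (Γ - 1) / (Γ + 1) * (α * μ)) - (1 + ρw ^ 2) / 2) ^ 2
          = ((1 - ρw ^ 2) / 2 - (Γ - 1) / (Γ + 1) * (α * μ)) ^ 2 := by ring
      linarith [K3, heq.ge, heq.le, heq2.ge, heq2.le, heq3.ge, heq3.le]
  · linarith
end

section
/- Let n ≥ 2 and let Π ∈ ℝ^{n×n} be a nonnegative doubly stochastic matrix such that the graph on {1,…,n} with edge set {{i,j} : i ≠ j, π_{ij} + π_{ji} > 0} is connected. Define W̄ := (1 − 1/n)I + (Π + Πᵀ)/(2n) and let ρ_w̄ be the operator 2-norm of W̄ − (1/n)𝟙𝟙ᵀ. Then 1 − 2/n ≤ ρ_w̄ < 1, and moreover ρ_w̄ = 1 − 1/n + (1/n)·λ₂((Π + Πᵀ)/2), where λ₂((Π + Πᵀ)/2) denotes the second largest eigenvalue (counted with multiplicity) of the symmetric matrix (Π + Πᵀ)/2. -/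
open Matrix Finset

lemma aux_constant {n : ℕ} (S : Matrix (Fin n) (Fin n) ℝ)
    (h0 : ∀ i j, 0 ≤ S i j) (hrow : ∀ i, ∑ j, S i j = 1)
    (G : SimpleGraph (Fin n)) (hG : G.Connected)
    (hadj : ∀ a b, G.Adj a b → 0 < S a b)
    (x : Fin n → ℝ) (hx : S.mulVec x = x) (i j : Fin n) : x i = x j := by
  have hne : (Finset.univ : Finset (Fin n)).Nonempty := ⟨i, mem_univ i⟩
  obtain ⟨i0, -, hmax⟩ := Finset.exists_max_image Finset.univ x hne
  have step : ∀ a b : Fin n, G.Adj a b → x a = x i0 → x b = x i0 := by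
    intro a b hab ha
    have hxa : ∑ k, S a k * x k = x a := congrFun hx a
    have hsum : ∑ k, S a k * (x i0 - x k) = 0 := by
      have : ∑ k, S a k * (x i0 - x k) = (∑ k, S a k) * x i0 - ∑ k, S a k * x k := by
        rw [Finset.sum_mul, ← Finset.sum_sub_distrib]
        congr 1; ext k; ring
      rw [this, hrow, hxa, ha]; ring
    have hterm : ∀ k ∈ Finset.univ, 0 ≤ S a k * (x i0 - x k) := by
      intro k _
      exact mul_nonneg (h0 a k) (by linarith [hmax k (mem_univ k)])
    have := (Finset.sum_eq_zero_iff_of_nonneg hterm).1 hsum b (mem_univ b)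
    have hpos := hadj a b hab
    have : x i0 - x b = 0 := by
      rcases mul_eq_zero.1 this with h | h
      · exact absurd h (ne_of_gt hpos)
      · exact h
    linarith
  have walk : ∀ {a b : Fin n} (w : G.Walk a b), x a = x i0 → x b = x i0 := by
    intro a b w
    induction w with
    | nil => exact id
    | cons h p ih => intro ha; exact ih (step _ _ h ha)
  have hall : ∀ a : Fin n, x a = x i0 := fun a => walk ((hG i0 a).some) rfl
  rw [hall i, hall j]

lemma aux_contract {n : ℕ} (S : Matrix (Fin n) (Fin n) ℝ)
    (h0 : ∀ i j, 0 ≤ S i j) (hrow : ∀ i, ∑ j, S i j = 1) (hcol : ∀ j, ∑ i, S i j = 1)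
    (v : Fin n → ℝ) : ∑ i, (S.mulVec v i) ^ 2 ≤ ∑ j, (v j) ^ 2 := by
  have key : ∀ i, (S.mulVec v i) ^ 2 ≤ ∑ j, S i j * (v j) ^ 2 := by
    intro i
    have h1 : S.mulVec v i = ∑ j, Real.sqrt (S i j) * (Real.sqrt (S i j) * v j) := by
      simp only [Matrix.mulVec, dotProduct]
      congr 1; ext j
      rw [← mul_assoc, Real.mul_self_sqrt (h0 i j)]
    calc (S.mulVec v i) ^ 2
        = (∑ j, Real.sqrt (S i j) * (Real.sqrt (S i j) * v j)) ^ 2 := by rw [h1]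
      _ ≤ (∑ j, Real.sqrt (S i j) ^ 2) * ∑ j, (Real.sqrt (S i j) * v j) ^ 2 :=
          Finset.sum_mul_sq_le_sq_mul_sq _ _ _
      _ = ∑ j, S i j * (v j) ^ 2 := by
          have e1 : ∑ j, Real.sqrt (S i j) ^ 2 = 1 := by
            rw [← hrow i]; congr 1; ext j; exact Real.sq_sqrt (h0 i j)
          rw [e1, one_mul]; congr 1; ext j
          rw [mul_pow, Real.sq_sqrt (h0 i j)]
  calc ∑ i, (S.mulVec v i) ^ 2 ≤ ∑ i, ∑ j, S i j * (v j) ^ 2 :=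
        Finset.sum_le_sum fun i _ => key i
    _ = ∑ j, (∑ i, S i j) * (v j) ^ 2 := by
        rw [Finset.sum_comm]; congr 1; ext j; rw [Finset.sum_mul]
    _ = ∑ j, (v j) ^ 2 := by
        congr 1; ext j; rw [hcol, one_mul]


set_option maxHeartbeats 1000000 in
lemma main_lemma (n : ℕ) (hn : 2 ≤ n) (Pmat : Matrix (Fin n) (Fin n) ℝ)
    (hPnonneg : ∀ i j, 0 ≤ Pmat i j)
    (hProw : Pmat.mulVec (fun _ => (1 : ℝ)) = fun _ => (1 : ℝ))
    (hPcol : Matrix.vecMul (fun _ => (1 : ℝ)) Pmat = fun _ => (1 : ℝ))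
    (hconn : (SimpleGraph.fromRel (fun i j : Fin n => 0 < Pmat i j + Pmat j i)).Connected)
    (hS : ((2 : ℝ)⁻¹ • (Pmat + Pmat.transpose)).IsHermitian) (σ : Equiv.Perm (Fin n))
    (hσ : Antitone (fun i => hS.eigenvalues (σ i))) :
    l2OpNorm ((1 - 1 / (n : ℝ)) • (1 : Matrix (Fin n) (Fin n) ℝ) +
        (2 * (n : ℝ))⁻¹ • (Pmat + Pmat.transpose) -
      (n : ℝ)⁻¹ • Matrix.of (fun _ _ : Fin n => (1 : ℝ))) =
      1 - 1 / n + hS.eigenvalues (σ ⟨1, lt_of_lt_of_le one_lt_two hn⟩) / n ∧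
    -1 ≤ hS.eigenvalues (σ ⟨1, lt_of_lt_of_le one_lt_two hn⟩) ∧
    hS.eigenvalues (σ ⟨1, lt_of_lt_of_le one_lt_two hn⟩) < 1 := by
  set S : Matrix (Fin n) (Fin n) ℝ := (2 : ℝ)⁻¹ • (Pmat + Pmat.transpose) with hSdef
  have hSentry : ∀ i j, S i j = 2⁻¹ * (Pmat i j + Pmat j i) := by
    intro i j
    simp only [hSdef, Matrix.smul_apply, Matrix.add_apply, Matrix.transpose_apply, smul_eq_mul]
  have hPr : ∀ i, ∑ j, Pmat i j = 1 := by
    intro i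
    have := congrFun hProw i
    simpa [Matrix.mulVec, dotProduct] using this
  have hPc : ∀ j, ∑ i, Pmat i j = 1 := by
    intro j
    have := congrFun hPcol j
    simpa [Matrix.vecMul, dotProduct] using this
  have hSnn : ∀ i j, 0 ≤ S i j := by
    intro i j; rw [hSentry]
    have := hPnonneg i j; have := hPnonneg j i
    positivity
  have hSrow : ∀ i, ∑ j, S i j = 1 := by
    intro i
    simp only [hSentry]
    rw [← Finset.mul_sum, Finset.sum_add_distrib, hPr i, hPc i]
    norm_num
  have hScol : ∀ j, ∑ i, S i j = 1 := by
    intro j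
    simp only [hSentry]
    rw [← Finset.mul_sum, Finset.sum_add_distrib, hPc j, hPr j]
    norm_num
  have hSadj : ∀ a b, (SimpleGraph.fromRel (fun i j : Fin n => 0 < Pmat i j + Pmat j i)).Adj a b →
      0 < S a b := by
    intro a b hab
    rw [SimpleGraph.fromRel_adj] at hab
    rcases hab with ⟨-, h | h⟩ <;> rw [hSentry] <;> nlinarith
  -- constancy of fixed vectors
  have hconst : ∀ x : Fin n → ℝ, S.mulVec x = x → ∀ i j, x i = x j :=
    fun x hx i j => aux_constant S hSnn hSrow _ hconn hSadj x hx i j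
  -- 1 is fixed
  have hone : S.mulVec (fun _ => (1:ℝ)) = fun _ => (1:ℝ) := by
    funext i
    simp [Matrix.mulVec, dotProduct, hSrow i]
  -- eigenbasis
  set B := hS.eigenvectorBasis with hBdef
  set mu := hS.eigenvalues with hmudef
  set b : Fin n → (Fin n → ℝ) := fun j => (WithLp.equiv 2 (Fin n → ℝ)) (B j) with hbdef
  have heig : ∀ j, S.mulVec (b j) = mu j • (b j) := fun j => hS.mulVec_eigenvectorBasis j
  have hBinner : ∀ j k : Fin n, (inner ℝ (B j) (B k) : ℝ) = ∑ l, b j l * b k l := by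
    intro j k
    rw [PiLp.inner_apply]
    simp [hbdef, mul_comm]
  have hBnorm : ∀ j, ∑ l, b j l * b j l = 1 := by
    intro j
    rw [← hBinner]
    have := B.orthonormal.1 j
    rw [@norm_eq_sqrt_real_inner] at this
    exact Real.sqrt_eq_one.1 this
  have hBorth : ∀ j k, j ≠ k → ∑ l, b j l * b k l = 0 := by
    intro j k hjk
    rw [← hBinner]
    exact B.orthonormal.2 hjk
  -- eigenvalue bounds
  have hmu_bound : ∀ j, mu j ^ 2 ≤ 1 := by
    intro j
    have h1 : ∑ i, (S.mulVec (b j) i) ^ 2 ≤ ∑ l, (b j l) ^ 2 :=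
      aux_contract S hSnn hSrow hScol (b j)
    have h2 : ∑ i, (S.mulVec (b j) i) ^ 2 = mu j ^ 2 * ∑ l, (b j l) ^ 2 := by
      rw [heig j, Finset.mul_sum]
      congr 1; ext l
      simp [Pi.smul_apply, smul_eq_mul]; ring
    have h3 : ∑ l, (b j l) ^ 2 = 1 := by
      rw [← hBnorm j]; congr 1; ext l; ring
    rw [h3] at h1 h2
    nlinarith
  have hmu_le : ∀ j, mu j ≤ 1 := fun j => by nlinarith [hmu_bound j]
  have hmu_ge : ∀ j, -1 ≤ mu j := fun j => by nlinarith [hmu_bound j]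
  have hSsym : ∀ k l, S k l = S l k := by
    intro k l; rw [hSentry, hSentry]; ring
  have hs_eq : ∀ j, ∑ l, b j l = mu j * ∑ l, b j l := by
    intro j
    calc ∑ l, b j l = ∑ k, ∑ l, b j k * S k l := by
          apply Finset.sum_congr rfl
          intro k _
          rw [← Finset.mul_sum, hSrow k, mul_one]
      _ = ∑ l, ∑ k, b j k * S k l := Finset.sum_comm
      _ = ∑ l, (S.mulVec (b j)) l := by
          apply Finset.sum_congr rfl
          intro l _
          simp only [Matrix.mulVec, dotProduct]
          apply Finset.sum_congr rfl
          intro k _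
          rw [hSsym k l]; ring
      _ = ∑ l, mu j * b j l := by rw [heig j]; simp
      _ = mu j * ∑ l, b j l := (Finset.mul_sum _ _ _).symm
  have hkey : ∀ j, (1 - mu j) * (∑ l, b j l) = 0 := by
    intro j
    have := hs_eq j
    ring_nf
    linarith [hs_eq j]
  -- there is an eigenvalue 1
  have hker : ∃ j, mu j = 1 := by
    by_contra h
    push_neg at h
    have hz : ∀ j, ∑ l, b j l = 0 := by
      intro j
      have := hkey j
      rcases mul_eq_zero.1 this with h' | h'
      · exact absurd (by linarith : mu j = 1) (h j)
      · exact h'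
    -- then the all-ones vector is zero, contradiction
    have hu : (WithLp.equiv 2 (Fin n → ℝ)).symm (fun _ => (1:ℝ)) =
        (0 : EuclideanSpace ℝ (Fin n)) := by
      have hrep := B.sum_repr' ((WithLp.equiv 2 (Fin n → ℝ)).symm (fun _ => (1:ℝ)))
      rw [← hrep]
      apply Finset.sum_eq_zero
      intro j _
      have : (inner ℝ (B j) ((WithLp.equiv 2 (Fin n → ℝ)).symm (fun _ => (1:ℝ))) : ℝ) = 0 := by
        rw [PiLp.inner_apply]
        simpa [hbdef] using hz j
      rw [this, zero_smul]
    have h0 : (0 : ℕ) < n := by omega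
    have := congrFun (congrArg (WithLp.equiv 2 (Fin n → ℝ)) hu) ⟨0, h0⟩
    simp at this
  set i0 : Fin n := ⟨0, by omega⟩ with hi0
  set i1 : Fin n := ⟨1, lt_of_lt_of_le one_lt_two hn⟩ with hi1
  have hmu0 : mu (σ i0) = 1 := by
    obtain ⟨j, hj⟩ := hker
    have h1 : i0 ≤ σ.symm j := by
      rw [Fin.le_def]; simp [hi0]
    have := hσ h1
    simp only [Equiv.apply_symm_apply] at this
    have h2 := hmu_le (σ i0)
    rw [hj] at this
    linarith
  -- second eigenvalue is < 1
  have hne01 : σ i1 ≠ σ i0 := by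
    intro h
    have := σ.injective h
    simp [hi0, hi1, Fin.ext_iff] at this
  have hmu1_lt : mu (σ i1) < 1 := by
    rcases lt_or_eq_of_le (hmu_le (σ i1)) with h | h
    · exact h
    · exfalso
      have hfix0 : S.mulVec (b (σ i0)) = b (σ i0) := by
        have := heig (σ i0); rw [hmu0, one_smul] at this; exact this
      have hfix1 : S.mulVec (b (σ i1)) = b (σ i1) := by
        have := heig (σ i1); rw [h, one_smul] at this; exact this
      have hc0 : ∀ k, b (σ i0) k = b (σ i0) i0 := fun k => hconst _ hfix0 k i0
      have hc1 : ∀ k, b (σ i1) k = b (σ i1) i0 := fun k => hconst _ hfix1 k i0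
      have horth := hBorth (σ i0) (σ i1) (Ne.symm hne01)
      have hsum : ∑ l : Fin n, b (σ i0) l * b (σ i1) l =
          (n : ℝ) * (b (σ i0) i0 * b (σ i1) i0) := by
        rw [Finset.sum_congr rfl (fun l _ => by rw [hc0 l, hc1 l])]
        simp [Finset.card_univ, mul_comm]
      rw [hsum] at horth
      have hn0 : (n : ℝ) ≠ 0 := by positivity
      have := mul_eq_zero.1 horth
      rcases this with h' | h'
      · exact hn0 h'
      · rcases mul_eq_zero.1 h' with h'' | h''
        · have := hBnorm (σ i0)
          rw [Finset.sum_congr rfl (fun l _ => by rw [hc0 l, h'', mul_zero])] at this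
          simp at this
        · have := hBnorm (σ i1)
          rw [Finset.sum_congr rfl (fun l _ => by rw [hc1 l, h'', mul_zero])] at this
          simp at this
  -- eigenvalues other than at σ i0 are ≤ mu (σ i1)
  have hmu_le1 : ∀ j, j ≠ σ i0 → mu j ≤ mu (σ i1) := by
    intro j hj
    have h1 : i1 ≤ σ.symm j := by
      rw [Fin.le_def]
      have : σ.symm j ≠ i0 := fun h => hj (by rw [← h, Equiv.apply_symm_apply])
      have : (σ.symm j).val ≠ 0 := fun h => this (Fin.ext h)
      simp [hi1]; omega
    have := hσ h1
    simpa using this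
  -- coordinate sums vanish off the top eigenvector
  have hsz : ∀ j, j ≠ σ i0 → ∑ l, b j l = 0 := by
    intro j hj
    have := hkey j
    rcases mul_eq_zero.1 this with h' | h'
    · exfalso
      have : mu j = 1 := by linarith
      have := hmu_le1 j hj
      linarith [hmu1_lt]
    · exact h'
  -- the top eigenvector is constant
  have hfix0 : S.mulVec (b (σ i0)) = b (σ i0) := by
    have := heig (σ i0); rw [hmu0, one_smul] at this; exact this
  have hc0 : ∀ k, b (σ i0) k = b (σ i0) i0 := fun k => hconst _ hfix0 k i0
  -- the matrix M
  set Mmat : Matrix (Fin n) (Fin n) ℝ :=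
    (1 - 1 / (n : ℝ)) • (1 : Matrix (Fin n) (Fin n) ℝ) +
      (2 * (n : ℝ))⁻¹ • (Pmat + Pmat.transpose) -
      (n : ℝ)⁻¹ • Matrix.of (fun _ _ : Fin n => (1 : ℝ)) with hMdef
  have hn0 : (n : ℝ) ≠ 0 := by positivity
  have hM_apply : ∀ v : Fin n → ℝ, Mmat.mulVec v =
      fun i => (1 - 1/(n:ℝ)) * v i + (n:ℝ)⁻¹ * (S.mulVec v) i - (n:ℝ)⁻¹ * ∑ j, v j := by
    intro v
    funext i
    have hJ : ((Matrix.of fun _ _ : Fin n => (1:ℝ)) *ᵥ v) i = ∑ j, v j := by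
      simp [Matrix.mulVec, dotProduct]
    have hSm : (S *ᵥ v) i = 2⁻¹ * ((Pmat *ᵥ v) i + (Pmat.transpose *ᵥ v) i) := by
      simp only [hSdef, Matrix.smul_mulVec, Matrix.add_mulVec, Pi.smul_apply,
        Pi.add_apply, smul_eq_mul]
    simp only [hMdef, Matrix.sub_mulVec, Matrix.add_mulVec, Matrix.smul_mulVec,
      Matrix.one_mulVec, Pi.add_apply, Pi.sub_apply, Pi.smul_apply, smul_eq_mul, hJ]
    rw [hSm, mul_inv]
    ring
  -- eigenvalues of M
  set nu : Fin n → ℝ := fun j => if j = σ i0 then 0 else 1 - 1/(n:ℝ) + mu j / n with hnudef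
  have hMeig : ∀ j, Mmat.mulVec (b j) = nu j • (b j) := by
    intro j
    rw [hM_apply]
    funext i
    by_cases hj : j = σ i0
    · subst hj
      simp only [hnudef, if_pos rfl, zero_smul, Pi.zero_apply]
      have h1 : (S *ᵥ b (σ i0)) i = b (σ i0) i := congrFun hfix0 i
      have h2 : ∑ l, b (σ i0) l = (n : ℝ) * b (σ i0) i0 := by
        rw [Finset.sum_congr rfl (fun l _ => hc0 l)]
        simp [Finset.card_univ]
      rw [h1, h2, hc0 i]
      field_simp
      ring
    · simp only [hnudef, if_neg hj, Pi.smul_apply, smul_eq_mul]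
      have h1 : (S *ᵥ b j) i = mu j * b j i := by rw [heig j]; simp
      rw [h1, hsz j hj]
      ring
  -- lambda and its bounds
  set lam : ℝ := 1 - 1/(n:ℝ) + mu (σ i1) / n with hlamdef
  have hnpos : (0:ℝ) < n := by positivity
  have hn2 : (2:ℝ) ≤ (n:ℝ) := by exact_mod_cast hn
  have h2n : (2:ℝ)/n ≤ 1 := (div_le_one hnpos).2 hn2
  have hdiv2 : (2:ℝ)/n = 2*(1/n) := by ring
  have hlow : 1 - 2/(n:ℝ) ≤ lam := by
    have h := (div_le_div_iff_of_pos_right hnpos).2 (hmu_ge (σ i1))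
    rw [hlamdef]
    have : (-1:ℝ)/n = -(1/n) := by ring
    linarith [this ▸ h, hdiv2]
  have hlam0 : 0 ≤ lam := le_trans (by linarith [h2n] : (0:ℝ) ≤ 1 - 2/(n:ℝ)) hlow
  have hnu_sq : ∀ j, nu j ^ 2 ≤ lam ^ 2 := by
    intro j
    by_cases hj : j = σ i0
    · simp [hnudef, hj]
      positivity
    · have h1 : nu j = 1 - 1/(n:ℝ) + mu j / n := by simp [hnudef, hj]
      have h2 : mu j / n ≤ mu (σ i1) / n := (div_le_div_iff_of_pos_right hnpos).2 (hmu_le1 j hj)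
      have h3 : (-1:ℝ)/n ≤ mu j / n := (div_le_div_iff_of_pos_right hnpos).2 (hmu_ge j)
      have h4 : (-1:ℝ)/n = -(1/n) := by ring
      have h5 : 0 ≤ nu j := by rw [h1]; linarith [h4 ▸ h3, hdiv2]
      have h6 : nu j ≤ lam := by rw [h1, hlamdef]; linarith
      exact pow_le_pow_left₀ h5 h6 2
  -- Hermitian / symmetric
  have hMherm : Mmat.IsHermitian := by
    unfold Matrix.IsHermitian
    ext i j
    simp only [hMdef, Matrix.conjTranspose_apply, Matrix.sub_apply, Matrix.add_apply,
      Matrix.smul_apply, Matrix.one_apply, Matrix.transpose_apply, Matrix.of_apply,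
      smul_eq_mul, star_trivial]
    by_cases h : i = j
    · subst h; ring
    · rw [if_neg h, if_neg (Ne.symm h)]; ring
  have hsym := Matrix.isHermitian_iff_isSymmetric.1 hMherm
  have hTB : ∀ j, Matrix.toEuclideanLin Mmat (B j) = nu j • (B j) := by
    intro j
    rw [Matrix.toEuclideanLin_apply]
    have h := hMeig j
    rw [hbdef] at h
    simp only at h
    rw [show (B j).ofLp = WithLp.equiv 2 (Fin n → ℝ) (B j) from rfl, h]
    simp
  have hcoef : ∀ (x : EuclideanSpace ℝ (Fin n)) j,
      (inner ℝ (B j) ((Matrix.toEuclideanLin Mmat) x) : ℝ) = nu j * inner ℝ (B j) x := by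
    intro x j
    rw [← hsym (B j) x, hTB j, real_inner_smul_left]
  have hnx : ∀ y : EuclideanSpace ℝ (Fin n),
      ‖y‖ = Real.sqrt (∑ j, (inner ℝ (B j) y : ℝ) ^ 2) := by
    intro y
    rw [← LinearIsometryEquiv.norm_map B.repr y, EuclideanSpace.norm_eq]
    congr 1
    apply Finset.sum_congr rfl
    intro j _
    rw [B.repr_apply_apply, Real.norm_eq_abs, sq_abs]
  have hub : ∀ x : EuclideanSpace ℝ (Fin n),
      ‖(Matrix.toEuclideanLin Mmat) x‖ ≤ lam * ‖x‖ := by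
    intro x
    rw [hnx, hnx x]
    have h1 : ∑ j, (inner ℝ (B j) ((Matrix.toEuclideanLin Mmat) x) : ℝ) ^ 2 ≤
        lam ^ 2 * ∑ j, (inner ℝ (B j) x : ℝ) ^ 2 := by
      rw [Finset.mul_sum]
      apply Finset.sum_le_sum
      intro j _
      rw [hcoef x j, mul_pow]
      have := hnu_sq j
      nlinarith [sq_nonneg (inner ℝ (B j) x : ℝ)]
    calc Real.sqrt (∑ j, (inner ℝ (B j) ((Matrix.toEuclideanLin Mmat) x) : ℝ) ^ 2)
        ≤ Real.sqrt (lam ^ 2 * ∑ j, (inner ℝ (B j) x : ℝ) ^ 2) := Real.sqrt_le_sqrt h1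
      _ = lam * Real.sqrt (∑ j, (inner ℝ (B j) x : ℝ) ^ 2) := by
          rw [Real.sqrt_mul (sq_nonneg lam), Real.sqrt_sq hlam0]
  have hnormconst : ∀ j, ‖B j‖ = 1 := fun j => B.orthonormal.1 j
  have hnui1 : nu (σ i1) = lam := by
    rw [hnudef]
    simp only [if_neg hne01]
    exact hlamdef.symm
  have hlb : lam ≤ ‖LinearMap.toContinuousLinearMap (Matrix.toEuclideanLin Mmat)‖ := by
    have h1 : ‖(Matrix.toEuclideanLin Mmat) (B (σ i1))‖ = lam := by
      rw [hTB (σ i1), norm_smul, hnormconst, mul_one, hnui1, Real.norm_eq_abs,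
        abs_of_nonneg hlam0]
    calc lam = ‖(Matrix.toEuclideanLin Mmat) (B (σ i1))‖ := h1.symm
      _ = ‖(LinearMap.toContinuousLinearMap (Matrix.toEuclideanLin Mmat)) (B (σ i1))‖ := by
          simp
      _ ≤ ‖LinearMap.toContinuousLinearMap (Matrix.toEuclideanLin Mmat)‖ * ‖B (σ i1)‖ :=
          ContinuousLinearMap.le_opNorm _ _
      _ = ‖LinearMap.toContinuousLinearMap (Matrix.toEuclideanLin Mmat)‖ := by
          rw [hnormconst, mul_one]
  have hfinal : ‖LinearMap.toContinuousLinearMap (Matrix.toEuclideanLin Mmat)‖ = lam := by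
    apply le_antisymm
    · apply ContinuousLinearMap.opNorm_le_bound _ hlam0
      intro x
      simpa using hub x
    · exact hlb
  refine ⟨?_, hmu_ge (σ i1), hmu1_lt⟩
  unfold l2OpNorm
  rw [hfinal, hlamdef]

theorem stmt13 (n : ℕ) (hn : 2 ≤ n)
    (Pmat : Matrix (Fin n) (Fin n) ℝ)
    (hPnonneg : ∀ i j, 0 ≤ Pmat i j)
    (hProw : Pmat.mulVec (fun _ => (1 : ℝ)) = fun _ => (1 : ℝ))
    (hPcol : Matrix.vecMul (fun _ => (1 : ℝ)) Pmat = fun _ => (1 : ℝ))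
    (hconn : (SimpleGraph.fromRel (fun i j : Fin n => 0 < Pmat i j + Pmat j i)).Connected) :
    1 - 2 / n ≤
        l2OpNorm ((1 - 1 / (n : ℝ)) • (1 : Matrix (Fin n) (Fin n) ℝ) +
            (2 * (n : ℝ))⁻¹ • (Pmat + Pmat.transpose) -
          (n : ℝ)⁻¹ • Matrix.of (fun _ _ : Fin n => (1 : ℝ))) ∧
      l2OpNorm ((1 - 1 / (n : ℝ)) • (1 : Matrix (Fin n) (Fin n) ℝ) +
            (2 * (n : ℝ))⁻¹ • (Pmat + Pmat.transpose) -
          (n : ℝ)⁻¹ • Matrix.of (fun _ _ : Fin n => (1 : ℝ))) < 1 ∧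
      ∀ (hS : ((2 : ℝ)⁻¹ • (Pmat + Pmat.transpose)).IsHermitian) (σ : Equiv.Perm (Fin n)),
        Antitone (fun i => hS.eigenvalues (σ i)) →
          l2OpNorm ((1 - 1 / (n : ℝ)) • (1 : Matrix (Fin n) (Fin n) ℝ) +
              (2 * (n : ℝ))⁻¹ • (Pmat + Pmat.transpose) -
            (n : ℝ)⁻¹ • Matrix.of (fun _ _ : Fin n => (1 : ℝ))) =
            1 - 1 / n +
              hS.eigenvalues (σ ⟨1, lt_of_lt_of_le one_lt_two hn⟩) / n := by
  have hS : ((2 : ℝ)⁻¹ • (Pmat + Pmat.transpose)).IsHermitian := by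
    unfold Matrix.IsHermitian
    ext i j
    simp only [Matrix.conjTranspose_apply, Matrix.smul_apply, Matrix.add_apply,
      Matrix.transpose_apply, smul_eq_mul, star_trivial]
    ring
  obtain ⟨σ, hσ⟩ : ∃ σ : Equiv.Perm (Fin n), Antitone (fun i => hS.eigenvalues (σ i)) := by
    refine ⟨(Fin.revPerm).trans (Tuple.sort hS.eigenvalues), ?_⟩
    have h1 : Antitone (Fin.rev : Fin n → Fin n) := fun a b hab => Fin.rev_le_rev.2 hab
    exact (Tuple.monotone_sort hS.eigenvalues).comp_antitone h1
  obtain ⟨heq, hge, hlt⟩ := main_lemma n hn Pmat hPnonneg hProw hPcol hconn hS σ hσ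
  have hnpos : (0:ℝ) < n := by
    have : 0 < n := by omega
    exact_mod_cast this
  refine ⟨?_, ?_, ?_⟩
  · rw [heq]
    have h3 : (-1:ℝ)/n ≤ hS.eigenvalues (σ ⟨1, lt_of_lt_of_le one_lt_two hn⟩)/n :=
      (div_le_div_iff_of_pos_right hnpos).2 hge
    have h4 : (-1:ℝ)/n = -(1/n) := by ring
    have hdiv2 : (2:ℝ)/n = 2*(1/n) := by ring
    linarith [h4 ▸ h3]
  · rw [heq]
    have h3 : hS.eigenvalues (σ ⟨1, lt_of_lt_of_le one_lt_two hn⟩)/n < 1/n :=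
      (div_lt_div_iff_of_pos_right hnpos).2 hlt
    linarith
  · intro hS' σ' hσ'
    exact (main_lemma n hn Pmat hPnonneg hProw hPcol hconn hS' σ' hσ').1
end

section
/- Let n ≥ 1, p ≥ 1, let Π ∈ ℝ^{n×n} be a nonnegative doubly stochastic matrix, and let ρ_π be the operator 2-norm of Π − (1/n)𝟙𝟙ᵀ. Then for any y_1, …, y_n ∈ ℝ^p with average ȳ := (1/n)∑_{i=1}^n y_i, one has (1/n)∑_{i=1}^n ∑_{j=1}^n π_{ij} ‖y_i + y_j‖² ≤ (2/n)(1 + ρ_π) ∑_{i=1}^n ‖y_i − ȳ‖² + 4‖ȳ‖². -/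
open Matrix
open RealInnerProductSpace

theorem stmt16 (n p : ℕ) (hn : 1 ≤ n) (hp : 1 ≤ p)
    (Pmat : Matrix (Fin n) (Fin n) ℝ)
    (hPnonneg : ∀ i j, 0 ≤ Pmat i j)
    (hProw : Pmat.mulVec (fun _ => (1 : ℝ)) = fun _ => (1 : ℝ))
    (hPcol : Matrix.vecMul (fun _ => (1 : ℝ)) Pmat = fun _ => (1 : ℝ))
    (y : Fin n → EuclideanSpace ℝ (Fin p)) :
    (n : ℝ)⁻¹ * ∑ i, ∑ j, Pmat i j * ‖y i + y j‖ ^ 2 ≤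
      2 / n *
          (1 + l2OpNorm (Pmat - (n : ℝ)⁻¹ • Matrix.of (fun _ _ : Fin n => (1 : ℝ)))) *
          (∑ i, ‖y i - (n : ℝ)⁻¹ • ∑ l, y l‖ ^ 2) +
        4 * ‖(n : ℝ)⁻¹ • ∑ l, y l‖ ^ 2 := by
  have hn0 : (n : ℝ) ≠ 0 := Nat.cast_ne_zero.mpr (by omega)
  set M : Matrix (Fin n) (Fin n) ℝ :=
    Pmat - (n : ℝ)⁻¹ • Matrix.of (fun _ _ : Fin n => (1 : ℝ)) with hM
  set ρ : ℝ := l2OpNorm M with hρ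
  set yb : EuclideanSpace ℝ (Fin p) := (n : ℝ)⁻¹ • ∑ l, y l with hyb
  set z : Fin n → EuclideanSpace ℝ (Fin p) := fun i => y i - yb with hzdef
  have hrow : ∀ i, ∑ j, Pmat i j = 1 := by
    intro i
    have := congrFun hProw i
    simpa [Matrix.mulVec, dotProduct] using this
  have hcol : ∀ j, ∑ i, Pmat i j = 1 := by
    intro j
    have := congrFun hPcol j
    simpa [Matrix.vecMul, dotProduct] using this
  have hzsum : ∑ i, z i = 0 := by
    have h : ∑ i, z i = (∑ i, y i) - (n : ℝ) • yb := by
      simp [hzdef, Finset.sum_sub_distrib, Finset.card_univ, ← Nat.cast_smul_eq_nsmul ℝ]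
    rw [h, hyb, smul_smul, mul_inv_cancel₀ hn0, one_smul, sub_self]
  have husum : ∀ k, ∑ i, z i k = 0 := by
    intro k
    have h : (∑ i, z i) k = (0 : EuclideanSpace ℝ (Fin p)) k := by rw [hzsum]
    rw [show (∑ i, z i) k = ∑ i, z i k by rw [WithLp.ofLp_sum, Finset.sum_apply]] at h
    simpa using h
  set A : ℝ := ∑ i, ⟪z i, z i⟫ with hA
  set S : ℝ := ∑ i, ∑ j, Pmat i j * ⟪z i, z j⟫ with hS
  have expand : ∀ i j, ‖y i + y j‖ ^ 2 =
      ⟪z i, z i⟫ + ⟪z j, z j⟫ + 2 * ⟪z i, z j⟫ + 4 * ⟪z i, yb⟫ + 4 * ⟪z j, yb⟫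
        + 4 * ⟪yb, yb⟫ := by
    intro i j
    have hyi : y i = z i + yb := by simp [hzdef]
    have hyj : y j = z j + yb := by simp [hzdef]
    rw [← real_inner_self_eq_norm_sq, hyi, hyj]
    simp only [inner_add_left, inner_add_right]
    rw [real_inner_comm (z j) (z i), real_inner_comm yb (z i), real_inner_comm yb (z j)]
    ring
  have hcross : ∑ i, ⟪z i, yb⟫ = 0 := by
    rw [← sum_inner, hzsum, inner_zero_left]
  -- the key algebraic identity
  have key : ∑ i, ∑ j, Pmat i j * ‖y i + y j‖ ^ 2
      = 2 * A + 2 * S + 4 * (n : ℝ) * ⟪yb, yb⟫ := by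
    have h1 : ∑ i, ∑ j, Pmat i j * ‖y i + y j‖ ^ 2
        = ∑ i, ∑ j, (Pmat i j * ⟪z i, z i⟫ + Pmat i j * ⟪z j, z j⟫
          + Pmat i j * (2 * ⟪z i, z j⟫) + Pmat i j * (4 * ⟪z i, yb⟫)
          + Pmat i j * (4 * ⟪z j, yb⟫) + Pmat i j * (4 * ⟪yb, yb⟫)) := by
      refine Finset.sum_congr rfl fun i _ => Finset.sum_congr rfl fun j _ => ?_
      rw [expand i j]; ring
    have Ta : ∑ i, ∑ j, Pmat i j * ⟪z i, z i⟫ = A := by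
      refine Finset.sum_congr rfl fun i _ => ?_
      rw [← Finset.sum_mul, hrow i, one_mul]
    have Tb : ∑ i, ∑ j, Pmat i j * ⟪z j, z j⟫ = A := by
      rw [Finset.sum_comm]
      refine Finset.sum_congr rfl fun j _ => ?_
      rw [← Finset.sum_mul, hcol j, one_mul]
    have Tc : ∑ i, ∑ j, Pmat i j * (2 * ⟪z i, z j⟫) = 2 * S := by
      rw [hS, Finset.mul_sum]
      refine Finset.sum_congr rfl fun i _ => ?_
      rw [Finset.mul_sum]
      exact Finset.sum_congr rfl fun j _ => by ring
    have Td : ∑ i, ∑ j, Pmat i j * (4 * ⟪z i, yb⟫) = 0 := by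
      have : ∀ i, ∑ j, Pmat i j * (4 * ⟪z i, yb⟫) = 4 * ⟪z i, yb⟫ := fun i => by
        rw [← Finset.sum_mul, hrow i, one_mul]
      rw [Finset.sum_congr rfl fun i _ => this i, ← Finset.mul_sum, hcross, mul_zero]
    have Te : ∑ i, ∑ j, Pmat i j * (4 * ⟪z j, yb⟫) = 0 := by
      rw [Finset.sum_comm]
      have : ∀ j, ∑ i, Pmat i j * (4 * ⟪z j, yb⟫) = 4 * ⟪z j, yb⟫ := fun j => by
        rw [← Finset.sum_mul, hcol j, one_mul]
      rw [Finset.sum_congr rfl fun j _ => this j, ← Finset.mul_sum, hcross, mul_zero]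
    have Tf : ∑ i : Fin n, ∑ j, Pmat i j * (4 * ⟪yb, yb⟫) = 4 * (n : ℝ) * ⟪yb, yb⟫ := by
      have : ∀ i, ∑ j, Pmat i j * (4 * ⟪yb, yb⟫) = 4 * ⟪yb, yb⟫ := fun i => by
        rw [← Finset.sum_mul, hrow i, one_mul]
      rw [Finset.sum_congr rfl fun i _ => this i, Finset.sum_const, Finset.card_univ,
        Fintype.card_fin, nsmul_eq_mul]
      ring
    rw [h1]
    simp only [Finset.sum_add_distrib]
    rw [Ta, Tb, Tc, Td, Te, Tf]
    ring
  -- inner products as coordinate sums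
  have hinnerzz : ∀ i j, ⟪z i, z j⟫ = ∑ k, z i k * z j k := by
    intro i j
    simp [PiLp.inner_apply, RCLike.inner_apply, conj_trivial]
    exact Finset.sum_congr rfl fun k _ => mul_comm _ _
  -- quadratic form bound for a mean-zero vector
  have keyS : ∀ v : EuclideanSpace ℝ (Fin n), (∑ i, v i = 0) →
      ∑ i, ∑ j, Pmat i j * (v i * v j) ≤ ρ * ∑ i, v i ^ 2 := by
    intro v hv
    set w : EuclideanSpace ℝ (Fin n) := Matrix.toEuclideanLin M v with hw
    have hw_apply : ∀ i, w i = ∑ j, Pmat i j * v j := by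
      intro i
      have : w i = M.mulVec v i := rfl
      rw [this, hM]
      simp [Matrix.sub_mulVec, Matrix.smul_mulVec, Matrix.mulVec, dotProduct, hv]
      simp [sub_mul, Finset.sum_sub_distrib, ← Finset.mul_sum, hv]
    have h1 : ∑ i, ∑ j, Pmat i j * (v i * v j) = ⟪v, w⟫ := by
      rw [show ⟪v, w⟫ = ∑ i, v i * w i by
        simp [PiLp.inner_apply, RCLike.inner_apply, conj_trivial]
        exact Finset.sum_congr rfl fun i _ => mul_comm _ _]
      refine Finset.sum_congr rfl fun i _ => ?_
      rw [hw_apply i, Finset.mul_sum]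
      exact Finset.sum_congr rfl fun j _ => by ring
    have h3 : ‖w‖ ≤ ρ * ‖v‖ := by
      have h := (LinearMap.toContinuousLinearMap (Matrix.toEuclideanLin M)).le_opNorm v
      exact h
    have h4 : ∑ i, v i ^ 2 = ‖v‖ ^ 2 := by
      rw [← real_inner_self_eq_norm_sq]
      simp only [PiLp.inner_apply, RCLike.inner_apply, conj_trivial, pow_two]
    calc ∑ i, ∑ j, Pmat i j * (v i * v j) = ⟪v, w⟫ := h1
      _ ≤ ‖v‖ * ‖w‖ := real_inner_le_norm v w
      _ ≤ ‖v‖ * (ρ * ‖v‖) := by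
          exact mul_le_mul_of_nonneg_left h3 (norm_nonneg v)
      _ = ρ * ‖v‖ ^ 2 := by ring
      _ = ρ * ∑ i, v i ^ 2 := by rw [h4]
  have hSbound : S ≤ ρ * A := by
    have h1 : S = ∑ k, ∑ i, ∑ j, Pmat i j * (z i k * z j k) := by
      calc S = ∑ i, ∑ k : Fin p, ∑ j, Pmat i j * (z i k * z j k) := by
            rw [hS]
            simp only [hinnerzz, Finset.mul_sum]
            exact Finset.sum_congr rfl fun i _ => Finset.sum_comm
        _ = ∑ k : Fin p, ∑ i, ∑ j, Pmat i j * (z i k * z j k) := Finset.sum_comm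
    have h2 : ∀ k : Fin p, ∑ i, ∑ j, Pmat i j * (z i k * z j k) ≤ ρ * ∑ i, (z i k) ^ 2 := by
      intro k
      exact keyS (WithLp.toLp 2 (fun i => z i k)) (husum k)
    have h3 : ∑ k : Fin p, ρ * ∑ i, (z i k) ^ 2 = ρ * A := by
      rw [← Finset.mul_sum, hA]
      congr 1
      rw [Finset.sum_comm]
      refine Finset.sum_congr rfl fun i _ => ?_
      rw [hinnerzz i i]
      exact Finset.sum_congr rfl fun k _ => pow_two _
    calc S = ∑ k, ∑ i, ∑ j, Pmat i j * (z i k * z j k) := h1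
      _ ≤ ∑ k : Fin p, ρ * ∑ i, (z i k) ^ 2 := Finset.sum_le_sum fun k _ => h2 k
      _ = ρ * A := h3
  have hρ0 : 0 ≤ ρ := norm_nonneg _
  have hA' : ∑ i, ‖y i - yb‖ ^ 2 = A := by
    refine Finset.sum_congr rfl fun i _ => ?_
    exact (real_inner_self_eq_norm_sq (z i)).symm
  have hYb : ‖yb‖ ^ 2 = ⟪yb, yb⟫ := (real_inner_self_eq_norm_sq yb).symm
  rw [key, hA', hYb]
  have heq : (n : ℝ)⁻¹ * (2 * A + 2 * S + 4 * (n : ℝ) * ⟪yb, yb⟫)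
      = 2 / n * A + 2 / n * S + 4 * ⟪yb, yb⟫ := by
    field_simp
  rw [heq]
  have hmul : 2 / (n : ℝ) * S ≤ 2 / n * (ρ * A) :=
    mul_le_mul_of_nonneg_left hSbound (by positivity)
  nlinarith [hmul]
end
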